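/- arXiv:2108.01325 — 13 statements merged into one kernel-verified Lean document; each statement's English description precedes it below -/
import Mathlib

section
/- Let G be an r-regular finite simple graph (r ≥ 1) with n vertices and m edges, with incidence matrix R and signless Laplacian Q_G = R·Rᵀ, and let M be the signless Laplacian matrix of the Q-graph Q(G), i.e. the block matrix M = [[r·I_V, R],[Rᵀ, (2r−2)·I_E + RᵀR]] indexed by V ⊕ E. Then for every real number t one has (t+2−2r)^n · det(t·I_{V⊕E} − M) = (t+2−2r)^m · det((t+2−2r)(t−r)·I_V + (r−t−1)·Q_G). -/
open Matrix Polynomial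

/-- The vertex-edge incidence matrix of a simple graph. -/
noncomputable def incMat {V : Type*} [Fintype V] [DecidableEq V] (G : SimpleGraph V) :
    Matrix V G.edgeSet ℝ :=
  Matrix.of fun v e => if v ∈ (e : Sym2 V) then 1 else 0

/-- The signless Laplacian of the Q-graph of an r-regular graph, as a block matrix. -/
noncomputable def QQ {V : Type*} [Fintype V] [DecidableEq V] (G : SimpleGraph V) (r : ℕ) :
    Matrix (V ⊕ G.edgeSet) (V ⊕ G.edgeSet) ℝ :=
  Matrix.fromBlocks ((r : ℝ) • 1) (incMat G) (incMat G)ᵀ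
    ((2 * (r : ℝ) - 2) • 1 + (incMat G)ᵀ * incMat G)

section Aux

variable {V E : Type*} [Fintype V] [Fintype E] [DecidableEq V] [DecidableEq E]

private lemma aux_blockA {R : Type*} [CommRing R] (B : Matrix V E R) (p s : R) :
    (fromBlocks (p • 1) (-B) (-Bᵀ) (s • (1 : Matrix E E R) - Bᵀ * B)) *
      (fromBlocks (s • 1 - B * Bᵀ) 0 Bᵀ 1)
    = fromBlocks ((s * p) • 1 - (p + 1) • (B * Bᵀ)) (-B) 0 (s • 1 - Bᵀ * B) := by
  rw [fromBlocks_multiply]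
  have h11 : p • (1 : Matrix V V R) * (s • 1 - B * Bᵀ) + -B * Bᵀ
      = (s * p) • 1 - (p + 1) • (B * Bᵀ) := by
    simp only [Matrix.smul_mul, Matrix.one_mul, Matrix.mul_sub, Matrix.mul_smul,
      Matrix.neg_mul, smul_smul, smul_sub, add_smul, one_smul]
    module
  have h21 : -Bᵀ * (s • 1 - B * Bᵀ) + (s • (1 : Matrix E E R) - Bᵀ * B) * Bᵀ
      = (0 : Matrix E V R) := by
    simp only [Matrix.smul_mul, Matrix.one_mul, Matrix.mul_one, Matrix.mul_sub,
      Matrix.sub_mul, Matrix.mul_smul, Matrix.neg_mul, Matrix.mul_assoc]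
    module
  rw [h11, h21]
  simp

private lemma aux_swap {R : Type*} [CommRing R] (B : Matrix V E R) (s : R) :
    s ^ (Fintype.card V) * (s • (1 : Matrix E E R) - Bᵀ * B).det
      = s ^ (Fintype.card E) * (s • (1 : Matrix V V R) - B * Bᵀ).det := by
  have h1 : (fromBlocks (s • 1) B Bᵀ (1 : Matrix E E R)) * (fromBlocks 1 0 (-Bᵀ) 1)
      = fromBlocks (s • 1 - B * Bᵀ) B 0 1 := by
    rw [fromBlocks_multiply]
    simp [Matrix.mul_neg, sub_eq_add_neg]
  have h2 : (fromBlocks (s • 1) B Bᵀ (1 : Matrix E E R)) * (fromBlocks 1 (-B) 0 (s • 1))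
      = fromBlocks (s • 1) 0 Bᵀ (s • 1 - Bᵀ * B) := by
    rw [fromBlocks_multiply]
    simp [Matrix.smul_mul, Matrix.mul_smul, Matrix.mul_neg, sub_eq_add_neg, add_comm]
  have d1 := congrArg Matrix.det h1
  have d2 := congrArg Matrix.det h2
  rw [det_mul, det_fromBlocks_zero₁₂, det_fromBlocks_zero₂₁] at d1 d2
  simp only [det_one, mul_one, one_mul, det_smul, det_one] at d1 d2
  rw [d1] at d2
  linear_combination -d2

private lemma aux_char (A : Matrix V V ℝ) (c : ℝ) :
    (X + C c) • (1 : Matrix V V ℝ[X]) - A.map C = charmatrix (A - c • 1) := by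
  ext i j
  by_cases h : i = j
  · subst h
    simp [charmatrix_apply_eq, Matrix.smul_apply, Matrix.one_apply, Matrix.map_apply,
      Matrix.sub_apply, smul_eq_mul]
    ring
  · simp [charmatrix_apply_ne _ _ _ h, Matrix.smul_apply, Matrix.one_apply_ne h,
      Matrix.map_apply, Matrix.sub_apply, smul_eq_mul, h]

private lemma poly_key (A : Matrix V E ℝ) (a c : ℝ) :
    (X + C c) ^ (Fintype.card V) *
      (fromBlocks ((X - C a) • 1) (-(A.map C)) (-(A.map C)ᵀ)
        ((X + C c) • 1 - (A.map C)ᵀ * (A.map C))).det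
    = (X + C c) ^ (Fintype.card E) *
      ((((X + C c) * (X - C a)) • (1 : Matrix V V ℝ[X]))
        - ((X - C a) + 1) • (A.map C * (A.map C)ᵀ)).det := by
  set B : Matrix V E ℝ[X] := A.map C with hB
  set s : ℝ[X] := X + C c with hsdef
  set p : ℝ[X] := X - C a with hpdef
  have hA := aux_blockA B p s
  have hd := congrArg Matrix.det hA
  rw [det_mul, det_fromBlocks_zero₁₂, det_fromBlocks_zero₂₁, det_one, mul_one] at hd
  have hs := aux_swap B s
  have hBB : B * Bᵀ = (A * Aᵀ).map C := by
    rw [hB, ← Matrix.transpose_map, Matrix.map_mul]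
  have hne : (s • (1 : Matrix V V ℝ[X]) - B * Bᵀ).det ≠ 0 := by
    rw [hBB, hsdef, aux_char (A * Aᵀ) c, ← Matrix.charpoly]
    exact (Matrix.charpoly_monic _).ne_zero
  apply mul_right_cancel₀ hne
  linear_combination s ^ (Fintype.card V) * hd
    + ((s * p) • (1 : Matrix V V ℝ[X]) - (p + 1) • (B * Bᵀ)).det * hs

end Aux

theorem stmt0 {V : Type*} [Fintype V] [DecidableEq V] (G : SimpleGraph V)
    [DecidableRel G.Adj] (r : ℕ) (hr : 1 ≤ r) (hreg : G.IsRegularOfDegree r)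
    (t : ℝ) :
    (t + 2 - 2 * (r:ℝ)) ^ (Fintype.card V) * Matrix.det (t • (1 : Matrix (V ⊕ G.edgeSet) (V ⊕ G.edgeSet) ℝ) - QQ G r)
      = (t + 2 - 2 * (r:ℝ)) ^ (Fintype.card G.edgeSet) *
        Matrix.det (((t + 2 - 2 * (r:ℝ)) * (t - (r:ℝ))) • (1 : Matrix V V ℝ) + ((r:ℝ) - t - 1) • (incMat G * (incMat G)ᵀ)) := by
  classical
  set Rm : Matrix V G.edgeSet ℝ := incMat G with hRm
  have key := poly_key Rm (r : ℝ) (2 - 2 * (r : ℝ))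
  have hkey := congrArg (evalRingHom t) key
  rw [_root_.map_mul, _root_.map_mul, map_pow, map_pow, RingHom.map_det, RingHom.map_det] at hkey
  simp only [RingHom.mapMatrix_apply] at hkey
  have hM1 : (fromBlocks ((X - C (r:ℝ)) • 1) (-(Rm.map C)) (-(Rm.map C)ᵀ)
        ((X + C (2 - 2 * (r:ℝ))) • 1 - (Rm.map C)ᵀ * (Rm.map C))).map (evalRingHom t)
      = t • (1 : Matrix (V ⊕ G.edgeSet) (V ⊕ G.edgeSet) ℝ) - QQ G r := by
    ext i j
    rcases i with i | i <;> rcases j with j | j <;>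
      simp [QQ, Matrix.fromBlocks, Matrix.map_apply, Matrix.smul_apply, Matrix.one_apply,
        Matrix.sub_apply, Matrix.add_apply, Matrix.neg_apply, Matrix.mul_apply,
        Matrix.transpose_apply, eval_finset_sum, apply_ite (eval t), smul_eq_mul, hRm] <;>
      split <;> ring
  have hM2 : ((((X + C (2 - 2 * (r:ℝ))) * (X - C (r:ℝ))) • (1 : Matrix V V ℝ[X]))
        - ((X - C (r:ℝ)) + 1) • (Rm.map C * (Rm.map C)ᵀ)).map (evalRingHom t)
      = ((t + 2 - 2 * (r:ℝ)) * (t - (r:ℝ))) • (1 : Matrix V V ℝ)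
        + ((r:ℝ) - t - 1) • (Rm * Rmᵀ) := by
    ext i j
    simp [Matrix.map_apply, Matrix.smul_apply, Matrix.one_apply, Matrix.sub_apply,
      Matrix.add_apply, Matrix.mul_apply, Matrix.transpose_apply, eval_finset_sum,
      apply_ite (eval t), smul_eq_mul]
    split <;> ring
  rw [hM1, hM2] at hkey
  have hsv : (evalRingHom t) (X + C (2 - 2 * (r:ℝ))) = t + 2 - 2 * (r:ℝ) := by
    simp [coe_evalRingHom]
    ring
  rw [hsv] at hkey
  exact hkey
end

section
/- Let G be an r-regular finite simple graph with r ≥ 2, n vertices and m edges (so m ≥ n), and let λ_1, …, λ_n be the eigenvalues of its signless Laplacian Q_G listed with multiplicity. Then the characteristic polynomial of the signless Laplacian M of the Q-graph Q(G) satisfies det(t·I_{V⊕E} − M) = (t+2−2r)^{m−n} · ∏_{k=1}^{n} ((t+2−2r)(t−r) + (r−t−1)·λ_k) for all real t. -/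
open Matrix

/-- Evaluating the characteristic polynomial gives `det (x • 1 - M)`. -/
lemma eval_charpoly_aux {n : Type*} [Fintype n] [DecidableEq n] (M : Matrix n n ℝ) (x : ℝ) :
    (M.charpoly).eval x = (x • (1 : Matrix n n ℝ) - M).det := by
  rw [Matrix.charpoly, ← Polynomial.coe_evalRingHom, RingHom.map_det]
  congr 1
  ext i j
  by_cases h : i = j <;>
    simp [Matrix.charmatrix_apply, Matrix.one_apply, h, Matrix.diagonal_apply]

/-- Key determinant identity for generic `x`. -/
lemma key_det {V : Type*} [Fintype V] [DecidableEq V] (G : SimpleGraph V)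
    [DecidableRel G.Adj] (r : ℕ)
    (lam : Fin (Fintype.card V) → ℝ)
    (hlam : ∀ s : ℝ,
      (s • (1 : Matrix V V ℝ) - incMat G * (incMat G)ᵀ).det = ∏ k, (s - lam k))
    (hnm : Fintype.card V ≤ Fintype.card G.edgeSet)
    (x : ℝ) (hx1 : x - (r : ℝ) ≠ 0) (hx2 : x - (r : ℝ) + 1 ≠ 0)
    (hx3 : x + 2 - 2 * (r : ℝ) ≠ 0) :
    (x • (1 : Matrix (V ⊕ G.edgeSet) (V ⊕ G.edgeSet) ℝ) - QQ G r).det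
      = (x + 2 - 2 * (r : ℝ)) ^ (Fintype.card G.edgeSet - Fintype.card V) *
        ∏ k, ((x + 2 - 2 * (r : ℝ)) * (x - (r : ℝ)) + ((r : ℝ) - x - 1) * lam k) := by
  set a := x - (r : ℝ) with ha_def
  set b := x + 2 - 2 * (r : ℝ) with hb_def
  set c : ℝ := 1 + a⁻¹ with hc_def
  set d : ℝ := a + 1 with hd_def
  have hac : a * c = d := by
    rw [hc_def, hd_def, mul_add, mul_one, mul_inv_cancel₀ hx1]
  have hc0 : c ≠ 0 := by
    intro h
    rw [h, mul_zero] at hac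
    exact hx2 hac.symm
  set s : ℝ := b / c with hs_def
  have hcs : c * s = b := by
    rw [hs_def, mul_div_cancel₀ _ hc0]
  have hs0 : s ≠ 0 := by
    rw [hs_def]
    exact div_ne_zero hx3 hc0
  have hds : d * s = a * b := by
    rw [← hac, mul_assoc, hcs]
  -- block decomposition
  have e1 : x • (1 : Matrix V V ℝ) + -((r : ℝ) • 1) = a • 1 := by
    rw [← sub_eq_add_neg, ← sub_smul]
  have e4 : x • (1 : Matrix G.edgeSet G.edgeSet ℝ)
        + -((2 * (r : ℝ) - 2) • 1 + (incMat G)ᵀ * incMat G)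
      = b • 1 - (incMat G)ᵀ * incMat G := by
    rw [neg_add, ← add_assoc, ← sub_eq_add_neg, ← sub_eq_add_neg, ← sub_smul,
      show x - (2 * (r : ℝ) - 2) = b from by rw [hb_def]; ring]
  have hblock : x • (1 : Matrix (V ⊕ G.edgeSet) (V ⊕ G.edgeSet) ℝ) - QQ G r
      = Matrix.fromBlocks (a • 1) (-(incMat G)) (-(incMat G)ᵀ)
          (b • 1 - (incMat G)ᵀ * incMat G) := by
    rw [QQ, ← Matrix.fromBlocks_one, Matrix.fromBlocks_smul, sub_eq_add_neg,
      Matrix.fromBlocks_neg, Matrix.fromBlocks_add, e1, e4]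
    simp only [smul_zero, zero_add]
  -- invertibility of the top-left block
  haveI : Invertible (a • (1 : Matrix V V ℝ)) :=
    ⟨a⁻¹ • 1,
      by rw [Matrix.smul_mul, Matrix.one_mul, smul_smul, inv_mul_cancel₀ hx1, one_smul],
      by rw [Matrix.smul_mul, Matrix.one_mul, smul_smul, mul_inv_cancel₀ hx1, one_smul]⟩
  have hiv : ⅟(a • (1 : Matrix V V ℝ)) = a⁻¹ • 1 :=
    invOf_eq_right_inv
      (by rw [Matrix.smul_mul, Matrix.one_mul, smul_smul, mul_inv_cancel₀ hx1, one_smul])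
  rw [hblock, Matrix.det_fromBlocks₁₁, hiv]
  -- simplify the Schur complement
  have h1 : (-(incMat G)ᵀ) * (a⁻¹ • (1 : Matrix V V ℝ)) * (-(incMat G))
      = a⁻¹ • ((incMat G)ᵀ * incMat G) := by
    rw [Matrix.mul_smul, Matrix.mul_one, Matrix.smul_mul, Matrix.neg_mul, Matrix.mul_neg,
      neg_neg]
  have h2 : b • (1 : Matrix G.edgeSet G.edgeSet ℝ) - (incMat G)ᵀ * incMat G
        - a⁻¹ • ((incMat G)ᵀ * incMat G)
      = c • (s • 1 - (incMat G)ᵀ * incMat G) := by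
    rw [smul_sub, smul_smul, hcs, sub_sub]
    congr 1
    rw [hc_def, add_smul, one_smul]
  rw [h1, h2]
  set K : ℝ := ((1 : Matrix V V ℝ) - (s⁻¹ • incMat G) * (incMat G)ᵀ).det with hK_def
  have hm1 : (s • (1 : Matrix G.edgeSet G.edgeSet ℝ) - (incMat G)ᵀ * incMat G).det
      = s ^ Fintype.card G.edgeSet * K := by
    have he : s • (1 : Matrix G.edgeSet G.edgeSet ℝ) - (incMat G)ᵀ * incMat G
        = s • ((1 : Matrix G.edgeSet G.edgeSet ℝ) - (incMat G)ᵀ * (s⁻¹ • incMat G)) := by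
      rw [Matrix.mul_smul, smul_sub, smul_smul, mul_inv_cancel₀ hs0, one_smul]
    rw [he, Matrix.det_smul, Matrix.det_one_sub_mul_comm, hK_def]
  have hm2 : (s • (1 : Matrix V V ℝ) - incMat G * (incMat G)ᵀ).det
      = s ^ Fintype.card V * K := by
    have he : s • (1 : Matrix V V ℝ) - incMat G * (incMat G)ᵀ
        = s • ((1 : Matrix V V ℝ) - (s⁻¹ • incMat G) * (incMat G)ᵀ) := by
      rw [Matrix.smul_mul, smul_sub, smul_smul, mul_inv_cancel₀ hs0, one_smul]
    rw [he, Matrix.det_smul, hK_def]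
  have hprod : ∏ k, (s - lam k) = s ^ Fintype.card V * K := by rw [← hlam s, hm2]
  rw [Matrix.det_smul, Matrix.det_smul, Matrix.det_one, mul_one, hm1]
  -- now, pure scalar algebra
  have hterm : ∀ k, b * a + ((r : ℝ) - x - 1) * lam k = d * (s - lam k) := by
    intro k
    linear_combination -hds + lam k * hd_def + lam k * ha_def
  have h3 : ∏ k, (b * a + ((r : ℝ) - x - 1) * lam k) = ∏ k, (d * (s - lam k)) :=
    Finset.prod_congr rfl fun k _ => hterm k
  have h4 : ∏ k, (d * (s - lam k)) = d ^ Fintype.card V * ∏ k, (s - lam k) := by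
    rw [Finset.prod_mul_distrib, Finset.prod_const, Finset.card_univ, Fintype.card_fin]
  have hb' : b ^ Fintype.card G.edgeSet
      = b ^ (Fintype.card G.edgeSet - Fintype.card V) * b ^ Fintype.card V := by
    rw [← pow_add, Nat.sub_add_cancel hnm]
  have h5 : c ^ Fintype.card G.edgeSet * s ^ Fintype.card G.edgeSet
      = b ^ (Fintype.card G.edgeSet - Fintype.card V)
        * (c ^ Fintype.card V * s ^ Fintype.card V) := by
    rw [← mul_pow, ← mul_pow, hcs, hb']
  have h6 : a ^ Fintype.card V * c ^ Fintype.card V = d ^ Fintype.card V := by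
    rw [← mul_pow, hac]
  rw [h3, h4, hprod]
  linear_combination (a ^ Fintype.card V * K) * h5
    + (b ^ (Fintype.card G.edgeSet - Fintype.card V) * s ^ Fintype.card V * K) * h6

theorem stmt1 {V : Type*} [Fintype V] [DecidableEq V] (G : SimpleGraph V)
    [DecidableRel G.Adj] (r : ℕ) (hr : 2 ≤ r) (hreg : G.IsRegularOfDegree r)
    (lam : Fin (Fintype.card V) → ℝ)
    (hlam : ∀ s : ℝ,
      (s • (1 : Matrix V V ℝ) - incMat G * (incMat G)ᵀ).det = ∏ k, (s - lam k))
    (t : ℝ) :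
    (t • (1 : Matrix (V ⊕ G.edgeSet) (V ⊕ G.edgeSet) ℝ) - QQ G r).det
      = (t + 2 - 2 * (r : ℝ)) ^ (Fintype.card G.edgeSet - Fintype.card V) *
        ∏ k, ((t + 2 - 2 * (r : ℝ)) * (t - (r : ℝ)) + ((r : ℝ) - t - 1) * lam k) := by
  classical
  -- m ≥ n
  have hnm : Fintype.card V ≤ Fintype.card G.edgeSet := by
    have h2 := G.sum_degrees_eq_twice_card_edges
    rw [Finset.sum_congr rfl fun v _ => hreg v, Finset.sum_const, Finset.card_univ,
      smul_eq_mul] at h2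
    have hcard : G.edgeFinset.card = Fintype.card G.edgeSet := Set.toFinset_card _
    rw [hcard] at h2
    have h3 : 2 * Fintype.card V ≤ 2 * Fintype.card G.edgeSet := by
      calc 2 * Fintype.card V = Fintype.card V * 2 := by ring
        _ ≤ Fintype.card V * r := Nat.mul_le_mul_left _ hr
        _ = 2 * Fintype.card G.edgeSet := h2
    omega
  -- polynomial argument
  set q : Polynomial ℝ :=
    (Polynomial.X + Polynomial.C (2 - 2 * (r : ℝ)))
        ^ (Fintype.card G.edgeSet - Fintype.card V) *
      ∏ k, ((Polynomial.X + Polynomial.C (2 - 2 * (r : ℝ))) *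
          (Polynomial.X - Polynomial.C (r : ℝ)) +
        (Polynomial.C (r : ℝ) - Polynomial.X - 1) * Polynomial.C (lam k)) with hq_def
  have hq_eval : ∀ x : ℝ, q.eval x
      = (x + 2 - 2 * (r : ℝ)) ^ (Fintype.card G.edgeSet - Fintype.card V) *
        ∏ k, ((x + 2 - 2 * (r : ℝ)) * (x - (r : ℝ)) + ((r : ℝ) - x - 1) * lam k) := by
    intro x
    rw [hq_def]
    simp only [Polynomial.eval_mul, Polynomial.eval_pow, Polynomial.eval_add,
      Polynomial.eval_sub, Polynomial.eval_X, Polynomial.eval_C, Polynomial.eval_prod,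
      Polynomial.eval_one]
    congr 1
    · congr 1; ring
    · exact Finset.prod_congr rfl fun k _ => by ring
  have hpq : (QQ G r).charpoly = q := by
    apply Polynomial.eq_of_infinite_eval_eq
    apply Set.Infinite.mono (s := ({(r : ℝ), (r : ℝ) - 1, 2 * (r : ℝ) - 2} : Set ℝ)ᶜ)
    · intro x hx
      simp only [Set.mem_compl_iff, Set.mem_insert_iff, Set.mem_singleton_iff, not_or] at hx
      obtain ⟨hx1, hx2, hx3⟩ := hx
      show ((QQ G r).charpoly).eval x = q.eval x
      rw [eval_charpoly_aux, hq_eval]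
      exact key_det G r lam hlam hnm x (sub_ne_zero_of_ne hx1)
        (fun h => hx2 (by linarith)) (fun h => hx3 (by linarith))
    · exact Set.Finite.infinite_compl (Set.toFinite _)
  have hfin := congrArg (Polynomial.eval t) hpq
  rw [eval_charpoly_aux, hq_eval] at hfin
  exact hfin
end

section
/- Let G be an r-regular finite simple graph with incidence matrix R and signless Laplacian Q_G = R·Rᵀ, let x ∈ ℝ^V satisfy Q_G·x = q·x for some real q, and let μ ∈ ℝ be a root of (t+2−2r)(t−r) + (r−t−1)·q = 0. Then the vector X ∈ ℝ^{V⊕E} whose V-component is (μ+2−2r−q)·x and whose E-component is Rᵀ·x satisfies M·X = μ·X, where M is the signless Laplacian of the Q-graph Q(G). -/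
open Matrix

theorem stmt2 {V : Type*} [Fintype V] [DecidableEq V] (G : SimpleGraph V)
    [DecidableRel G.Adj] (r : ℕ) (hreg : G.IsRegularOfDegree r)
    (q μ : ℝ) (x : V → ℝ)
    (hx : (incMat G * (incMat G)ᵀ) *ᵥ x = q • x)
    (hμ : (μ + 2 - 2 * (r : ℝ)) * (μ - (r : ℝ)) + ((r : ℝ) - μ - 1) * q = 0) :
    QQ G r *ᵥ Sum.elim ((μ + 2 - 2 * (r : ℝ) - q) • x) ((incMat G)ᵀ *ᵥ x)
      = μ • Sum.elim ((μ + 2 - 2 * (r : ℝ) - q) • x) ((incMat G)ᵀ *ᵥ x) := by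
  set R := incMat G with hR
  set c : ℝ := μ + 2 - 2 * (r : ℝ) - q with hc
  have h1 : R *ᵥ (Rᵀ *ᵥ x) = q • x := by rw [mulVec_mulVec, hx]
  have hscal : (r : ℝ) * c + q = μ * c := by
    rw [hc]; linear_combination -hμ
  have hscal2 : c + (2 * (r : ℝ) - 2) + q = μ := by rw [hc]; ring
  rw [QQ, fromBlocks_mulVec]
  simp only [Sum.elim_comp_inl, Sum.elim_comp_inr, ← hR]
  have hsmul : μ • Sum.elim (c • x) (Rᵀ *ᵥ x) = Sum.elim (μ • c • x) (μ • Rᵀ *ᵥ x) := by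
    ext (v | e) <;> simp
  rw [hsmul]
  have htop : ((r : ℝ) • 1) *ᵥ (c • x) + R *ᵥ (Rᵀ *ᵥ x) = μ • c • x := by
    rw [smul_mulVec, one_mulVec, h1, smul_smul, smul_smul, ← hscal, add_smul]
  have hbot : Rᵀ *ᵥ (c • x) + ((2 * (r : ℝ) - 2) • 1 + Rᵀ * R) *ᵥ (Rᵀ *ᵥ x)
      = μ • (Rᵀ *ᵥ x) := by
    rw [add_mulVec, smul_mulVec, one_mulVec, ← mulVec_mulVec, h1,
      mulVec_smul, mulVec_smul, ← hscal2]
    ext e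
    simp
    ring
  rw [htop, hbot]
end

section
/- Let G be an r-regular finite simple graph with incidence matrix R, and let y ∈ ℝ^E satisfy R·y = 0. Then the vector (0, y) ∈ ℝ^{V⊕E} (zero on the V-component, y on the E-component) satisfies M·(0, y) = (2r−2)·(0, y), where M is the signless Laplacian of the Q-graph Q(G); in particular 2r−2 is an eigenvalue of M whenever R has nontrivial kernel. -/
open Matrix

theorem stmt3 {V : Type*} [Fintype V] [DecidableEq V] (G : SimpleGraph V)
    [DecidableRel G.Adj] (r : ℕ) (hreg : G.IsRegularOfDegree r)
    (y : G.edgeSet → ℝ) (hy : incMat G *ᵥ y = 0) :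
    QQ G r *ᵥ Sum.elim (0 : V → ℝ) y = (2 * (r : ℝ) - 2) • Sum.elim (0 : V → ℝ) y ∧
    (y ≠ 0 → ∃ z : V ⊕ G.edgeSet → ℝ, z ≠ 0 ∧ QQ G r *ᵥ z = (2 * (r : ℝ) - 2) • z) := by
  have key : QQ G r *ᵥ Sum.elim (0 : V → ℝ) y
      = (2 * (r : ℝ) - 2) • Sum.elim (0 : V → ℝ) y := by
    rw [QQ, fromBlocks_mulVec]
    simp only [Sum.elim_comp_inl, Sum.elim_comp_inr, add_mulVec, mulVec_zero, smul_mulVec,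
      one_mulVec, hy, ← mulVec_mulVec]
    simp only [hy, mulVec_zero, add_zero, zero_add, smul_zero]
    ext (v | e) <;> simp
  refine ⟨key, fun hne => ⟨Sum.elim 0 y, ?_, key⟩⟩
  intro h
  apply hne
  ext e
  have := congrFun h (Sum.inr e)
  simpa using this
end

section
/- Let G be an r-regular finite simple graph with incidence matrix R and signless Laplacian Q_G = R·Rᵀ, let x ∈ ℝ^V satisfy Q_G·x = q·x with q > 0, and let μ₊ ≠ μ₋ be the two real roots of (t+2−2r)(t−r) + (r−t−1)·q = 0. Then the vectors X₊, X₋ ∈ ℝ^{V⊕E}, where X_± has V-component (μ_± + 2 − 2r − q)·x and E-component Rᵀ·x, are orthogonal: ⟨X₊, X₋⟩ = 0. -/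
open Matrix

theorem stmt4 {V : Type*} [Fintype V] [DecidableEq V] (G : SimpleGraph V)
    [DecidableRel G.Adj] (r : ℕ) (hreg : G.IsRegularOfDegree r)
    (q : ℝ) (hq : 0 < q) (x : V → ℝ)
    (hx : (incMat G * (incMat G)ᵀ) *ᵥ x = q • x)
    (μp μm : ℝ) (hne : μp ≠ μm)
    (hμp : (μp + 2 - 2 * (r : ℝ)) * (μp - (r : ℝ)) + ((r : ℝ) - μp - 1) * q = 0)
    (hμm : (μm + 2 - 2 * (r : ℝ)) * (μm - (r : ℝ)) + ((r : ℝ) - μm - 1) * q = 0) :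
    dotProduct (Sum.elim ((μp + 2 - 2 * (r : ℝ) - q) • x) ((incMat G)ᵀ *ᵥ x))
      (Sum.elim ((μm + 2 - 2 * (r : ℝ) - q) • x) ((incMat G)ᵀ *ᵥ x)) = 0 := by
  rw [sumElim_dotProduct_sumElim]
  have hE : ((incMat G)ᵀ *ᵥ x) ⬝ᵥ ((incMat G)ᵀ *ᵥ x) = q * (x ⬝ᵥ x) := by
    rw [mulVec_transpose, ← dotProduct_mulVec, ← mulVec_transpose, mulVec_mulVec, hx, dotProduct_smul,
      smul_eq_mul]
  have hV : ((μp + 2 - 2 * (r : ℝ) - q) • x) ⬝ᵥ ((μm + 2 - 2 * (r : ℝ) - q) • x)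
      = (μp + 2 - 2 * (r : ℝ) - q) * (μm + 2 - 2 * (r : ℝ) - q) * (x ⬝ᵥ x) := by
    rw [smul_dotProduct, dotProduct_smul, smul_eq_mul, smul_eq_mul]; ring
  rw [hE, hV]
  have hsum : μp + μm = 3 * (r : ℝ) - 2 + q := by
    have h := sub_eq_zero.mpr (hμp.trans hμm.symm)
    have h2 : (μp - μm) * (μp + μm - (3 * (r : ℝ) - 2 + q)) = 0 := by linarith [h]; 
    rcases mul_eq_zero.mp h2 with h3 | h3
    · exact absurd (sub_eq_zero.mp h3) hne
    · linarith
  have key : (μp + 2 - 2 * (r : ℝ) - q) * (μm + 2 - 2 * (r : ℝ) - q) = -q := by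
    have hprod : μp * μm = 2 * (r : ℝ) ^ 2 - 2 * r + ((r : ℝ) - 1) * q := by
      nlinarith [hμp, hsum]
    nlinarith [hprod, hsum]
  rw [key]; ring
end

section
/- Let G be a connected r-regular bipartite finite simple graph with bipartition V = V₁ ∪ V₂, and let z ∈ ℝ^V be the vector with z_u = 1 for u ∈ V₁ and z_u = −1 for u ∈ V₂. Then the vector (z, 0) ∈ ℝ^{V⊕E} satisfies M·(z, 0) = r·(z, 0), where M is the signless Laplacian of the Q-graph Q(G); in particular r is a signless Laplacian eigenvalue of Q(G). -/
open Matrix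

lemma key {V : Type*} [Fintype V] [DecidableEq V] (G : SimpleGraph V)
    (V₁ : Set V) [DecidablePred (· ∈ V₁)]
    (hbip : ∀ a b, G.Adj a b → (a ∈ V₁ ↔ b ∉ V₁))
    (z : V → ℝ) (hz : ∀ u, z u = if u ∈ V₁ then 1 else -1) :
    (incMat G)ᵀ *ᵥ z = 0 := by
  funext e
  obtain ⟨e, he⟩ := e
  induction e using Sym2.ind with
  | _ a b =>
    have hadj : G.Adj a b := he
    have hne : a ≠ b := hadj.ne
    simp only [Matrix.mulVec, dotProduct, Matrix.transpose_apply, incMat,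
      Matrix.of_apply, Sym2.mem_iff, Pi.zero_apply]
    have : ∀ v, (if v = a ∨ v = b then (1:ℝ) else 0) * z v =
        (if v = a then z a else 0) + (if v = b then z b else 0) := by
      intro v
      by_cases h1 : v = a <;> by_cases h2 : v = b <;>
        simp_all
    simp only [this, Finset.sum_add_distrib, Finset.sum_ite_eq', Finset.mem_univ, if_true]
    have := hbip a b hadj
    rw [hz a, hz b]
    by_cases ha : a ∈ V₁ <;> simp_all

theorem stmt5 {V : Type*} [Fintype V] [DecidableEq V] (G : SimpleGraph V)
    [DecidableRel G.Adj] (r : ℕ) (hreg : G.IsRegularOfDegree r)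
    (hconn : G.Connected)
    (V₁ : Set V) [DecidablePred (· ∈ V₁)]
    (hbip : ∀ a b, G.Adj a b → (a ∈ V₁ ↔ b ∉ V₁))
    (z : V → ℝ) (hz : ∀ u, z u = if u ∈ V₁ then 1 else -1) :
    QQ G r *ᵥ Sum.elim z (0 : G.edgeSet → ℝ) = (r : ℝ) • Sum.elim z (0 : G.edgeSet → ℝ) ∧
    ∃ X : V ⊕ G.edgeSet → ℝ, X ≠ 0 ∧ QQ G r *ᵥ X = (r : ℝ) • X := by
  have hkey := key G V₁ hbip z hz
  have hmain : QQ G r *ᵥ Sum.elim z (0 : G.edgeSet → ℝ)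
      = (r : ℝ) • Sum.elim z (0 : G.edgeSet → ℝ) := by
    rw [QQ, Matrix.fromBlocks_mulVec]
    simp [hkey, Matrix.smul_mulVec]
    funext x
    cases x <;> simp [hkey]
  refine ⟨hmain, Sum.elim z 0, ?_, hmain⟩
  have : Nonempty V := hconn.nonempty
  obtain ⟨v⟩ := this
  intro h
  have := congrFun h (Sum.inl v)
  simp [hz v] at this
  by_cases hv : v ∈ V₁ <;> simp_all
end

section
/- Let G be an r-regular finite simple graph with incidence matrix R and signless Laplacian Q_G = R·Rᵀ. Let q > 0 be real, let f be a real symmetric V×V matrix with f² = f and Q_G·f = q·f, let μ be a real root of (t+2−2r)(t−r) + (r−t−1)·q = 0, and set a = μ + 2 − 2r − q. Then the block matrix F = (1/(a²+q))·[[a²·f, a·f·R],[a·Rᵀ·f, Rᵀ·f·R]] indexed by V ⊕ E satisfies Fᵀ = F, F² = F, and M·F = μ·F, where M is the signless Laplacian of the Q-graph Q(G). -/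
open Matrix

theorem stmt6 {V : Type*} [Fintype V] [DecidableEq V] (G : SimpleGraph V)
    [DecidableRel G.Adj] (r : ℕ) (hreg : G.IsRegularOfDegree r)
    (q : ℝ) (hq : 0 < q) (f : Matrix V V ℝ)
    (hfs : f.IsSymm) (hfi : f * f = f)
    (hf : incMat G * (incMat G)ᵀ * f = q • f)
    (μ : ℝ) (hμ : (μ + 2 - 2 * (r : ℝ)) * (μ - (r : ℝ)) + ((r : ℝ) - μ - 1) * q = 0)
    (a : ℝ) (ha : a = μ + 2 - 2 * (r : ℝ) - q)
    (F : Matrix (V ⊕ G.edgeSet) (V ⊕ G.edgeSet) ℝ)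
    (hF : F = (a ^ 2 + q)⁻¹ •
      Matrix.fromBlocks (a ^ 2 • f) (a • (f * incMat G))
        (a • ((incMat G)ᵀ * f)) ((incMat G)ᵀ * f * incMat G)) :
    F.IsSymm ∧ F * F = F ∧ QQ G r * F = μ • F := by
  have hfe : fᵀ = f := hfs
  set R := incMat G with hRdef
  have hden : (0:ℝ) < a ^ 2 + q := by nlinarith [sq_nonneg a]
  have hk1 : a * (r : ℝ) + q = μ * a := by rw [ha]; linear_combination -hμ
  have hk2 : a + (2 * (r : ℝ) - 2) + q = μ := by rw [ha]; ring
  -- canonical facts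
  have L2 : R * (Rᵀ * f) = q • f := by rw [← Matrix.mul_assoc]; exact hf
  have L3 : f * (f * R) = f * R := by rw [← Matrix.mul_assoc, hfi]
  have L4 : R * (Rᵀ * (f * R)) = q • (f * R) := by
    rw [← Matrix.mul_assoc, ← Matrix.mul_assoc, hf, Matrix.smul_mul]
  refine ⟨?_, ?_, ?_⟩
  · rw [hF]
    unfold Matrix.IsSymm
    simp [Matrix.transpose_smul, Matrix.fromBlocks_transpose, Matrix.transpose_mul,
      Matrix.transpose_transpose, hfe, Matrix.mul_assoc]
  · have hBB : (Matrix.fromBlocks (a ^ 2 • f) (a • (f * R))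
        (a • (Rᵀ * f)) (Rᵀ * f * R)) *
        (Matrix.fromBlocks (a ^ 2 • f) (a • (f * R))
        (a • (Rᵀ * f)) (Rᵀ * f * R)) = (a ^ 2 + q) •
        (Matrix.fromBlocks (a ^ 2 • f) (a • (f * R))
        (a • (Rᵀ * f)) (Rᵀ * f * R)) := by
      rw [Matrix.fromBlocks_multiply, Matrix.fromBlocks_smul,
        Matrix.fromBlocks_inj]
      refine ⟨?_, ?_, ?_, ?_⟩
      · simp only [Matrix.smul_mul, Matrix.mul_smul, Matrix.mul_assoc, smul_smul,
          hfi, L2, L3, L4]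
        module
      · simp only [Matrix.smul_mul, Matrix.mul_smul, Matrix.mul_assoc, smul_smul,
          hfi, L2, L3, L4]
        module
      · simp only [Matrix.smul_mul, Matrix.mul_smul, Matrix.mul_assoc, smul_smul,
          hfi, L2, L3, L4]
        module
      · simp only [Matrix.smul_mul, Matrix.mul_smul, Matrix.mul_assoc, smul_smul,
          hfi, L2, L3, L4]
        module
    rw [hF, Matrix.smul_mul, Matrix.mul_smul, smul_smul, hBB, smul_smul]
    congr 1
    field_simp
  · have hMB : (Matrix.fromBlocks ((r : ℝ) • 1) R Rᵀ
        ((2 * (r : ℝ) - 2) • 1 + Rᵀ * R)) *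
        (Matrix.fromBlocks (a ^ 2 • f) (a • (f * R))
        (a • (Rᵀ * f)) (Rᵀ * f * R)) = μ •
        (Matrix.fromBlocks (a ^ 2 • f) (a • (f * R))
        (a • (Rᵀ * f)) (Rᵀ * f * R)) := by
      rw [Matrix.fromBlocks_multiply, Matrix.fromBlocks_smul,
        Matrix.fromBlocks_inj]
      refine ⟨?_, ?_, ?_, ?_⟩
      · simp only [Matrix.smul_mul, Matrix.mul_smul, Matrix.one_mul, Matrix.add_mul,
          Matrix.mul_assoc, smul_smul, hfi, L2, L3, L4]
        match_scalars <;> linear_combination a * hk1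
      · simp only [Matrix.smul_mul, Matrix.mul_smul, Matrix.one_mul, Matrix.add_mul,
          Matrix.mul_assoc, smul_smul, hfi, L2, L3, L4]
        match_scalars <;> linear_combination hk1
      · simp only [Matrix.smul_mul, Matrix.mul_smul, Matrix.one_mul, Matrix.add_mul,
          Matrix.mul_assoc, smul_smul, hfi, L2, L3, L4]
        match_scalars <;> linear_combination a * hk2
      · simp only [Matrix.smul_mul, Matrix.mul_smul, Matrix.one_mul, Matrix.add_mul,
          Matrix.mul_assoc, smul_smul, hfi, L2, L3, L4]
        match_scalars <;> linear_combination hk2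
    rw [hF, QQ, Matrix.mul_smul]
    rw [show incMat G = R from rfl] at *
    rw [hMB, smul_comm]
end

section
/- Let G be a connected non-bipartite r-regular finite simple graph (r ≥ 2) with signless Laplacian spectral decomposition q_0 > q_1 > … > q_d with projections f_0, …, f_d (so every q_i > 0). For each i let μ_{i,±} = (3r+q_i−2 ± √((q_i+r−2)²+4q_i))/2, a_{i,±} = μ_{i,±}+2−2r−q_i, F_{i,±} = (1/(a_{i,±}²+q_i))·[[a_{i,±}²·f_i, a_{i,±}·f_i·R],[a_{i,±}·Rᵀ·f_i, Rᵀ·f_i·R]], and set F' = I_{V⊕E} − Σ_{i,±} F_{i,±}. Then the matrices F_{i,±} (over all indices i and both signs) together with F' are real symmetric idempotents, the product of any two distinct ones is zero, they sum to I_{V⊕E}, and M = Σ_{i,±} μ_{i,±}·F_{i,±} + (2r−2)·F', where M is the signless Laplacian of the Q-graph Q(G). -/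
open Matrix

/-- Key positivity: an eigenvalue of the signless Laplacian of a connected non-bipartite
graph (for a nonzero eigenvector) is positive. -/
lemma qpos_aux {V : Type*} [Fintype V] [DecidableEq V] (G : SimpleGraph V)
    [DecidableRel G.Adj]
    (hconn : G.Connected) (hnb : ¬ G.Colorable 2)
    (c : ℝ) (y : V → ℝ) (hy : y ≠ 0)
    (heig : (incMat G * (incMat G)ᵀ) *ᵥ y = c • y) : 0 < c := by
  by_contra hc
  push_neg at hc
  set B := incMat G with hB
  set z : G.edgeSet → ℝ := Bᵀ *ᵥ y with hz
  have hyy : 0 < y ⬝ᵥ y := by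
    obtain ⟨v, hv⟩ := Function.ne_iff.mp hy
    exact Finset.sum_pos' (fun i _ => mul_self_nonneg _)
      ⟨v, Finset.mem_univ v, mul_self_pos.mpr hv⟩
  have h1 : y ⬝ᵥ ((B * Bᵀ) *ᵥ y) = z ⬝ᵥ z := by
    rw [← Matrix.mulVec_mulVec, Matrix.dotProduct_mulVec, ← Matrix.mulVec_transpose]
  have h2 : y ⬝ᵥ ((B * Bᵀ) *ᵥ y) = c * (y ⬝ᵥ y) := by
    rw [heig, dotProduct_smul, smul_eq_mul]
  have hzz : z ⬝ᵥ z = 0 := by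
    have hnn : 0 ≤ z ⬝ᵥ z := Finset.sum_nonneg fun i _ => mul_self_nonneg _
    have : c * (y ⬝ᵥ y) ≤ 0 := mul_nonpos_of_nonpos_of_nonneg hc hyy.le
    linarith [h1 ▸ h2]
  have hz0 : z = 0 := dotProduct_self_eq_zero.mp hzz
  have hadj : ∀ u w, G.Adj u w → y u + y w = 0 := by
    intro u w huw
    have he : s(u, w) ∈ G.edgeSet := huw
    have h0 : z ⟨s(u, w), he⟩ = 0 := by rw [hz0]; rfl
    rw [hz] at h0
    simp only [Matrix.mulVec, dotProduct, Matrix.transpose_apply, hB, incMat,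
      Matrix.of_apply, Sym2.mem_iff, ite_mul, one_mul, zero_mul] at h0
    have hrw : ∀ v, (if v = u ∨ v = w then y v else 0)
        = if v ∈ ({u, w} : Finset V) then y v else 0 := by
      intro v; simp [Finset.mem_insert]
    rw [Finset.sum_congr rfl (fun v _ => hrw v), Finset.sum_ite_mem,
      Finset.univ_inter, Finset.sum_pair (G.ne_of_adj huw)] at h0
    exact h0
  have hsq : ∀ u w, G.Adj u w → y u * y u = y w * y w := by
    intro u w huw
    have h := hadj u w huw
    linear_combination (y u - y w) * h
  have hreach : ∀ u w, G.Reachable u w → y u * y u = y w * y w := by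
    intro u w h
    obtain ⟨p⟩ := h
    induction p with
    | nil => rfl
    | cons hadj' p ih => exact (hsq _ _ hadj').trans ih
  obtain ⟨v0, hv0⟩ := Function.ne_iff.mp hy
  have hne0 : ∀ v, y v ≠ 0 := by
    intro v h
    have := hreach v0 v (hconn.preconnected v0 v)
    rw [h, mul_zero] at this
    exact hv0 (mul_self_eq_zero.mp this)
  refine hnb ?_
  have C : G.Coloring Bool := SimpleGraph.Coloring.mk (fun v => decide (0 < y v)) ?_
  · simpa using C.colorable
  · intro u w huw hcol
    simp only [decide_eq_decide] at hcol
    have h := hadj u w huw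
    rcases (hne0 u).lt_or_gt with h1 | h1
    · have : 0 < y w := by linarith
      exact absurd (hcol.mpr this) (by linarith)
    · have : ¬ (0 < y w) := by intro hw; linarith
      exact this (hcol.mp h1)

/-- Auxiliary "normal form" block matrix. -/
noncomputable def NF {V E : Type*} [Fintype V] (f : Matrix V V ℝ) (B : Matrix V E ℝ)
    (α β γ δ : ℝ) : Matrix (V ⊕ E) (V ⊕ E) ℝ :=
  Matrix.fromBlocks (α • f) (β • (f * B)) (γ • (Bᵀ * f)) (δ • (Bᵀ * f * B))

lemma NF_zero {V E : Type*} [Fintype V] (B : Matrix V E ℝ) (α β γ δ : ℝ) :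
    NF (0 : Matrix V V ℝ) B α β γ δ = 0 := by
  simp [NF, Matrix.fromBlocks_zero]

lemma NF_eq_zero {V E : Type*} [Fintype V] (f : Matrix V V ℝ) (B : Matrix V E ℝ)
    {α β γ δ : ℝ} (h1 : α = 0) (h2 : β = 0) (h3 : γ = 0) (h4 : δ = 0) :
    NF f B α β γ δ = 0 := by
  rw [h1, h2, h3, h4]; simp [NF, Matrix.fromBlocks_zero]

lemma NF_congr {V E : Type*} [Fintype V] (f : Matrix V V ℝ) (B : Matrix V E ℝ)
    {α β γ δ α' β' γ' δ' : ℝ} (h1 : α = α') (h2 : β = β') (h3 : γ = γ') (h4 : δ = δ') :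
    NF f B α β γ δ = NF f B α' β' γ' δ' := by rw [h1, h2, h3, h4]

lemma NF_smul {V E : Type*} [Fintype V] (f : Matrix V V ℝ) (B : Matrix V E ℝ)
    (c α β γ δ : ℝ) :
    c • NF f B α β γ δ = NF f B (c * α) (c * β) (c * γ) (c * δ) := by
  simp [NF, Matrix.fromBlocks_smul, smul_smul]

lemma NF_add {V E : Type*} [Fintype V] (f : Matrix V V ℝ) (B : Matrix V E ℝ)
    (α β γ δ α' β' γ' δ' : ℝ) :
    NF f B α β γ δ + NF f B α' β' γ' δ' = NF f B (α + α') (β + β') (γ + γ') (δ + δ') := by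
  simp [NF, Matrix.fromBlocks_add, add_smul]

lemma NF_isSymm {V E : Type*} [Fintype V] {f : Matrix V V ℝ} (B : Matrix V E ℝ)
    (hf : f.IsSymm) (α β δ : ℝ) : (NF f B α β β δ).IsSymm := by
  unfold Matrix.IsSymm NF
  simp [Matrix.fromBlocks_transpose, Matrix.transpose_smul, Matrix.transpose_mul,
    Matrix.mul_assoc, hf.eq]

lemma NF_mul {V E : Type*} [Fintype V] [Fintype E] (f g : Matrix V V ℝ) (B : Matrix V E ℝ)
    (qg : ℝ) (h : B * Bᵀ * g = qg • g) (α β γ δ α' β' γ' δ' : ℝ) :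
    NF f B α β γ δ * NF g B α' β' γ' δ' =
      NF (f * g) B (α * α' + β * γ' * qg) (α * β' + β * δ' * qg)
        (γ * α' + δ * γ' * qg) (γ * β' + δ * δ' * qg) := by
  have K1 : (f * B) * (Bᵀ * g) = qg • (f * g) := by
    rw [Matrix.mul_assoc, ← Matrix.mul_assoc B Bᵀ g, h, Matrix.mul_smul]
  have K2 : (f * B) * (Bᵀ * g * B) = qg • (f * g * B) := by
    rw [← Matrix.mul_assoc, K1, Matrix.smul_mul]
  have K4 : (Bᵀ * f * B) * (Bᵀ * g) = qg • (Bᵀ * (f * g)) := by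
    rw [Matrix.mul_assoc (Bᵀ * f) B (Bᵀ * g), ← Matrix.mul_assoc B Bᵀ g, h,
      Matrix.mul_smul, ← Matrix.mul_assoc]
  have K5 : (Bᵀ * f * B) * (Bᵀ * g * B) = qg • (Bᵀ * (f * g) * B) := by
    rw [← Matrix.mul_assoc, K4, Matrix.smul_mul]
  have K0a : f * (g * B) = f * g * B := (Matrix.mul_assoc f g B).symm
  have K0b : (Bᵀ * f) * g = Bᵀ * (f * g) := Matrix.mul_assoc _ _ _
  have K3 : (Bᵀ * f) * (g * B) = Bᵀ * (f * g) * B := by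
    rw [Matrix.mul_assoc Bᵀ f (g * B), ← Matrix.mul_assoc f g B, ← Matrix.mul_assoc]
  unfold NF
  rw [Matrix.fromBlocks_multiply, Matrix.fromBlocks_inj]
  refine ⟨?_, ?_, ?_, ?_⟩ <;>
    · simp only [Matrix.smul_mul, Matrix.mul_smul, smul_smul, K0a, K0b, K1, K2, K3, K4, K5]
      module

lemma fromBlocks_sum {ι l m n o α : Type*} [AddCommMonoid α] (s : Finset ι)
    (A : ι → Matrix n l α) (B : ι → Matrix n m α) (C : ι → Matrix o l α)
    (D : ι → Matrix o m α) :
    (∑ i ∈ s, Matrix.fromBlocks (A i) (B i) (C i) (D i)) =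
      Matrix.fromBlocks (∑ i ∈ s, A i) (∑ i ∈ s, B i) (∑ i ∈ s, C i) (∑ i ∈ s, D i) := by
  ext (x | x) (y | y) <;> simp [Matrix.sum_apply]

theorem stmt7 {V : Type*} [Fintype V] [DecidableEq V] (G : SimpleGraph V)
    [DecidableRel G.Adj] (r : ℕ) (hr : 2 ≤ r) (hreg : G.IsRegularOfDegree r)
    (hconn : G.Connected) (hnb : ¬ G.Colorable 2)
    (d : ℕ) (q : Fin (d + 1) → ℝ) (f : Fin (d + 1) → Matrix V V ℝ)
    (hqa : StrictAnti q)
    (hfs : ∀ i, (f i).IsSymm) (hfi : ∀ i, f i * f i = f i)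
    (hfo : ∀ i j, i ≠ j → f i * f j = 0) (hfsum : ∑ i, f i = 1)
    (hQ : incMat G * (incMat G)ᵀ = ∑ i, q i • f i)
    (μ : Fin (d + 1) → Bool → ℝ)
    (hμ : ∀ i s, μ i s = (3 * (r : ℝ) + q i - 2 +
      (if s then 1 else -1) * Real.sqrt ((q i + (r : ℝ) - 2) ^ 2 + 4 * q i)) / 2)
    (a : Fin (d + 1) → Bool → ℝ) (ha : ∀ i s, a i s = μ i s + 2 - 2 * (r : ℝ) - q i)
    (F : Fin (d + 1) → Bool → Matrix (V ⊕ G.edgeSet) (V ⊕ G.edgeSet) ℝ)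
    (hF : ∀ i s, F i s = ((a i s) ^ 2 + q i)⁻¹ •
      Matrix.fromBlocks ((a i s) ^ 2 • f i) (a i s • (f i * incMat G))
        (a i s • ((incMat G)ᵀ * f i)) ((incMat G)ᵀ * f i * incMat G))
    (F' : Matrix (V ⊕ G.edgeSet) (V ⊕ G.edgeSet) ℝ)
    (hF' : F' = 1 - ∑ i, ∑ s, F i s) :
    (∀ i s, (F i s).IsSymm ∧ F i s * F i s = F i s) ∧
    (F'.IsSymm ∧ F' * F' = F') ∧
    (∀ i s j t, (i, s) ≠ (j, t) → F i s * F j t = 0) ∧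
    (∀ i s, F i s * F' = 0 ∧ F' * F i s = 0) ∧
    ((∑ i, ∑ s, F i s) + F' = 1) ∧
    QQ G r = (∑ i, ∑ s, μ i s • F i s) + (2 * (r : ℝ) - 2) • F' := by
  set B := incMat G with hB
  -- the projections absorb the signless Laplacian
  have hfQ : ∀ j, B * Bᵀ * f j = q j • f j := by
    intro j
    rw [hQ, Finset.sum_mul, Finset.sum_eq_single j]
    · rw [Matrix.smul_mul, hfi]
    · intro i _ hij
      rw [Matrix.smul_mul, hfo i j hij, smul_zero]
    · intro h; exact absurd (Finset.mem_univ j) h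
  -- F in normal form
  have hFN : ∀ i s, F i s = NF (f i) B
      (((a i s) ^ 2 + q i)⁻¹ * (a i s) ^ 2) (((a i s) ^ 2 + q i)⁻¹ * a i s)
      (((a i s) ^ 2 + q i)⁻¹ * a i s) (((a i s) ^ 2 + q i)⁻¹) := by
    intro i s
    rw [hF i s]
    have h1 : Matrix.fromBlocks ((a i s) ^ 2 • f i) (a i s • (f i * B))
        (a i s • (Bᵀ * f i)) (Bᵀ * f i * B)
        = NF (f i) B ((a i s) ^ 2) (a i s) (a i s) 1 := by
      unfold NF; rw [one_smul]
    rw [h1, NF_smul, mul_one]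
  -- positivity of eigenvalues with nonzero projection
  have hqpos : ∀ i, f i ≠ 0 → 0 < q i := by
    intro i hfne
    obtain ⟨v, w, hvw⟩ : ∃ v w, f i v w ≠ 0 := by
      by_contra h
      push_neg at h
      exact hfne (by ext v w; simpa using h v w)
    refine qpos_aux G hconn hnb (q i) (f i *ᵥ Pi.single w 1) ?_ ?_
    · intro h0
      apply hvw
      have h1 := congrFun h0 v
      simpa [Matrix.mulVec_single] using h1
    · rw [← hB, Matrix.mulVec_mulVec, hfQ i, Matrix.smul_mulVec]
  -- scalar consequences of the quadratic
  have hpack : ∀ i, 0 < q i →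
      a i true * a i false = -q i ∧ a i true + a i false = -(q i + (r : ℝ) - 2) := by
    intro i hq
    have hsq : Real.sqrt ((q i + (r : ℝ) - 2) ^ 2 + 4 * q i) ^ 2
        = (q i + (r : ℝ) - 2) ^ 2 + 4 * q i :=
      Real.sq_sqrt (by nlinarith [sq_nonneg (q i + (r : ℝ) - 2)])
    have hat : a i true = (Real.sqrt ((q i + (r : ℝ) - 2) ^ 2 + 4 * q i)
        - (q i + (r : ℝ) - 2)) / 2 := by
      rw [ha i true, hμ i true]
      simp only [if_true]
      ring
    have haf : a i false = (-Real.sqrt ((q i + (r : ℝ) - 2) ^ 2 + 4 * q i)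
        - (q i + (r : ℝ) - 2)) / 2 := by
      rw [ha i false, hμ i false]
      simp only [Bool.false_eq_true, if_false]
      ring
    constructor
    · rw [hat, haf]; linear_combination (-(1 : ℝ)/4) * hsq
    · rw [hat, haf]; ring
  have hF0 : ∀ i, f i = 0 → ∀ s, F i s = 0 := by
    intro i h s; rw [hFN i s, h, NF_zero]
  have hsymm : ∀ i s, (F i s).IsSymm := by
    intro i s; rw [hFN i s]; exact NF_isSymm B (hfs i) _ _ _
  have hidem : ∀ i s, F i s * F i s = F i s := by
    intro i s
    by_cases hfz : f i = 0
    · rw [hF0 i hfz s]; simp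
    · have hq := hqpos i hfz
      have hne : (a i s) ^ 2 + q i ≠ 0 := by positivity
      have hinv : ((a i s) ^ 2 + q i) * ((a i s) ^ 2 + q i)⁻¹ = 1 := mul_inv_cancel₀ hne
      rw [hFN i s, NF_mul _ _ _ _ (hfQ i), hfi i]
      exact NF_congr _ _
        (by linear_combination (((a i s) ^ 2 + q i)⁻¹ * (a i s) ^ 2) * hinv)
        (by linear_combination (((a i s) ^ 2 + q i)⁻¹ * a i s) * hinv)
        (by linear_combination (((a i s) ^ 2 + q i)⁻¹ * a i s) * hinv)
        (by linear_combination ((a i s) ^ 2 + q i)⁻¹ * hinv)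
  have horth : ∀ i s j t, (i, s) ≠ (j, t) → F i s * F j t = 0 := by
    intro i s j t hne'
    by_cases hij : i = j
    · subst hij
      have hst : s ≠ t := by intro h; exact hne' (by rw [h])
      by_cases hfz : f i = 0
      · rw [hF0 i hfz s]; simp
      · have hq := hqpos i hfz
        obtain ⟨hp, hs⟩ := hpack i hq
        have hpst : a i s * a i t = -q i := by
          rcases s with _ | _ <;> rcases t with _ | _
          · exact absurd rfl hst
          · rw [mul_comm]; exact hp
          · exact hp
          · exact absurd rfl hst
        rw [hFN i s, hFN i t, NF_mul _ _ _ _ (hfQ i), hfi i]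
        exact NF_eq_zero _ _
          (by linear_combination (((a i s) ^ 2 + q i)⁻¹ * ((a i t) ^ 2 + q i)⁻¹
            * a i s * a i t) * hpst)
          (by linear_combination (((a i s) ^ 2 + q i)⁻¹ * ((a i t) ^ 2 + q i)⁻¹
            * a i s) * hpst)
          (by linear_combination (((a i s) ^ 2 + q i)⁻¹ * ((a i t) ^ 2 + q i)⁻¹
            * a i t) * hpst)
          (by linear_combination (((a i s) ^ 2 + q i)⁻¹ * ((a i t) ^ 2 + q i)⁻¹) * hpst)
    · rw [hFN i s, hFN j t, NF_mul _ _ _ _ (hfQ j), hfo i j hij, NF_zero]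
  have hFS : ∀ i s, F i s * (∑ j, ∑ t, F j t) = F i s := by
    intro i s
    rw [Finset.mul_sum]
    rw [Finset.sum_congr rfl fun j _ => Finset.mul_sum (Finset.univ) (fun t => F j t) (F i s)]
    rw [Finset.sum_eq_single i]
    · rw [Fintype.sum_bool]
      cases s
      · rw [hidem i false, horth i false i true (by simp), zero_add]
      · rw [hidem i true, horth i true i false (by simp), add_zero]
    · intro j _ hji
      apply Finset.sum_eq_zero
      intro t _
      exact horth i s j t (fun h => hji ((congrArg Prod.fst h).symm))
    · intro h; exact absurd (Finset.mem_univ i) h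
  have hSF : ∀ i s, (∑ j, ∑ t, F j t) * F i s = F i s := by
    intro i s
    rw [Finset.sum_mul]
    rw [Finset.sum_congr rfl fun j _ => Finset.sum_mul (Finset.univ) (fun t => F j t) (F i s)]
    rw [Finset.sum_eq_single i]
    · rw [Fintype.sum_bool]
      cases s
      · rw [hidem i false, horth i true i false (by simp), zero_add]
      · rw [hidem i true, horth i false i true (by simp), add_zero]
    · intro j _ hji
      apply Finset.sum_eq_zero
      intro t _
      exact horth j t i s (fun h => hji ((congrArg Prod.fst h)))
    · intro h; exact absurd (Finset.mem_univ i) h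
  have hSS : (∑ i, ∑ s, F i s) * (∑ j, ∑ t, F j t) = ∑ i, ∑ s, F i s := by
    rw [Finset.sum_mul]
    rw [Finset.sum_congr rfl fun i _ => Finset.sum_mul (Finset.univ) (fun s => F i s) _]
    exact Finset.sum_congr rfl fun i _ => Finset.sum_congr rfl fun s _ => hFS i s
  have hStr : (∑ i, ∑ s, F i s)ᵀ = ∑ i, ∑ s, F i s := by
    rw [Matrix.transpose_sum]
    refine Finset.sum_congr rfl fun i _ => ?_
    rw [Matrix.transpose_sum]
    exact Finset.sum_congr rfl fun s _ => (hsymm i s).eq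
  refine ⟨fun i s => ⟨hsymm i s, hidem i s⟩, ⟨?_, ?_⟩, horth, fun i s => ⟨?_, ?_⟩, ?_, ?_⟩
  · show F'ᵀ = F'
    rw [hF', Matrix.transpose_sub, Matrix.transpose_one, hStr]
  · rw [hF', sub_mul, one_mul, mul_sub, mul_one, hSS]
    abel
  · rw [hF', mul_sub, mul_one, hFS i s, sub_self]
  · rw [hF', sub_mul, one_mul, hSF i s, sub_self]
  · rw [hF']; abel
  · -- the spectral decomposition of QQ
    have hGi : ∀ i, ∑ s, (μ i s - (2 * (r : ℝ) - 2)) • F i s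
        = NF (f i) B (2 - (r : ℝ)) 1 1 1 := by
      intro i
      have hμa : ∀ s, μ i s - (2 * (r : ℝ) - 2) = a i s + q i := by
        intro s; rw [ha i s]; ring
      by_cases hfz : f i = 0
      · have h0 : ∀ s : Bool, (μ i s - (2 * (r : ℝ) - 2)) • F i s = 0 := by
          intro s; rw [hF0 i hfz s, smul_zero]
        rw [Fintype.sum_bool, h0, h0, add_zero, hfz, NF_zero]
      · have hq := hqpos i hfz
        obtain ⟨hp, hs⟩ := hpack i hq
        have hne1 : (a i true) ^ 2 + q i ≠ 0 := by positivity
        have hne2 : (a i false) ^ 2 + q i ≠ 0 := by positivity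
        rw [Fintype.sum_bool, hμa, hμa, hFN i true, hFN i false, NF_smul, NF_smul, NF_add]
        refine NF_congr _ _ ?_ ?_ ?_ ?_
        · field_simp
          linear_combination q i * (a i true * a i false - q i - a i true - a i false) * hp
            + ((a i true) ^ 2 + q i) * ((a i false) ^ 2 + q i) * hs
        · field_simp
          linear_combination (a i true * a i false - q i + q i * a i true
            + q i * a i false) * hp
        · field_simp
          linear_combination (a i true * a i false - q i + q i * a i true
            + q i * a i false) * hp
        · field_simp
          linear_combination (a i true + a i false + q i - a i true * a i false) * hp
    have hmain : ∑ i, ∑ s, (μ i s - (2 * (r : ℝ) - 2)) • F i s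
        = Matrix.fromBlocks ((2 - (r : ℝ)) • 1) B Bᵀ (Bᵀ * B) := by
      rw [Finset.sum_congr rfl fun i _ => hGi i]
      unfold NF
      rw [fromBlocks_sum, Matrix.fromBlocks_inj]
      refine ⟨?_, ?_, ?_, ?_⟩
      · rw [← Finset.smul_sum, hfsum]
      · simp only [one_smul]
        rw [← Matrix.sum_mul, hfsum, Matrix.one_mul]
      · simp only [one_smul]
        rw [← Matrix.mul_sum, hfsum, Matrix.mul_one]
      · simp only [one_smul]
        rw [← Matrix.sum_mul, ← Matrix.mul_sum, hfsum, Matrix.mul_one]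
    have hsplit : ∑ i, ∑ s, μ i s • F i s
        = (∑ i, ∑ s, (μ i s - (2 * (r : ℝ) - 2)) • F i s)
          + (2 * (r : ℝ) - 2) • (∑ i, ∑ s, F i s) := by
      rw [Finset.smul_sum, ← Finset.sum_add_distrib]
      refine Finset.sum_congr rfl fun i _ => ?_
      rw [Finset.smul_sum, ← Finset.sum_add_distrib]
      refine Finset.sum_congr rfl fun s _ => ?_
      rw [sub_smul]; abel
    rw [hsplit, hmain, hF', smul_sub]
    have hone : (2 * (r : ℝ) - 2) • (1 : Matrix (V ⊕ G.edgeSet) (V ⊕ G.edgeSet) ℝ)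
        = Matrix.fromBlocks ((2 * (r : ℝ) - 2) • 1) 0 0 ((2 * (r : ℝ) - 2) • 1) := by
      rw [← Matrix.fromBlocks_one, Matrix.fromBlocks_smul, smul_zero, smul_zero]
    have hQQ : QQ G r = Matrix.fromBlocks ((r : ℝ) • 1) B Bᵀ
        ((2 * (r : ℝ) - 2) • 1 + Bᵀ * B) := by
      rw [QQ, hB]
    rw [hQQ]
    rw [show Matrix.fromBlocks ((2 - (r : ℝ)) • 1) B Bᵀ (Bᵀ * B)
        + (2 * (r : ℝ) - 2) • (∑ i, ∑ s, F i s)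
        + ((2 * (r : ℝ) - 2) • 1 - (2 * (r : ℝ) - 2) • (∑ i, ∑ s, F i s))
        = Matrix.fromBlocks ((2 - (r : ℝ)) • 1) B Bᵀ (Bᵀ * B)
          + (2 * (r : ℝ) - 2) • 1 from by abel]
    rw [hone, Matrix.fromBlocks_add, Matrix.fromBlocks_inj]
    refine ⟨?_, (add_zero _).symm, (add_zero _).symm, (add_comm _ _)⟩
    rw [← add_smul, show (2 - (r : ℝ)) + (2 * (r : ℝ) - 2) = (r : ℝ) from by ring]
end

section
/- Let G be a connected bipartite r-regular finite simple graph with r ≥ 2 and signless Laplacian spectral decomposition q_0 > q_1 > … > q_d with projections f_0, …, f_d (so q_0 = 2r and q_d = 0). Then for every edge e ∈ E there exists an index i ∈ {1, …, d−1} such that f_i·(R·e_e) ≠ 0, where R·e_e ∈ ℝ^V is the column of the incidence matrix R indexed by e. -/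
open Matrix

private lemma dotTrans {m n : Type*} [Fintype m] [Fintype n] (M : Matrix m n ℝ) (x : n → ℝ)
    (y : m → ℝ) : (M *ᵥ x) ⬝ᵥ y = x ⬝ᵥ (Mᵀ *ᵥ y) := by
  rw [mulVec_transpose, dotProduct_comm, dotProduct_mulVec, dotProduct_comm]

private lemma incA {V : Type*} [Fintype V] [DecidableEq V] (G : SimpleGraph V)
    [DecidableRel G.Adj] (r : ℕ) (hreg : G.IsRegularOfDegree r) :
    incMat G * (incMat G)ᵀ = (r : ℝ) • (1 : Matrix V V ℝ) + G.adjMatrix ℝ := by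
  have h1 : incMat G * (incMat G)ᵀ = G.incMatrix ℝ * (G.incMatrix ℝ)ᵀ := by
    ext v w
    simp only [Matrix.mul_apply, transpose_apply]
    have step1 : ∑ e : G.edgeSet, incMat G v e * incMat G w e
        = ∑ e : G.edgeSet, G.incMatrix ℝ v ↑e * G.incMatrix ℝ w ↑e := by
      apply Finset.sum_congr rfl
      intro e _
      have he := e.2
      simp [incMat, SimpleGraph.incMatrix_apply, Set.indicator_apply,
        SimpleGraph.incidenceSet, he]
    rw [step1, ← Finset.sum_subtype G.edgeFinset (fun x => SimpleGraph.mem_edgeFinset)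
      (fun s => G.incMatrix ℝ v s * G.incMatrix ℝ w s)]
    rw [← Finset.sum_subset (Finset.subset_univ G.edgeFinset) ?van]
    case van =>
      intro s _ hs
      rw [SimpleGraph.mem_edgeFinset] at hs
      have : G.incMatrix ℝ v s = 0 := by
        rw [SimpleGraph.incMatrix_apply_eq_zero_iff]
        exact fun h => hs (G.incidenceSet_subset v h)
      rw [this, zero_mul]
  rw [h1, SimpleGraph.incMatrix_mul_transpose]
  ext v w
  by_cases h : v = w
  · subst h; simp [hreg v, Matrix.one_apply]
  · simp [h, Matrix.one_apply, SimpleGraph.adjMatrix_apply]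

theorem stmt11 {V : Type*} [Fintype V] [DecidableEq V] (G : SimpleGraph V)
    [DecidableRel G.Adj] (r : ℕ) (hr : 2 ≤ r) (hreg : G.IsRegularOfDegree r)
    (hconn : G.Connected) (hbip : G.Colorable 2)
    (d : ℕ) (q : Fin (d + 1) → ℝ) (f : Fin (d + 1) → Matrix V V ℝ)
    (hqa : StrictAnti q)
    (hfs : ∀ i, (f i).IsSymm) (hfi : ∀ i, f i * f i = f i)
    (hfo : ∀ i j, i ≠ j → f i * f j = 0) (hfsum : ∑ i, f i = 1)
    (hQ : incMat G * (incMat G)ᵀ = ∑ i, q i • f i) :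
    ∀ e : G.edgeSet, ∃ i : Fin (d + 1), i ≠ 0 ∧ i ≠ Fin.last d ∧
      f i *ᵥ (fun v => incMat G v e) ≠ 0 := by
  classical
  intro e
  by_contra hcon
  push_neg at hcon
  set Q : Matrix V V ℝ := incMat G * (incMat G)ᵀ with hQdef
  set x : V → ℝ := fun v => incMat G v e with hxdef
  -- endpoints
  obtain ⟨s, hs⟩ := e
  induction s using Sym2.ind with
  | _ a b =>
  have hab : G.Adj a b := (SimpleGraph.mem_edgeSet G).mp hs
  have hane : a ≠ b := G.ne_of_adj hab
  -- the adjacency form of Q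
  have hA : Q = (r : ℝ) • (1 : Matrix V V ℝ) + G.adjMatrix ℝ := incA G r hreg
  have hQmv : ∀ (y : V → ℝ) (v : V),
      (Q *ᵥ y) v = r * y v + ∑ u ∈ G.neighborFinset v, y u := by
    intro y v
    rw [hA, add_mulVec, smul_mulVec, one_mulVec]
    simp [SimpleGraph.adjMatrix_mulVec_apply]
  -- Laplacian relation
  have hL : G.lapMatrix ℝ = (2 * (r : ℝ)) • (1 : Matrix V V ℝ) - Q := by
    rw [hA]
    ext v w
    by_cases h : v = w
    · subst h
      simp only [SimpleGraph.lapMatrix, SimpleGraph.degMatrix, Matrix.sub_apply,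
        Matrix.diagonal_apply_eq, hreg v, SimpleGraph.adjMatrix_apply,
        Matrix.add_apply, Matrix.smul_apply, Matrix.one_apply_eq, smul_eq_mul,
        SimpleGraph.irrefl, if_false]
      ring
    · simp [SimpleGraph.lapMatrix, SimpleGraph.degMatrix, Matrix.one_apply, h,
        Matrix.diagonal_apply_ne _ h]
  -- L psd
  have hLpsd : ∀ y : V → ℝ, 0 ≤ y ⬝ᵥ (G.lapMatrix ℝ *ᵥ y) := by
    intro y
    rw [← Matrix.toLinearMap₂'_apply', SimpleGraph.lapMatrix_toLinearMap₂']
    positivity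
  -- kernel of L
  have hLker : ∀ y : V → ℝ, G.lapMatrix ℝ *ᵥ y = 0 → ∀ v, y v = y a := by
    intro y hy v
    have := (SimpleGraph.lapMatrix_mulVec_eq_zero_iff_forall_reachable (G := G) (x := y)).mp hy
    exact this v a (hconn.preconnected v a)
  -- spectral algebra
  have hQf : ∀ i, Q * f i = q i • f i := by
    intro i
    rw [hQ, Finset.sum_mul]
    rw [Finset.sum_eq_single i]
    · rw [smul_mul_assoc, hfi]
    · intro j _ hj
      rw [smul_mul_assoc, hfo j i hj, smul_zero]
    · intro h; exact absurd (Finset.mem_univ i) h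
  have hfQ : ∀ i, f i * Q = q i • f i := by
    intro i
    rw [hQ, Finset.mul_sum]
    rw [Finset.sum_eq_single i]
    · rw [mul_smul_comm, hfi]
    · intro j _ hj
      rw [mul_smul_comm, hfo i j (Ne.symm hj), smul_zero]
    · intro h; exact absurd (Finset.mem_univ i) h
  have hsum_mv : ∀ y : V → ℝ, ∑ i, f i *ᵥ y = y := by
    intro y
    have h' : ∑ i, f i *ᵥ y = (∑ i, f i) *ᵥ y := by
      ext v
      simp only [Matrix.mulVec, dotProduct, Finset.sum_apply, Matrix.sum_apply,
        Finset.sum_mul]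
      rw [Finset.sum_comm]
    rw [h', hfsum, one_mulVec]
  have hkill : ∀ (y : V → ℝ) (μ : ℝ), Q *ᵥ y = μ • y →
      ∀ j, q j ≠ μ → f j *ᵥ y = 0 := by
    intro y μ hy j hj
    have h1 : q j • (f j *ᵥ y) = μ • (f j *ᵥ y) := by
      calc q j • (f j *ᵥ y) = (q j • f j) *ᵥ y := by rw [smul_mulVec]
        _ = (f j * Q) *ᵥ y := by rw [hfQ]
        _ = f j *ᵥ (Q *ᵥ y) := by rw [← mulVec_mulVec]
        _ = μ • (f j *ᵥ y) := by rw [hy, mulVec_smul]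
    have h2 : (q j - μ) • (f j *ᵥ y) = 0 := by
      rw [sub_smul, h1, sub_self]
    rcases smul_eq_zero.mp h2 with h | h
    · exact absurd (sub_eq_zero.mp h) hj
    · exact h
  have hfind : ∀ (y : V → ℝ) (μ : ℝ), y ≠ 0 → Q *ᵥ y = μ • y →
      ∃ i, q i = μ := by
    intro y μ hy0 hy
    by_contra h
    push_neg at h
    apply hy0
    rw [← hsum_mv y]
    exact Finset.sum_eq_zero fun i _ => hkill y μ hy i (h i)
  -- coloring sign vector
  obtain ⟨C⟩ := hbip
  set σ : V → ℝ := fun v => if C v = 0 then 1 else -1 with hσdef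
  have hσ2 : ∀ v, σ v * σ v = 1 := by
    intro v; by_cases h : C v = 0 <;> simp [hσdef, h]
  have hσne : ∀ v, σ v ≠ 0 := by
    intro v; by_cases h : C v = 0 <;> simp [hσdef, h]
  have hσadj : ∀ {v u : V}, G.Adj v u → σ u = -σ v := by
    intro v u hvu
    have hne := C.valid hvu
    have key : ∀ c c' : Fin 2, c ≠ c' → (c' = 0 ↔ ¬(c = 0)) := by decide
    by_cases h : C v = 0
    · have h' : ¬ C u = 0 := by rw [key (C v) (C u) hne]; simpa using h
      simp [hσdef, h, h']
    · have h' : C u = 0 := by rw [key (C v) (C u) hne]; exact h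
      simp [hσdef, h, h']
  -- eigen equations for the known eigenvectors
  have hone : Q *ᵥ (fun _ => (1:ℝ)) = (2*(r:ℝ)) • (fun _ => (1:ℝ)) := by
    ext v
    rw [hQmv]
    rw [Finset.sum_const]
    have : (G.neighborFinset v).card = r := hreg v
    rw [this]
    simp only [nsmul_eq_mul, Pi.smul_apply, smul_eq_mul, mul_one]
    ring
  have hsigma : Q *ᵥ σ = (0:ℝ) • σ := by
    ext v
    rw [hQmv]
    have hcongr : ∀ u ∈ G.neighborFinset v, σ u = -σ v := fun u hu =>
      hσadj ((G.mem_neighborFinset v u).mp hu)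
    rw [Finset.sum_congr rfl hcongr, Finset.sum_const]
    have : (G.neighborFinset v).card = r := hreg v
    rw [this]
    simp only [nsmul_eq_mul, Pi.smul_apply, smul_eq_mul, mul_one]
    ring
  obtain ⟨i₁, hq₁⟩ := hfind (fun _ => 1) (2*r)
    (by intro h; have := congrFun h a; simp at this) hone
  obtain ⟨i₂, hq₂⟩ := hfind σ 0 (fun h => hσne a (congrFun h a)) hsigma
  -- every spectral projection of x lies in span {1, σ}
  have hstep : ∀ j, ∃ α β : ℝ, f j *ᵥ x = α • (fun _ => (1:ℝ)) + β • σ := by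
    intro j
    by_cases hj0 : j ≠ 0 ∧ j ≠ Fin.last d
    · exact ⟨0, 0, by rw [hcon j hj0.1 hj0.2]; simp⟩
    set y := f j *ᵥ x with hy
    have hQy : Q *ᵥ y = q j • y := by
      rw [hy, mulVec_mulVec, hQf j, smul_mulVec]
    by_cases hy0 : y = 0
    · exact ⟨0, 0, by rw [hy0]; simp⟩
    have hyy : 0 < y ⬝ᵥ y := by
      have h1 : y ⬝ᵥ y ≠ 0 := fun h => hy0 (dotProduct_self_eq_zero.mp h)
      have h2 : 0 ≤ y ⬝ᵥ y := Finset.sum_nonneg fun i _ => mul_self_nonneg _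
      exact h2.lt_of_ne (Ne.symm h1)
    have hqyQ : y ⬝ᵥ (Q *ᵥ y) = q j * (y ⬝ᵥ y) := by
      rw [hQy, dotProduct_smul, smul_eq_mul]
    have hub : q j ≤ 2*r := by
      have h3 : y ⬝ᵥ (G.lapMatrix ℝ *ᵥ y) = 2*r*(y ⬝ᵥ y) - q j * (y ⬝ᵥ y) := by
        rw [hL, sub_mulVec, dotProduct_sub, smul_mulVec, one_mulVec,
          dotProduct_smul, hqyQ, smul_eq_mul]
      have h4 := hLpsd y
      nlinarith [hyy]
    have hlb : 0 ≤ q j := by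
      have h4 : y ⬝ᵥ (Q *ᵥ y)
          = ((incMat G)ᵀ *ᵥ y) ⬝ᵥ ((incMat G)ᵀ *ᵥ y) := by
        rw [hQdef, ← mulVec_mulVec, dotProduct_comm,
          dotTrans (incMat G) ((incMat G)ᵀ *ᵥ y) y]
      have h5 : 0 ≤ y ⬝ᵥ (Q *ᵥ y) := by
        rw [h4]; exact Finset.sum_nonneg fun i _ => mul_self_nonneg _
      nlinarith [hyy, hqyQ]
    push_neg at hj0
    by_cases hj : j = 0
    · -- top eigenvalue : q j = 2r, y is a multiple of the all-ones vector
      have hge : 2*(r:ℝ) ≤ q j := by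
        rw [hj]
        calc 2*(r:ℝ) = q i₁ := hq₁.symm
          _ ≤ q 0 := hqa.antitone (Fin.zero_le i₁)
      have hqj : q j = 2*r := le_antisymm hub hge
      have hky : G.lapMatrix ℝ *ᵥ y = 0 := by
        rw [hL, sub_mulVec, smul_mulVec, one_mulVec, hQy, hqj, sub_self]
      refine ⟨y a, 0, ?_⟩
      ext v
      have h6 := hLker y hky v
      simp only [Pi.add_apply, Pi.smul_apply, smul_eq_mul]
      rw [h6]
      ring
    · -- bottom eigenvalue : q j = 0, y is a multiple of σ
      have hjlast : j = Fin.last d := hj0 hj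
      have hle : q j ≤ 0 := by
        rw [hjlast]
        calc q (Fin.last d) ≤ q i₂ := hqa.antitone (Fin.le_last i₂)
          _ = 0 := hq₂
      have hqj : q j = 0 := le_antisymm hle hlb
      have hQy0 : Q *ᵥ y = 0 := by rw [hQy, hqj, zero_smul]
      set z : V → ℝ := fun v => σ v * y v with hz
      have hkz : G.lapMatrix ℝ *ᵥ z = 0 := by
        ext v
        rw [SimpleGraph.lapMatrix_mulVec_apply]
        have hd : (G.degree v : ℝ) = r := by rw [hreg v]
        have hsum : ∑ u ∈ G.neighborFinset v, z u
            = -σ v * ∑ u ∈ G.neighborFinset v, y u := by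
          rw [Finset.mul_sum]
          apply Finset.sum_congr rfl
          intro u hu
          have := hσadj ((G.mem_neighborFinset v u).mp hu)
          rw [hz]
          simp only
          rw [this]
        have hQv : (r:ℝ) * y v + ∑ u ∈ G.neighborFinset v, y u = 0 := by
          have h7 := congrFun hQy0 v
          rw [hQmv] at h7
          exact h7
        have hsum' : ∑ u ∈ G.neighborFinset v, y u = -((r:ℝ) * y v) := by linarith
        rw [hsum, hsum', hd, hz]
        simp only [Pi.zero_apply]
        ring
      have hzc := hLker z hkz
      refine ⟨0, σ a * y a, ?_⟩
      ext v
      simp only [Pi.add_apply, Pi.smul_apply, smul_eq_mul]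
      have h6 : y v = σ v * z v := by
        simp only [hz]
        rw [← mul_assoc, hσ2, one_mul]
      rw [h6, hzc v]
      simp only [hz]
      ring
  -- assemble : x lies in span {1, σ}
  choose α β hαβ using hstep
  have hxe : x = (∑ j, α j) • (fun _ => (1:ℝ)) + (∑ j, β j) • σ := by
    rw [← hsum_mv x, Finset.sum_congr rfl (fun j _ => hαβ j),
      Finset.sum_add_distrib, ← Finset.sum_smul, ← Finset.sum_smul]
  -- find a third vertex
  have hbmem : b ∈ G.neighborFinset a := (G.mem_neighborFinset a b).mpr hab
  have hcard : 1 < (G.neighborFinset a).card := by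
    have : (G.neighborFinset a).card = r := hreg a
    omega
  obtain ⟨c, hcmem, hcb⟩ := Finset.exists_mem_ne hcard b
  have hac : G.Adj a c := (G.mem_neighborFinset a c).mp hcmem
  have hca : c ≠ a := fun h => G.irrefl (h ▸ hac)
  have hxb : x b = 1 := by simp [hxdef, incMat]
  have hxc : x c = 0 := by
    simp only [hxdef, incMat, Matrix.of_apply]
    rw [if_neg]
    rw [Sym2.mem_iff]
    push_neg
    exact ⟨hca, hcb⟩
  have hσbc : σ b = σ c := by rw [hσadj hab, hσadj hac]
  have h7 := congrFun hxe b
  have h8 := congrFun hxe c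
  simp only [Pi.add_apply, Pi.smul_apply, smul_eq_mul] at h7 h8
  rw [hxb] at h7
  rw [hxc] at h8
  rw [hσbc] at h7
  linarith
end

section
/- Let G be an r-regular connected finite simple graph on n ≥ 2 vertices with signless Laplacian spectral decomposition q_0 > q_1 > … > q_d with projections f_0, …, f_d, and let u ∈ V be a vertex such that every eigenvalue q_i with f_i·e_u ≠ 0 is an integer. Then the signless Laplacian M of the Q-graph Q(G) admits no perfect state transfer between u (viewed as an index in the V-block of V ⊕ E) and any other index: there exist no w ∈ V ⊕ E with w ≠ u, no t ∈ ℝ, and no λ ∈ ℂ with |λ| = 1 such that exp(−i·t·M)·e_u = λ·e_w. -/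
open Matrix

set_option linter.unusedSectionVars false
set_option linter.unreachableTactic false
set_option linter.unusedTactic false
set_option maxHeartbeats 1000000

section Aux

/-- exp of a matrix acting on an eigenvector. -/
lemma exp_mulVec_eigen {n : Type*} [Fintype n] [DecidableEq n]
    (N : Matrix n n ℂ) (v : n → ℂ) (c : ℂ) (h : N *ᵥ v = c • v) :
    NormedSpace.exp N *ᵥ v = Complex.exp c • v := by
  letI : SeminormedRing (Matrix n n ℂ) := Matrix.linftyOpSemiNormedRing
  letI : NormedRing (Matrix n n ℂ) := Matrix.linftyOpNormedRing
  letI : NormedAlgebra ℂ (Matrix n n ℂ) := Matrix.linftyOpNormedAlgebra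
  have hpow : ∀ k : ℕ, N ^ k *ᵥ v = c ^ k • v := by
    intro k
    induction k with
    | zero => simp
    | succ k ih =>
      rw [pow_succ', pow_succ', ← mulVec_mulVec, ih, mulVec_smul, h, smul_smul, mul_comm]
  have hsum : Summable fun k : ℕ => ((Nat.factorial k : ℂ))⁻¹ • N ^ k :=
    NormedSpace.expSeries_summable' (𝕂 := ℂ) N
  have hc : Summable fun k : ℕ => (Nat.factorial k : ℂ)⁻¹ * c ^ k := by
    simpa [smul_eq_mul] using NormedSpace.expSeries_summable' (𝕂 := ℂ) (𝔸 := ℂ) c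
  let L : Matrix n n ℂ →ₗ[ℂ] (n → ℂ) :=
    { toFun := fun A => A *ᵥ v
      map_add' := fun A B => add_mulVec A B v
      map_smul' := fun a A => smul_mulVec a A v }
  have hmt := (LinearMap.toContinuousLinearMap L).map_tsum hsum
  rw [NormedSpace.exp_eq_tsum ℂ]
  calc (∑' k : ℕ, (Nat.factorial k : ℂ)⁻¹ • N ^ k) *ᵥ v
      = L (∑' k : ℕ, (Nat.factorial k : ℂ)⁻¹ • N ^ k) := rfl
    _ = ∑' k : ℕ, L ((Nat.factorial k : ℂ)⁻¹ • N ^ k) := hmt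
    _ = ∑' k : ℕ, ((Nat.factorial k : ℂ)⁻¹ * c ^ k) • v := by
        refine tsum_congr fun k => ?_
        show ((Nat.factorial k : ℂ)⁻¹ • N ^ k) *ᵥ v = _
        rw [smul_mulVec, hpow, smul_smul]
    _ = (∑' k : ℕ, (Nat.factorial k : ℂ)⁻¹ * c ^ k) • v := hc.tsum_smul_const v
    _ = Complex.exp c • v := by
        rw [Complex.exp_eq_exp_ℂ, NormedSpace.exp_eq_tsum ℂ]
        simp [smul_eq_mul]

/-- The basic relation that perfect state transfer imposes on every real eigenvector. -/
lemma pst_rel {n : Type*} [Fintype n] [DecidableEq n] (M : Matrix n n ℝ) (hM : M.IsSymm)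
    (t : ℝ) (l : ℂ) (uu ww : n)
    (h : NormedSpace.exp ((-(Complex.I * (t:ℂ))) • M.map Complex.ofReal) *ᵥ
        (Pi.single uu 1 : n → ℂ) = l • (Pi.single ww 1 : n → ℂ))
    (v : n → ℝ) (θ : ℝ) (hv : M *ᵥ v = θ • v) :
    Complex.exp (-(Complex.I * t * θ)) * (v uu : ℂ) = l * (v ww : ℂ) := by
  set N : Matrix n n ℂ := (-(Complex.I * (t:ℂ))) • M.map Complex.ofReal with hN
  set vc : n → ℂ := fun i => (v i : ℂ) with hvc
  have hMv : (M.map Complex.ofReal) *ᵥ vc = (θ:ℂ) • vc := by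
    funext i
    have h1 := congrFun hv i
    simp only [mulVec, dotProduct, Pi.smul_apply, smul_eq_mul] at h1
    simp only [mulVec, dotProduct, map_apply, Pi.smul_apply, smul_eq_mul, hvc]
    rw [show ∑ j, ((M i j : ℂ)) * (v j : ℂ) = ((∑ j, M i j * v j : ℝ) : ℂ) by push_cast; rfl, h1]
    push_cast; ring
  have hNv : N *ᵥ vc = (-(Complex.I * t * θ)) • vc := by
    rw [hN, smul_mulVec, hMv, smul_smul]
    congr 1; ring
  have hexp : NormedSpace.exp N *ᵥ vc = Complex.exp (-(Complex.I * t * θ)) • vc :=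
    exp_mulVec_eigen N vc _ hNv
  have hNs : (NormedSpace.exp N)ᵀ = NormedSpace.exp N := by
    rw [← Matrix.exp_transpose]
    congr 1
    rw [hN, transpose_smul, ← transpose_map, hM.eq]
  have key := congrArg (fun z => vc ⬝ᵥ z) h
  beta_reduce at key
  rw [dotProduct_mulVec, ← mulVec_transpose, hNs, hexp] at key
  simp only [smul_dotProduct, dotProduct_smul, smul_eq_mul] at key
  simpa [dotProduct, Pi.single_apply, mul_ite, Finset.sum_ite_eq'] using key

/-- Two eigenvector relations force the eigenvalue difference to be commensurable with π. -/
lemma phase_diff (t : ℝ) (l : ℂ) (hl : ‖l‖ = 1)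
    (θ1 θ2 a1 b1 a2 b2 : ℝ) (ha1 : a1 ≠ 0) (ha2 : a2 ≠ 0)
    (h1 : Complex.exp (-(Complex.I * t * θ1)) * (a1:ℂ) = l * (b1:ℂ))
    (h2 : Complex.exp (-(Complex.I * t * θ2)) * (a2:ℂ) = l * (b2:ℂ)) :
    ∃ m : ℤ, t * (θ1 - θ2) = m * Real.pi := by
  have habs1 : |a1| = |b1| := by
    have := congrArg (‖·‖) h1
    simpa [Complex.norm_exp, hl, Complex.norm_real] using this
  have habs2 : |a2| = |b2| := by
    have := congrArg (‖·‖) h2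
    simpa [Complex.norm_exp, hl, Complex.norm_real] using this
  have hb2 : b2 ≠ 0 := fun hb => ha2 (by simpa [hb] using habs2)
  have hcross : Complex.exp (-(Complex.I * t * θ1)) * (a1 * b2 : ℝ)
      = Complex.exp (-(Complex.I * t * θ2)) * (a2 * b1 : ℝ) := by
    push_cast
    calc Complex.exp (-(Complex.I * t * θ1)) * ((a1:ℂ) * b2)
        = (Complex.exp (-(Complex.I * t * θ1)) * a1) * b2 := by ring
      _ = (l * b1) * b2 := by rw [h1]
      _ = (l * b2) * b1 := by ring
      _ = (Complex.exp (-(Complex.I * t * θ2)) * a2) * b1 := by rw [h2]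
      _ = Complex.exp (-(Complex.I * t * θ2)) * ((a2:ℂ) * b1) := by ring
  have hsq : ((a1 * b2 : ℝ) : ℂ)^2 = ((a2 * b1 : ℝ) : ℂ)^2 := by
    have : (a1 * b2)^2 = (a2 * b1)^2 := by
      have : |a1 * b2| = |a2 * b1| := by rw [abs_mul, abs_mul, habs1, habs2, mul_comm]
      nlinarith [this, abs_nonneg (a1*b2), _root_.sq_abs (a1*b2), _root_.sq_abs (a2*b1)]
    push_cast
    exact_mod_cast congrArg (fun x : ℝ => (x:ℂ)) this
  have hcross2 : Complex.exp (-(Complex.I * t * θ1))^2 * ((a1 * b2 : ℝ):ℂ)^2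
      = Complex.exp (-(Complex.I * t * θ2))^2 * ((a1 * b2 : ℝ):ℂ)^2 := by
    calc Complex.exp (-(Complex.I * t * θ1))^2 * ((a1 * b2 : ℝ):ℂ)^2
        = (Complex.exp (-(Complex.I * t * θ1)) * ((a1 * b2 : ℝ):ℂ))^2 := (mul_pow _ _ _).symm
      _ = (Complex.exp (-(Complex.I * t * θ2)) * ((a2 * b1 : ℝ):ℂ))^2 := by rw [hcross]
      _ = Complex.exp (-(Complex.I * t * θ2))^2 * ((a2 * b1 : ℝ):ℂ)^2 := mul_pow _ _ _
      _ = Complex.exp (-(Complex.I * t * θ2))^2 * ((a1 * b2 : ℝ):ℂ)^2 := by rw [hsq]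
  have hne : ((a1 * b2 : ℝ):ℂ)^2 ≠ 0 := by
    simp [pow_eq_zero_iff, ha1, hb2]
  have hexp1 : Complex.exp (-(Complex.I * t * θ1))^2 = Complex.exp (-(Complex.I * t * θ2))^2 :=
    mul_right_cancel₀ hne hcross2
  rw [← Complex.exp_nat_mul, ← Complex.exp_nat_mul, Complex.exp_eq_exp_iff_exists_int] at hexp1
  obtain ⟨m, hm⟩ := hexp1
  refine ⟨-m, ?_⟩
  have h0 : (2:ℂ) * -(Complex.I * t * θ1) - 2 * -(Complex.I * t * θ2)
      = m * (2 * Real.pi * Complex.I) := by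
    linear_combination hm
  have h2' : (Complex.I : ℂ) * (2 * (t * (θ1 - θ2) - (-m) * Real.pi)) = 0 := by
    push_cast at h0 ⊢
    linear_combination -h0
  rcases mul_eq_zero.1 h2' with h | h
  · exact absurd h Complex.I_ne_zero
  · have : ((2:ℝ) * (t * (θ1 - θ2) - (-m) * Real.pi) : ℝ) = 0 := by exact_mod_cast h
    push_cast
    linarith [this]

lemma sqrt_irr (r : ℕ) (hr : 2 ≤ r) :
    Irrational (Real.sqrt (9*(r:ℝ)^2 - 4*r + 4)) := by
  have hrR : (2:ℝ) ≤ (r:ℝ) := by exact_mod_cast hr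
  have hpos : (0:ℝ) ≤ 9*(r:ℝ)^2 - 4*r + 4 := by nlinarith
  refine irrational_nrt_of_notint_nrt 2 (9*(r:ℤ)^2 - 4*r + 4) ?_ ?_ (by norm_num)
  · rw [show ((9*(r:ℤ)^2 - 4*r + 4 : ℤ) : ℝ) = 9*(r:ℝ)^2 - 4*r + 4 by push_cast; ring]
    rw [sq, Real.mul_self_sqrt hpos]
  · rintro ⟨y, hy⟩
    have hy0 : (0:ℝ) ≤ (y:ℝ) := hy ▸ Real.sqrt_nonneg _
    have hy0' : 0 ≤ y := by exact_mod_cast hy0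
    have hysq : (y:ℝ)^2 = 9*(r:ℝ)^2 - 4*r + 4 := by
      rw [← hy, sq, Real.mul_self_sqrt hpos]
    have hysqZ : y^2 = 9*(r:ℤ)^2 - 4*(r:ℤ) + 4 := by
      have : ((y^2 : ℤ) : ℝ) = ((9*(r:ℤ)^2 - 4*(r:ℤ) + 4 : ℤ) : ℝ) := by push_cast; linarith [hysq]
      exact_mod_cast this
    have hrZ : (2:ℤ) ≤ (r:ℤ) := by exact_mod_cast hr
    rcases le_or_gt y (3*(r:ℤ) - 1) with h | h
    · nlinarith
    · have : 3*(r:ℤ) ≤ y := by linarith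
      nlinarith

lemma final_contra (r : ℕ) (hr : 2 ≤ r) (t : ℝ) (ht : t ≠ 0) (c : ℤ) (hc : c ≠ 0)
    (a m : ℤ) (h1 : t * Real.sqrt (9*(r:ℝ)^2 - 4*r + 4) = a * Real.pi)
    (h2 : t * c = m * Real.pi) : False := by
  have hm : m ≠ 0 := by
    intro hm0
    rw [hm0] at h2
    simp at h2
    rcases h2 with h | h
    · exact ht h
    · exact hc (by exact_mod_cast h)
  have key : Real.sqrt (9*(r:ℝ)^2 - 4*r + 4) * m = a * c := by
    have h3 : t * (Real.sqrt (9*(r:ℝ)^2 - 4*r + 4) * m - a * c) = 0 := by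
      have e1 : (t * Real.sqrt (9*(r:ℝ)^2 - 4*r + 4)) * m = a * Real.pi * m := by rw [h1]
      have e2 : (t * c) * a = m * Real.pi * a := by rw [h2]
      nlinarith [e1, e2]
    rcases mul_eq_zero.mp h3 with h | h
    · exact absurd h ht
    · linarith
  have hmR : (m:ℝ) ≠ 0 := by exact_mod_cast hm
  have : Real.sqrt (9*(r:ℝ)^2 - 4*r + 4) = ((a*c/m : ℚ) : ℝ) := by
    push_cast
    rw [eq_div_iff hmR]
    linarith [key]
  exact sqrt_irr r hr ⟨(a*c/m : ℚ), this.symm⟩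

variable {V : Type*} [Fintype V] [DecidableEq V] (G : SimpleGraph V) [DecidableRel G.Adj]

lemma incMat_nonneg (v : V) (e : G.edgeSet) : 0 ≤ incMat G v e := by
  unfold incMat; dsimp; split <;> norm_num

lemma sum_col_incMat (e : G.edgeSet) : ∑ v, incMat G v e = 2 := by
  obtain ⟨e, he⟩ := e
  induction e with
  | _ a b =>
    have hadj : G.Adj a b := G.mem_edgeSet.mp he
    have hab : a ≠ b := G.ne_of_adj hadj
    unfold incMat
    simp only [Matrix.of_apply, Sym2.mem_iff]
    have : ∀ v : V, (if v = a ∨ v = b then (1:ℝ) else 0)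
        = (if v = a then (1:ℝ) else 0) + (if v = b then (1:ℝ) else 0) := by
      intro v
      by_cases h1 : v = a <;> by_cases h2 : v = b <;> simp_all
    rw [Finset.sum_congr rfl fun v _ => this v, Finset.sum_add_distrib]
    simp [Finset.sum_ite_eq', hab]
    norm_num

lemma sum_row_incMat (v : V) : ∑ e : G.edgeSet, incMat G v e = (G.degree v : ℝ) := by
  unfold incMat
  simp only [Matrix.of_apply]
  rw [Finset.sum_boole]
  have hcard : (Finset.univ.filter fun e : G.edgeSet => v ∈ (e : Sym2 V)).card
      = (G.incidenceFinset v).card := by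
    refine Finset.card_bij (fun e _ => (e : Sym2 V)) ?_ ?_ ?_
    · rintro ⟨e, he⟩ hmem
      rw [SimpleGraph.mem_incidenceFinset]
      exact ⟨he, by simpa using (Finset.mem_filter.mp hmem).2⟩
    · rintro ⟨e, he⟩ _ ⟨e', he'⟩ _ h
      simpa using Subtype.ext h
    · intro e he
      rw [SimpleGraph.mem_incidenceFinset] at he
      exact ⟨⟨e, he.1⟩, Finset.mem_filter.mpr ⟨Finset.mem_univ _, he.2⟩, rfl⟩
  rw [hcard, SimpleGraph.card_incidenceFinset_eq_degree]

lemma Q_ones {r : ℕ} (hreg : G.IsRegularOfDegree r) :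
    (incMat G * (incMat G)ᵀ) *ᵥ (fun _ => (1:ℝ)) = (2*(r:ℝ)) • ((fun _ => 1 : V → ℝ)) := by
  funext v
  simp only [mulVec, dotProduct, mul_apply, transpose_apply, mul_one, Pi.smul_apply,
    smul_eq_mul]
  rw [Finset.sum_comm]
  calc ∑ e : G.edgeSet, ∑ w, incMat G v e * incMat G w e
      = ∑ e : G.edgeSet, incMat G v e * 2 := by
        refine Finset.sum_congr rfl fun e _ => ?_
        rw [← Finset.mul_sum, sum_col_incMat]
    _ = 2 * (G.degree v : ℝ) := by
        rw [← Finset.sum_mul, sum_row_incMat]; ring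
    _ = 2*(r:ℝ) * 1 := by rw [hreg v]; ring
    _ = 2*(r:ℝ) := by ring

lemma Q_entry_nonneg (v w : V) : 0 ≤ (incMat G * (incMat G)ᵀ) v w := by
  rw [mul_apply]
  exact Finset.sum_nonneg fun e _ =>
    mul_nonneg (incMat_nonneg G v e) (incMat_nonneg G w e)

lemma Q_adj_pos {v w : V} (h : G.Adj v w) : 0 < (incMat G * (incMat G)ᵀ) v w := by
  rw [mul_apply]
  have he : s(v,w) ∈ G.edgeSet := G.mem_edgeSet.mpr h
  refine Finset.sum_pos' (fun e _ => mul_nonneg (incMat_nonneg G v e) (incMat_nonneg G w e))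
    ⟨⟨s(v,w), he⟩, Finset.mem_univ _, ?_⟩
  unfold incMat
  simp [transpose_apply]

lemma QQ_isSymm (r : ℕ) : (QQ G r).IsSymm := by
  unfold Matrix.IsSymm QQ
  rw [fromBlocks_transpose, transpose_smul, transpose_one, transpose_transpose,
    transpose_add, transpose_smul, transpose_one, transpose_mul, transpose_transpose]

lemma QQ_mulVec_elim {r : ℕ} (x : V → ℝ) (y : G.edgeSet → ℝ) :
    QQ G r *ᵥ Sum.elim x y
      = Sum.elim ((r:ℝ) • x + incMat G *ᵥ y)
        ((incMat G)ᵀ *ᵥ x + ((2*(r:ℝ)-2) • y + ((incMat G)ᵀ * incMat G) *ᵥ y)) := by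
  unfold QQ
  have hD : ((2*(r:ℝ)-2) • 1 + (incMat G)ᵀ * incMat G) *ᵥ y
      = (2*(r:ℝ)-2) • y + ((incMat G)ᵀ * incMat G) *ᵥ y := by
    rw [add_mulVec, smul_mulVec, one_mulVec]
  rw [fromBlocks_mulVec, Sum.elim_comp_inl, Sum.elim_comp_inr, hD, smul_mulVec,
    one_mulVec]

lemma QQ_eig_pos {r : ℕ} (q α : ℝ) (x : V → ℝ)
    (hx : (incMat G * (incMat G)ᵀ) *ᵥ x = q • x)
    (hα : q * α^2 - (q + (r:ℝ) - 2) * α - 1 = 0) :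
    QQ G r *ᵥ Sum.elim x (α • ((incMat G)ᵀ *ᵥ x))
      = ((r:ℝ) + α * q) • Sum.elim x (α • ((incMat G)ᵀ *ᵥ x)) := by
  have hRRx : incMat G *ᵥ ((incMat G)ᵀ *ᵥ x) = q • x := by
    rw [mulVec_mulVec, hx]
  rw [QQ_mulVec_elim]
  have htop : (r:ℝ) • x + incMat G *ᵥ (α • ((incMat G)ᵀ *ᵥ x)) = ((r:ℝ) + α * q) • x := by
    rw [mulVec_smul, hRRx, smul_smul, add_smul]
  have hRtQ : ((incMat G)ᵀ * incMat G) *ᵥ (α • ((incMat G)ᵀ *ᵥ x))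
      = α • (q • ((incMat G)ᵀ *ᵥ x)) := by
    rw [mulVec_smul]
    congr 1
    rw [mulVec_mulVec, Matrix.mul_assoc, ← mulVec_mulVec, hx, mulVec_smul]
  have hbot : (incMat G)ᵀ *ᵥ x + ((2*(r:ℝ)-2) • (α • ((incMat G)ᵀ *ᵥ x))
      + ((incMat G)ᵀ * incMat G) *ᵥ (α • ((incMat G)ᵀ *ᵥ x)))
      = ((r:ℝ) + α * q) • (α • ((incMat G)ᵀ *ᵥ x)) := by
    rw [hRtQ, ← add_assoc]
    simp only [smul_smul]
    rw [show ((r:ℝ) + α * q) * α = 1 + (2*(r:ℝ)-2) * α + α * q by nlinarith [hα]]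
    rw [add_smul, add_smul, one_smul]
  rw [htop, hbot]
  funext z
  cases z <;> simp

lemma QQ_eig_zero {r : ℕ} (x : V → ℝ)
    (hx : (incMat G * (incMat G)ᵀ) *ᵥ x = (0:ℝ) • x) :
    QQ G r *ᵥ Sum.elim x 0 = (r:ℝ) • Sum.elim x 0 := by
  have hRx : (incMat G)ᵀ *ᵥ x = 0 := by
    have h0 : ((incMat G)ᵀ *ᵥ x) ⬝ᵥ ((incMat G)ᵀ *ᵥ x) = 0 := by
      rw [dotProduct_mulVec, vecMul_transpose, mulVec_mulVec, hx]
      simp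
    exact dotProduct_self_eq_zero.mp h0
  rw [QQ_mulVec_elim, hRx]
  simp only [mulVec_zero, smul_zero, add_zero, zero_add]
  funext z
  cases z <;> simp

lemma one_regular_structure (hreg : G.IsRegularOfDegree 1) (hconn : G.Connected) (u : V) :
    ∃ v0 : V, G.Adj u v0 ∧ (∀ z : V, z = u ∨ z = v0) ∧
      (∀ e : G.edgeSet, (e : Sym2 V) = s(u, v0)) := by
  have huniq : ∀ a : V, ∃ b : V, G.neighborFinset a = {b} := by
    intro a
    exact Finset.card_eq_one.mp (by rw [SimpleGraph.card_neighborFinset_eq_degree, hreg a])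
  obtain ⟨v0, hv0⟩ := huniq u
  have hadj : G.Adj u v0 := by
    rw [← SimpleGraph.mem_neighborFinset, hv0]; exact Finset.mem_singleton_self _
  have hstep : ∀ a b : V, G.Adj a b → (a = u ∨ a = v0) → (b = u ∨ b = v0) := by
    rintro a b hab (rfl | rfl)
    · right
      have : b ∈ G.neighborFinset a := (SimpleGraph.mem_neighborFinset _ _ _).mpr hab
      rw [hv0] at this
      exact Finset.mem_singleton.mp this
    · left
      obtain ⟨c, hc⟩ := huniq a
      have hb : b ∈ G.neighborFinset a := (SimpleGraph.mem_neighborFinset _ _ _).mpr hab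
      have hu : u ∈ G.neighborFinset a := (SimpleGraph.mem_neighborFinset _ _ _).mpr hadj.symm
      rw [hc, Finset.mem_singleton] at hb hu
      rw [hb, hu]
  have aux : ∀ a z : V, G.Walk a z → (a = u ∨ a = v0) → (z = u ∨ z = v0) := by
    intro a z p
    induction p with
    | nil => exact id
    | cons hab _ ih => exact fun ha => ih (hstep _ _ hab ha)
  have hV : ∀ z : V, z = u ∨ z = v0 := by
    intro z
    obtain ⟨p⟩ := (hconn.preconnected u z)
    exact aux u z p (Or.inl rfl)
  refine ⟨v0, hadj, hV, ?_⟩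
  rintro ⟨e, he⟩
  induction e with
  | _ a b =>
    have hab : G.Adj a b := G.mem_edgeSet.mp he
    have hne : a ≠ b := G.ne_of_adj hab
    simp only
    rcases hV a with rfl | rfl <;> rcases hV b with rfl | rfl
    · exact absurd rfl hne
    · rfl
    · exact Sym2.eq_swap
    · exact absurd rfl hne

lemma one_regular_eigen (hreg : G.IsRegularOfDegree 1) (u v0 : V) (hadj : G.Adj u v0)
    (hE : ∀ e : G.edgeSet, (e : Sym2 V) = s(u, v0)) :
    (QQ G 1 *ᵥ Sum.elim (fun _ => 1) (fun _ => 2)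
        = (3:ℝ) • Sum.elim (fun _ => (1:ℝ)) (fun _ => (2:ℝ))) ∧
    (QQ G 1 *ᵥ Sum.elim (fun z => if z = u then 1 else -1) 0
        = (1:ℝ) • Sum.elim (fun z => if z = u then (1:ℝ) else -1) (0 : G.edgeSet → ℝ)) ∧
    (QQ G 1 *ᵥ Sum.elim (fun _ => 1) (fun _ => -1)
        = (0:ℝ) • Sum.elim (fun _ => (1:ℝ)) (fun _ => (-1:ℝ))) := by
  have hne : u ≠ v0 := G.ne_of_adj hadj
  have hRcol : ∀ (e : G.edgeSet) (c : ℝ), ((incMat G)ᵀ *ᵥ (fun _ => c)) e = 2 * c := by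
    intro e c
    simp only [mulVec, dotProduct, transpose_apply]
    rw [← Finset.sum_mul, sum_col_incMat]
  have hRrow : ∀ (v : V) (c : ℝ), (incMat G *ᵥ (fun _ => c)) v = c := by
    intro v c
    simp only [mulVec, dotProduct]
    rw [← Finset.sum_mul, sum_row_incMat, hreg v]
    norm_num
  have hRR : ∀ (e : G.edgeSet) (c : ℝ), (((incMat G)ᵀ * incMat G) *ᵥ (fun _ => c)) e = 2 * c := by
    intro e c
    rw [← mulVec_mulVec]
    have : (incMat G *ᵥ (fun _ => c)) = fun _ : V => c := funext fun v => hRrow v c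
    rw [this, hRcol]
  have hx2 : ∀ e : G.edgeSet, ((incMat G)ᵀ *ᵥ (fun z => if z = u then (1:ℝ) else -1)) e = 0 := by
    intro e
    simp only [mulVec, dotProduct, transpose_apply]
    unfold incMat
    simp only [Matrix.of_apply, hE e, Sym2.mem_iff]
    have : ∀ v : V, (if v = u ∨ v = v0 then (1:ℝ) else 0) * (if v = u then (1:ℝ) else -1)
        = (if v = u then (1:ℝ) else 0) + (if v = v0 then (-1:ℝ) else 0) := by
      intro v
      by_cases h1 : v = u <;> by_cases h2 : v = v0 <;> simp_all <;> simp [h1, h2]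
    rw [Finset.sum_congr rfl fun v _ => this v, Finset.sum_add_distrib]
    simp [Finset.sum_ite_eq']
  refine ⟨?_, ?_, ?_⟩
  · rw [QQ_mulVec_elim]
    funext z
    cases z with
    | inl v =>
      simp only [Sum.elim_inl, Pi.add_apply, Pi.smul_apply, smul_eq_mul]
      rw [show (incMat G *ᵥ fun _ => (2:ℝ)) v = 2 from hRrow v 2]
      norm_num
    | inr e =>
      simp only [Sum.elim_inr, Pi.add_apply, Pi.smul_apply, smul_eq_mul]
      rw [hRcol e 1, hRR e 2]
      norm_num
  · rw [QQ_mulVec_elim]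
    funext z
    cases z with
    | inl v =>
      simp only [Sum.elim_inl, Pi.add_apply, Pi.smul_apply, smul_eq_mul, mulVec_zero]
      norm_num
    | inr e =>
      simp only [Sum.elim_inr, Pi.add_apply, Pi.smul_apply, smul_eq_mul, mulVec_zero]
      rw [hx2 e]
      norm_num
  · rw [QQ_mulVec_elim]
    funext z
    cases z with
    | inl v =>
      simp only [Sum.elim_inl, Pi.add_apply, Pi.smul_apply, smul_eq_mul]
      rw [show (incMat G *ᵥ fun _ => (-1:ℝ)) v = -1 from hRrow v (-1)]
      norm_num
    | inr e =>
      simp only [Sum.elim_inr, Pi.add_apply, Pi.smul_apply, smul_eq_mul]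
      rw [hRcol e 1, hRR e (-1)]
      norm_num

lemma sum_mulVec' {ι : Type*} (s : Finset ι) (A : ι → Matrix V V ℝ) (x : V → ℝ) :
    (∑ i ∈ s, A i) *ᵥ x = ∑ i ∈ s, A i *ᵥ x := by
  funext v
  simp only [mulVec, dotProduct, Finset.sum_apply, Matrix.sum_apply, Finset.sum_mul]
  rw [Finset.sum_comm]

end Aux

theorem stmt13 {V : Type*} [Fintype V] [DecidableEq V] (G : SimpleGraph V)
    [DecidableRel G.Adj] (r : ℕ) (hreg : G.IsRegularOfDegree r)
    (hconn : G.Connected) (hn : 2 ≤ Fintype.card V)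
    (d : ℕ) (q : Fin (d + 1) → ℝ) (f : Fin (d + 1) → Matrix V V ℝ)
    (hqa : StrictAnti q)
    (hfs : ∀ i, (f i).IsSymm) (hfi : ∀ i, f i * f i = f i)
    (hfo : ∀ i j, i ≠ j → f i * f j = 0) (hfsum : ∑ i, f i = 1)
    (hQ : incMat G * (incMat G)ᵀ = ∑ i, q i • f i)
    (u : V)
    (hsupp : ∀ i, f i *ᵥ (Pi.single u 1 : V → ℝ) ≠ 0 → ∃ k : ℤ, q i = (k : ℝ)) :
    ¬ ∃ w : V ⊕ G.edgeSet, w ≠ Sum.inl u ∧ ∃ (t : ℝ) (l : ℂ), ‖l‖ = 1 ∧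
      NormedSpace.exp ((-(Complex.I * (t : ℂ))) • (QQ G r).map Complex.ofReal) *ᵥ
          (Pi.single (Sum.inl u) 1 : V ⊕ G.edgeSet → ℂ)
        = l • (Pi.single w 1 : V ⊕ G.edgeSet → ℂ) := by
  rintro ⟨w, hw, t, l, hl, hpst⟩
  classical
  -- t ≠ 0
  have ht : t ≠ 0 := by
    rintro rfl
    rw [show (-(Complex.I * ((0:ℝ):ℂ))) • (QQ G r).map Complex.ofReal = 0 by
      push_cast; simp] at hpst
    rw [NormedSpace.exp_zero, one_mulVec] at hpst
    have h1 := congrFun hpst (Sum.inl u)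
    rw [Pi.single_eq_same, Pi.smul_apply, Pi.single_eq_of_ne (Ne.symm hw)] at h1
    simp at h1
  have hsymm := QQ_isSymm G r
  have rel : ∀ (v : V ⊕ G.edgeSet → ℝ) (θ : ℝ), QQ G r *ᵥ v = θ • v →
      Complex.exp (-(Complex.I * t * θ)) * (v (Sum.inl u) : ℂ) = l * (v w : ℂ) :=
    fun v θ hv => pst_rel (QQ G r) hsymm t l (Sum.inl u) w hpst v θ hv
  have hphase : ∀ (θ1 θ2 : ℝ) (v1 v2 : V ⊕ G.edgeSet → ℝ),
      QQ G r *ᵥ v1 = θ1 • v1 → QQ G r *ᵥ v2 = θ2 • v2 →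
      v1 (Sum.inl u) ≠ 0 → v2 (Sum.inl u) ≠ 0 →
      ∃ m : ℤ, t * (θ1 - θ2) = m * Real.pi := by
    intro θ1 θ2 v1 v2 h1 h2 h1u h2u
    exact phase_diff t l hl θ1 θ2 _ _ _ _ h1u h2u (rel v1 θ1 h1) (rel v2 θ2 h2)
  -- a neighbor of u, and r ≥ 1
  obtain ⟨u1, hu1⟩ : ∃ v, G.Adj u v := by
    obtain ⟨z, hz⟩ := Fintype.exists_ne_of_one_lt_card (by omega) u
    obtain ⟨p⟩ := hconn.preconnected u z
    cases p with
    | nil => exact absurd rfl hz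
    | cons h _ => exact ⟨_, h⟩
  have hr1 : 1 ≤ r := by
    rw [← hreg u]
    exact (G.degree_pos_iff_exists_adj u).mpr ⟨u1, hu1⟩
  rcases eq_or_lt_of_le hr1 with hr1' | hr2
  -- ### case r = 1
  · have hr : r = 1 := hr1'.symm
    subst hr
    obtain ⟨v0, hadj, hV, hE⟩ := one_regular_structure G hreg hconn u
    have hnuv : u ≠ v0 := G.ne_of_adj hadj
    obtain ⟨he3, he1, he0⟩ := one_regular_eigen G hreg u v0 hadj hE
    have r3 := rel _ 3 he3
    have r1 := rel _ 1 he1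
    have r0 := rel _ 0 he0
    simp only [Sum.elim_inl, if_pos rfl] at r3 r1 r0
    cases w with
    | inr e =>
      rw [show (Sum.elim (fun z => if z = u then (1:ℝ) else -1) 0 (Sum.inr e) : ℝ) = 0
        from rfl] at r1
      push_cast at r1
      rw [mul_one, mul_zero] at r1
      exact Complex.exp_ne_zero _ r1
    | inl z =>
      have hz : z = v0 := (hV z).resolve_left (fun h => hw (by rw [h]))
      have hzu : z ≠ u := by rw [hz]; exact Ne.symm hnuv
      rw [show (Sum.elim (fun _ => (1:ℝ)) (fun _ => (2:ℝ)) (Sum.inl z) : ℝ) = 1 from rfl] at r3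
      rw [show (Sum.elim (fun z => if z = u then (1:ℝ) else -1) 0 (Sum.inl z) : ℝ)
        = -1 by simp [hzu]] at r1
      rw [show (Sum.elim (fun _ => (1:ℝ)) (fun _ => (-1:ℝ)) (Sum.inl z) : ℝ) = 1 from rfl] at r0
      push_cast at r3 r1 r0
      rw [mul_one, mul_one] at r3 r0
      rw [mul_one] at r1
      have hl1 : l = 1 := by
        rw [show (-(Complex.I * t * 0) : ℂ) = 0 by ring, Complex.exp_zero] at r0
        exact r0.symm
      rw [hl1] at r3
      rw [hl1, one_mul] at r1
      have hcube : Complex.exp (-(Complex.I * t * 3)) = Complex.exp (-(Complex.I * t * 1))^3 := by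
        rw [← Complex.exp_nat_mul]
        congr 1
        push_cast
        ring
      rw [r3, r1] at hcube
      norm_num at hcube
  -- ### case r ≥ 2
  · have hrr2 : 2 ≤ r := hr2
    have hrR : (2:ℝ) ≤ (r:ℝ) := by exact_mod_cast hrr2
    set eu : V → ℝ := Pi.single u 1 with heu
    set Qm : Matrix V V ℝ := incMat G * (incMat G)ᵀ with hQm
    have hQf : ∀ i, Qm * f i = q i • f i := by
      intro i
      calc Qm * f i = (∑ j, q j • f j) * f i := by rw [hQ]
        _ = ∑ j, (q j • f j) * f i := by rw [Finset.sum_mul]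
        _ = q i • f i := by
            rw [Finset.sum_eq_single i]
            · rw [smul_mul_assoc, hfi i]
            · intro j _ hj
              rw [smul_mul_assoc, hfo j i hj, smul_zero]
            · intro h; exact absurd (Finset.mem_univ i) h
    have hfQ : ∀ i, f i * Qm = q i • f i := by
      intro i
      calc f i * Qm = f i * (∑ j, q j • f j) := by rw [hQ]
        _ = ∑ j, f i * (q j • f j) := by rw [Finset.mul_sum]
        _ = q i • f i := by
            rw [Finset.sum_eq_single i]
            · rw [mul_smul_comm, hfi i]
            · intro j _ hj
              rw [mul_smul_comm, hfo i j (Ne.symm hj), smul_zero]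
            · intro h; exact absurd (Finset.mem_univ i) h
    have hQfv : ∀ (i : Fin (d+1)) (y : V → ℝ), Qm *ᵥ (f i *ᵥ y) = q i • (f i *ᵥ y) := by
      intro i y
      rw [mulVec_mulVec, hQf i, smul_mulVec]
    have hQones : Qm *ᵥ (fun _ => (1:ℝ)) = (2*(r:ℝ)) • ((fun _ => 1 : V → ℝ)) := by
      rw [hQm]; exact Q_ones G hreg
    have hdich : ∀ i, q i = 2*(r:ℝ) ∨ f i *ᵥ (fun _ => (1:ℝ)) = 0 := by
      intro i
      by_cases h : f i *ᵥ (fun _ => (1:ℝ)) = 0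
      · exact Or.inr h
      · left
        have e1 : (f i * Qm) *ᵥ (fun _ => (1:ℝ)) = q i • (f i *ᵥ (fun _ => (1:ℝ))) := by
          rw [hfQ i, smul_mulVec]
        have e2 : (f i * Qm) *ᵥ (fun _ => (1:ℝ)) = (2*(r:ℝ)) • (f i *ᵥ (fun _ => (1:ℝ))) := by
          rw [← mulVec_mulVec, hQones, mulVec_smul]
        have h1 : (q i - 2*(r:ℝ)) • (f i *ᵥ (fun _ => (1:ℝ))) = 0 := by
          rw [sub_smul, ← e1, e2, sub_self]
        rcases smul_eq_zero.mp h1 with h' | h'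
        · exact sub_eq_zero.mp h'
        · exact absurd h' h
    have hones_sum : ∑ i, f i *ᵥ (fun _ => (1:ℝ)) = (fun _ => (1:ℝ)) := by
      rw [← sum_mulVec', hfsum, one_mulVec]
    obtain ⟨i1, hi1ne⟩ : ∃ i, f i *ᵥ (fun _ => (1:ℝ)) ≠ 0 := by
      by_contra hall
      push_neg at hall
      have h0 : (fun _ => (1:ℝ)) = (0 : V → ℝ) := by
        rw [← hones_sum]
        exact Finset.sum_eq_zero fun i _ => hall i
      exact one_ne_zero (congrFun h0 u)
    have hq1 : q i1 = 2*(r:ℝ) := (hdich i1).resolve_right hi1ne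
    have hones_i1 : f i1 *ᵥ (fun _ => (1:ℝ)) = (fun _ => (1:ℝ)) := by
      have hz : ∀ j, j ≠ i1 → f j *ᵥ (fun _ => (1:ℝ)) = 0 := fun j hj =>
        (hdich j).resolve_left fun hqj => hj (hqa.injective (hqj.trans hq1.symm))
      calc f i1 *ᵥ (fun _ => (1:ℝ)) = ∑ j, f j *ᵥ (fun _ => (1:ℝ)) :=
            (Finset.sum_eq_single i1 (fun j _ hj => hz j hj)
              (fun h => absurd (Finset.mem_univ i1) h)).symm
        _ = (fun _ => (1:ℝ)) := hones_sum
    -- positivity of dot products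
    have hdotpos : ∀ y : V → ℝ, y ≠ 0 → 0 < y ⬝ᵥ y := by
      intro y hy
      have hnn : 0 ≤ y ⬝ᵥ y := Finset.sum_nonneg fun j _ => mul_self_nonneg _
      rcases hnn.lt_or_eq with h | h
      · exact h
      · exact absurd (dotProduct_self_eq_zero.mp h.symm) hy
    have hdiag : ∀ i, f i *ᵥ eu ≠ 0 → 0 < (f i *ᵥ eu) u := by
      intro i hne'
      have hself : (f i *ᵥ eu) ⬝ᵥ (f i *ᵥ eu) = (f i *ᵥ eu) u := by
        calc (f i *ᵥ eu) ⬝ᵥ (f i *ᵥ eu)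
            = ((f i *ᵥ eu) ᵥ* f i) ⬝ᵥ eu := dotProduct_mulVec _ _ _
          _ = (f i *ᵥ (f i *ᵥ eu)) ⬝ᵥ eu := by rw [← mulVec_transpose, (hfs i).eq]
          _ = ((f i * f i) *ᵥ eu) ⬝ᵥ eu := by rw [mulVec_mulVec]
          _ = (f i *ᵥ eu) ⬝ᵥ eu := by rw [hfi i]
          _ = (f i *ᵥ eu) u := by rw [heu, dotProduct_single, mul_one]
      rw [← hself]
      exact hdotpos _ hne'
    -- second support index
    obtain ⟨i2, hi2ne, hx2ne⟩ : ∃ i2, i2 ≠ i1 ∧ f i2 *ᵥ eu ≠ 0 := by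
      by_contra hall
      push_neg at hall
      have heu_sum : ∑ i, f i *ᵥ eu = eu := by rw [← sum_mulVec', hfsum, one_mulVec]
      have heq : f i1 *ᵥ eu = eu := by
        calc f i1 *ᵥ eu = ∑ j, f j *ᵥ eu :=
              (Finset.sum_eq_single i1 (fun j _ hj => hall j hj)
                (fun h => absurd (Finset.mem_univ i1) h)).symm
          _ = eu := heu_sum
      have hQeu : Qm *ᵥ eu = q i1 • eu := by
        rw [← heq]
        exact hQfv i1 eu
      have hval := congrFun hQeu u1
      rw [heu] at hval
      rw [mulVec_single] at hval
      simp only [mul_one, Pi.smul_apply, smul_eq_mul] at hval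
      rw [Pi.single_eq_of_ne (G.ne_of_adj hu1.symm), mul_zero] at hval
      simp only [MulOpposite.op_one, one_smul, Matrix.col_apply] at hval
      have hpos : 0 < Qm u1 u := by rw [hQm]; exact Q_adj_pos G hu1.symm
      rw [hval] at hpos
      exact lt_irrefl 0 hpos
    have hx1ne : f i1 *ᵥ eu ≠ 0 := by
      intro h0
      have h1 : (f i1 *ᵥ eu) ⬝ᵥ (fun _ => (1:ℝ)) = 1 := by
        rw [dotProduct_comm, dotProduct_mulVec, ← mulVec_transpose, (hfs i1).eq, hones_i1,
          heu, dotProduct_single, mul_one]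
      rw [h0, zero_dotProduct] at h1
      exact zero_ne_one h1
    set x1 : V → ℝ := f i1 *ᵥ eu with hx1
    set x2 : V → ℝ := f i2 *ᵥ eu with hx2
    have hx1u : 0 < x1 u := hdiag i1 hx1ne
    have hx2u : 0 < x2 u := hdiag i2 hx2ne
    have hQx1 : Qm *ᵥ x1 = (2*(r:ℝ)) • x1 := by rw [hx1, hQfv i1 eu, hq1]
    set s : ℝ := q i2 with hs
    have hQx2 : Qm *ᵥ x2 = s • x2 := hQfv i2 eu
    obtain ⟨k2, hk2⟩ := hsupp i2 hx2ne
    rw [← hs] at hk2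
    -- 0 ≤ s
    have hsnn : 0 ≤ s := by
      have e1 : x2 ⬝ᵥ (Qm *ᵥ x2)
          = ((incMat G)ᵀ *ᵥ x2) ⬝ᵥ ((incMat G)ᵀ *ᵥ x2) := by
        rw [hQm, ← mulVec_mulVec, dotProduct_mulVec, ← mulVec_transpose]
      have e2 : x2 ⬝ᵥ (Qm *ᵥ x2) = s * (x2 ⬝ᵥ x2) := by
        rw [hQx2, dotProduct_smul, smul_eq_mul]
      have e3 : 0 ≤ ((incMat G)ᵀ *ᵥ x2) ⬝ᵥ ((incMat G)ᵀ *ᵥ x2) :=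
        Finset.sum_nonneg fun j _ => mul_self_nonneg _
      have e4 := hdotpos x2 hx2ne
      nlinarith [e1, e2, e3, e4]
    -- s ≤ 2r
    have hsle : s ≤ 2*(r:ℝ) := by
      obtain ⟨v0, _, hmax⟩ := Finset.univ.exists_max_image (fun v => |x2 v|)
        ⟨u, Finset.mem_univ u⟩
      have hv0pos : 0 < |x2 v0| :=
        lt_of_lt_of_le (abs_pos.mpr (ne_of_gt hx2u)) (hmax u (Finset.mem_univ u))
      have hrow : ∑ w', Qm v0 w' = 2*(r:ℝ) := by
        have h1 := congrFun hQones v0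
        simp only [mulVec, dotProduct, mul_one, Pi.smul_apply, smul_eq_mul] at h1
        linarith [h1]
      have heig := congrFun hQx2 v0
      simp only [mulVec, dotProduct, Pi.smul_apply, smul_eq_mul] at heig
      have hub : |s * x2 v0| ≤ 2*(r:ℝ) * |x2 v0| := by
        rw [← heig]
        calc |∑ w', Qm v0 w' * x2 w'| ≤ ∑ w', |Qm v0 w' * x2 w'| :=
              Finset.abs_sum_le_sum_abs _ _
          _ ≤ ∑ w', Qm v0 w' * |x2 v0| := by
              refine Finset.sum_le_sum fun w' _ => ?_
              rw [abs_mul]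
              have h1 : 0 ≤ Qm v0 w' := by rw [hQm]; exact Q_entry_nonneg G v0 w'
              rw [abs_of_nonneg h1]
              exact mul_le_mul_of_nonneg_left (hmax w' (Finset.mem_univ w')) h1
          _ = 2*(r:ℝ) * |x2 v0| := by rw [← Finset.sum_mul, hrow]
      rw [abs_mul] at hub
      have habs : |s| ≤ 2*(r:ℝ) := le_of_mul_le_mul_right hub hv0pos
      exact (le_abs_self s).trans habs
    have hslt : s < 2*(r:ℝ) :=
      lt_of_le_of_ne hsle fun h => hi2ne (hqa.injective (h.trans hq1.symm))
    -- eigen-pair maker for positive eigenvalues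
    have mk : ∀ (q' ε : ℝ), ε^2 = 1 → 0 < q' → ∀ x : V → ℝ,
        Qm *ᵥ x = q' • x → x u ≠ 0 →
        ∃ vv : V ⊕ G.edgeSet → ℝ,
          QQ G r *ᵥ vv
            = ((q' + 3*(r:ℝ) - 2 + ε * Real.sqrt ((q' + (r:ℝ) - 2)^2 + 4*q'))/2) • vv
          ∧ vv (Sum.inl u) ≠ 0 := by
      intro q' ε hε hq' x hx hxu
      have hDnn : (0:ℝ) ≤ (q' + (r:ℝ) - 2)^2 + 4*q' := by positivity
      have hD2 : Real.sqrt ((q' + (r:ℝ) - 2)^2 + 4*q')^2 = (q' + (r:ℝ) - 2)^2 + 4*q' :=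
        Real.sq_sqrt hDnn
      have hq'ne : q' ≠ 0 := ne_of_gt hq'
      have hroot : q' * (((q' + (r:ℝ) - 2) + ε * Real.sqrt ((q' + (r:ℝ) - 2)^2 + 4*q'))/(2*q'))^2
          - (q' + (r:ℝ) - 2) * (((q' + (r:ℝ) - 2) + ε * Real.sqrt ((q' + (r:ℝ) - 2)^2 + 4*q'))/(2*q'))
          - 1 = 0 := by
        have hA : ((q' + (r:ℝ) - 2) + ε * Real.sqrt ((q' + (r:ℝ) - 2)^2 + 4*q'))^2
            - 2*(q' + (r:ℝ) - 2)*((q' + (r:ℝ) - 2) + ε * Real.sqrt ((q' + (r:ℝ) - 2)^2 + 4*q'))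
            - 4*q' = 0 := by
          linear_combination ε^2 * hD2 + ((q' + (r:ℝ) - 2)^2 + 4*q') * hε
        have hrw : q' * (((q' + (r:ℝ) - 2) + ε * Real.sqrt ((q' + (r:ℝ) - 2)^2 + 4*q'))/(2*q'))^2
            - (q' + (r:ℝ) - 2) * (((q' + (r:ℝ) - 2) + ε * Real.sqrt ((q' + (r:ℝ) - 2)^2 + 4*q'))/(2*q'))
            - 1
            = (((q' + (r:ℝ) - 2) + ε * Real.sqrt ((q' + (r:ℝ) - 2)^2 + 4*q'))^2
              - 2*(q' + (r:ℝ) - 2)*((q' + (r:ℝ) - 2) + ε * Real.sqrt ((q' + (r:ℝ) - 2)^2 + 4*q'))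
              - 4*q') / (4*q') := by
          field_simp
          ring
        rw [hrw, hA]
        simp
      have hθ : (q' + 3*(r:ℝ) - 2 + ε * Real.sqrt ((q' + (r:ℝ) - 2)^2 + 4*q'))/2
          = (r:ℝ) + (((q' + (r:ℝ) - 2) + ε * Real.sqrt ((q' + (r:ℝ) - 2)^2 + 4*q'))/(2*q')) * q' := by
        field_simp
        ring
      refine ⟨Sum.elim x ((((q' + (r:ℝ) - 2) + ε * Real.sqrt ((q' + (r:ℝ) - 2)^2 + 4*q'))/(2*q'))
        • ((incMat G)ᵀ *ᵥ x)), ?_, by simpa using hxu⟩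
      rw [hθ]
      exact QQ_eig_pos G q' _ x (by rw [← hQm]; exact hx) hroot
    have h2rpos : (0:ℝ) < 2*(r:ℝ) := by linarith
    obtain ⟨v1p, h1p, h1pu⟩ := mk (2*(r:ℝ)) 1 (by norm_num) h2rpos x1 hQx1 (ne_of_gt hx1u)
    obtain ⟨v1m, h1m, h1mu⟩ := mk (2*(r:ℝ)) (-1) (by norm_num) h2rpos x1 hQx1 (ne_of_gt hx1u)
    obtain ⟨a, ha⟩ := hphase _ _ v1p v1m h1p h1m h1pu h1mu
    have hdiff : ((2*(r:ℝ) + 3*(r:ℝ) - 2 + 1 * Real.sqrt ((2*(r:ℝ) + (r:ℝ) - 2)^2 + 4*(2*(r:ℝ))))/2)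
        - ((2*(r:ℝ) + 3*(r:ℝ) - 2 + (-1) * Real.sqrt ((2*(r:ℝ) + (r:ℝ) - 2)^2 + 4*(2*(r:ℝ))))/2)
        = Real.sqrt ((2*(r:ℝ) + (r:ℝ) - 2)^2 + 4*(2*(r:ℝ))) := by ring
    rw [hdiff] at ha
    rw [show ((2*(r:ℝ) + (r:ℝ) - 2)^2 + 4*(2*(r:ℝ))) = 9*(r:ℝ)^2 - 4*(r:ℝ) + 4 by ring] at ha
    rcases hsnn.lt_or_eq with hspos | hs0
    · -- 0 < s : two more eigenvalues from q i2
      obtain ⟨v2p, h2p, h2pu⟩ := mk s 1 (by norm_num) hspos x2 hQx2 (ne_of_gt hx2u)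
      obtain ⟨v2m, h2m, h2mu⟩ := mk s (-1) (by norm_num) hspos x2 hQx2 (ne_of_gt hx2u)
      obtain ⟨c, hc⟩ := hphase _ _ v1p v2p h1p h2p h1pu h2pu
      obtain ⟨e, he⟩ := hphase _ _ v1m v2m h1m h2m h1mu h2mu
      have hsum2 : t * (2*(r:ℝ) - s) = ((c + e : ℤ):ℝ) * Real.pi := by
        calc t * (2*(r:ℝ) - s)
            = t * (((2*(r:ℝ) + 3*(r:ℝ) - 2 + 1 * Real.sqrt ((2*(r:ℝ) + (r:ℝ) - 2)^2 + 4*(2*(r:ℝ))))/2)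
                - ((s + 3*(r:ℝ) - 2 + 1 * Real.sqrt ((s + (r:ℝ) - 2)^2 + 4*s))/2))
              + t * (((2*(r:ℝ) + 3*(r:ℝ) - 2 + (-1) * Real.sqrt ((2*(r:ℝ) + (r:ℝ) - 2)^2 + 4*(2*(r:ℝ))))/2)
                - ((s + 3*(r:ℝ) - 2 + (-1) * Real.sqrt ((s + (r:ℝ) - 2)^2 + 4*s))/2)) := by ring
          _ = c * Real.pi + e * Real.pi := by rw [hc, he]
          _ = ((c + e : ℤ):ℝ) * Real.pi := by push_cast; ring
      have hk2lt : k2 < 2*(r:ℤ) := by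
        have : (k2:ℝ) < 2*(r:ℝ) := by rw [← hk2]; exact hslt
        exact_mod_cast this
      have hcne : (2*(r:ℤ) - k2) ≠ 0 := by omega
      have h2' : t * ((2*(r:ℤ) - k2 : ℤ):ℝ) = ((c+e : ℤ):ℝ) * Real.pi := by
        have hcast : ((2*(r:ℤ) - k2 : ℤ):ℝ) = 2*(r:ℝ) - s := by rw [hk2]; push_cast; ring
        rw [hcast, hsum2]
      exact final_contra r hrr2 t ht _ hcne a (c+e) ha h2'
    · -- s = 0 : eigenvalue r from the kernel vector
      have h20 : QQ G r *ᵥ Sum.elim x2 0 = (r:ℝ) • Sum.elim x2 (0 : G.edgeSet → ℝ) := by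
        refine QQ_eig_zero G x2 ?_
        rw [← hQm, hQx2, ← hs0]
      have h2u0 : Sum.elim x2 (0 : G.edgeSet → ℝ) (Sum.inl u) ≠ 0 := by
        simpa using ne_of_gt hx2u
      obtain ⟨c, hc⟩ := hphase _ ((r:ℕ):ℝ) v1p _ h1p h20 h1pu h2u0
      obtain ⟨e, he⟩ := hphase _ ((r:ℕ):ℝ) v1m _ h1m h20 h1mu h2u0
      have hsum2 : t * (3*(r:ℝ) - 2) = ((c + e : ℤ):ℝ) * Real.pi := by
        calc t * (3*(r:ℝ) - 2)
            = t * (((2*(r:ℝ) + 3*(r:ℝ) - 2 + 1 * Real.sqrt ((2*(r:ℝ) + (r:ℝ) - 2)^2 + 4*(2*(r:ℝ))))/2)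
                - (r:ℝ))
              + t * (((2*(r:ℝ) + 3*(r:ℝ) - 2 + (-1) * Real.sqrt ((2*(r:ℝ) + (r:ℝ) - 2)^2 + 4*(2*(r:ℝ))))/2)
                - (r:ℝ)) := by ring
          _ = c * Real.pi + e * Real.pi := by rw [hc, he]
          _ = ((c + e : ℤ):ℝ) * Real.pi := by push_cast; ring
      have hcne : (3*(r:ℤ) - 2) ≠ 0 := by
        have : (2:ℤ) ≤ (r:ℤ) := by exact_mod_cast hrr2
        omega
      have h2' : t * ((3*(r:ℤ) - 2 : ℤ):ℝ) = ((c+e : ℤ):ℝ) * Real.pi := by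
        have hcast : ((3*(r:ℤ) - 2 : ℤ):ℝ) = 3*(r:ℝ) - 2 := by push_cast; ring
        rw [hcast, hsum2]
      exact final_contra r hrr2 t ht _ hcne a (c+e) ha h2'
end

section
/- For all integers q ≥ 1 and r ≥ 2, both real roots of the quadratic equation t² − (3r + q − 2)·t + (2r² − 2r + (r−1)·q) = 0 (equivalently, of (t+2−2r)(t−r) + (r−t−1)·q = 0) are irrational; explicitly, the numbers (3r + q − 2 ± √((q+r−2)² + 4q))/2 are irrational. -/
theorem stmt16 (q r : ℤ) (hq : 1 ≤ q) (hr : 2 ≤ r) :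
    Irrational ((3 * (r : ℝ) + (q : ℝ) - 2 +
        Real.sqrt (((q : ℝ) + (r : ℝ) - 2) ^ 2 + 4 * (q : ℝ))) / 2) ∧
    Irrational ((3 * (r : ℝ) + (q : ℝ) - 2 -
        Real.sqrt (((q : ℝ) + (r : ℝ) - 2) ^ 2 + 4 * (q : ℝ))) / 2) := by
  set D : ℤ := (q + r - 2) ^ 2 + 4 * q with hD
  have hDcast : (((q : ℝ) + (r : ℝ) - 2) ^ 2 + 4 * (q : ℝ)) = (D : ℝ) := by
    push_cast [hD]; ring
  have hs : Irrational (Real.sqrt D) := by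
    rw [irrational_sqrt_intCast_iff]
    constructor
    · rintro ⟨s, hs⟩
      set n : ℤ := q + r - 2 with hn
      have hn1 : 1 ≤ n := by omega
      -- n^2 < D ≤ n^2 + 4n < (n+2)^2, so D = (n+1)^2, parity contradiction
      have h1 : n ^ 2 < D := by nlinarith
      have h2 : D < (n + 2) ^ 2 := by nlinarith
      have hsabs : D = |s| * |s| := by rw [← abs_mul, ← hs]; exact (abs_of_nonneg (by nlinarith)).symm
      have hsa : 0 ≤ |s| := abs_nonneg s
      have h3 : n < |s| := by nlinarith
      have h4 : |s| < n + 2 := by nlinarith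
      have hseq : |s| = n + 1 := by omega
      have heq : D = (n + 1) ^ 2 := by rw [hsabs, hseq]; ring
      have : 4 * q = 2 * n + 1 := by nlinarith [heq]
      omega
    · nlinarith
  have hrat : Irrational ((((3 * r + q - 2 : ℤ) : ℝ)) + Real.sqrt D) := hs.intCast_add _
  have hrat' : Irrational ((((3 * r + q - 2 : ℤ) : ℝ)) - Real.sqrt D) := by
    have := (hs.neg).intCast_add (3 * r + q - 2)
    simpa [sub_eq_add_neg] using this
  constructor
  · have := hrat.div_intCast (m := 2) (by norm_num)
    push_cast at this ⊢
    rw [hDcast]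
    convert this using 2
  · have := hrat'.div_intCast (m := 2) (by norm_num)
    push_cast at this ⊢
    rw [hDcast]
    convert this using 2
end

section
/- For every integer m ≥ 2, let G be the cocktail party graph on vertex set (Fin m) × (Fin 2), in which (j,a) and (k,b) are adjacent if and only if j ≠ k (so G is a connected (2m−2)-regular graph, the complete multipartite graph with m parts of size 2). Then the signless Laplacian M of the Q-graph Q(G) admits no perfect state transfer: there exist no distinct indices z, w ∈ V ⊕ E, no t ∈ ℝ, and no λ ∈ ℂ with |λ| = 1 such that exp(−i·t·M)·e_z = λ·e_w. -/
open Matrix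

/-- The cocktail party graph: `(j, a)` and `(k, b)` are adjacent iff `j ≠ k`. -/
def cocktail (m : ℕ) : SimpleGraph (Fin m × Fin 2) where
  Adj p q := p.1 ≠ q.1
  symm := ⟨fun _ _ h => h.symm⟩
  loopless := ⟨fun _ h => h rfl⟩

instance (m : ℕ) : DecidableRel (cocktail m).Adj :=
  fun p q => inferInstanceAs (Decidable (p.1 ≠ q.1))

namespace PST17

open Matrix Complex Finset

attribute [local instance] Matrix.linftyOpNormedRing Matrix.linftyOpNormedAlgebra

lemma exp_mulVec_eigen {n : Type*} [Fintype n] [DecidableEq n]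
    (N : Matrix n n ℂ) (v : n → ℂ) (μ : ℂ) (h : N *ᵥ v = μ • v) :
    NormedSpace.exp N *ᵥ v = Complex.exp μ • v := by
  have hpow : ∀ k : ℕ, N ^ k *ᵥ v = μ ^ k • v := by
    intro k
    induction k with
    | zero => simp
    | succ k ih =>
      rw [pow_succ, ← Matrix.mulVec_mulVec, h, Matrix.mulVec_smul, ih, smul_smul, ← pow_succ']
  let L0 : Matrix n n ℂ →ₗ[ℂ] (n → ℂ) :=
    { toFun := fun A => A *ᵥ v
      map_add' := fun A B => Matrix.add_mulVec A B v
      map_smul' := fun c A => Matrix.smul_mulVec c A v }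
  let L : Matrix n n ℂ →L[ℂ] (n → ℂ) := L0.toContinuousLinearMap
  have hsum : Summable fun k : ℕ => ((k.factorial : ℂ))⁻¹ • N ^ k :=
    NormedSpace.expSeries_summable' N
  have h1 : NormedSpace.exp N *ᵥ v = ∑' k : ℕ, ((k.factorial : ℂ))⁻¹ • (N ^ k *ᵥ v) := by
    have := L.map_tsum hsum
    simpa [NormedSpace.exp_eq_tsum (𝕂 := ℂ), L, L0] using this
  rw [h1]
  have h2 : ∀ k : ℕ, ((k.factorial : ℂ))⁻¹ • (N ^ k *ᵥ v) = (((k.factorial : ℂ))⁻¹ • μ ^ k) • v := by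
    intro k; rw [hpow k, smul_smul]; rfl
  simp_rw [h2]
  have hsum2 : Summable fun k : ℕ => ((k.factorial : ℂ))⁻¹ • μ ^ k :=
    NormedSpace.expSeries_summable' μ
  let S : ℂ →L[ℂ] (n → ℂ) :=
    { toFun := fun c => c • v
      map_add' := fun a b => add_smul a b v
      map_smul' := fun a b => by simp [smul_smul]
      cont := by continuity }
  have hS := S.map_tsum hsum2
  simp only [S, ContinuousLinearMap.coe_mk', LinearMap.coe_mk, AddHom.coe_mk] at hS
  rw [← hS]; congr 1; rw [Complex.exp_eq_exp_ℂ, NormedSpace.exp_eq_tsum (𝕂 := ℂ)]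

section general
variable {V : Type*} [Fintype V] [DecidableEq V] (G : SimpleGraph V) [DecidableRel G.Adj]

lemma RRt_apply (u v : V) :
    ∑ e : G.edgeSet, incMat G u e * incMat G v e
      = if u = v then (G.degree u : ℝ) else if G.Adj u v then 1 else 0 := by
  have step1 : ∀ e : G.edgeSet,
      incMat G u e * incMat G v e = (G.incMatrix ℝ) u e.val * (G.incMatrix ℝ) v e.val := by
    intro e
    congr 1 <;>
    · rw [SimpleGraph.incMatrix_apply']
      simp only [incMat, Matrix.of_apply, SimpleGraph.edge_mem_incidenceSet_iff]
  have step2 : ∑ e : G.edgeSet, incMat G u e * incMat G v e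
      = ∑ e : Sym2 V, (G.incMatrix ℝ) u e * (G.incMatrix ℝ) v e := by
    simp_rw [step1]
    rw [Finset.sum_set_coe (s := G.edgeSet)
      (f := fun e => (G.incMatrix ℝ) u e * (G.incMatrix ℝ) v e)]
    apply Finset.sum_subset (Finset.subset_univ _)
    intro e _ he
    have : e ∉ G.incidenceSet u := by
      intro hmem
      exact he (Set.mem_toFinset.2 hmem.1)
    rw [SimpleGraph.incMatrix_of_notMem_incidenceSet _ this, zero_mul]
  rw [step2]
  have := SimpleGraph.incMatrix_mul_transpose (R := ℝ) (G := G)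
  have h2 : (G.incMatrix ℝ * (G.incMatrix ℝ)ᵀ) u v
      = ∑ e : Sym2 V, (G.incMatrix ℝ) u e * (G.incMatrix ℝ) v e := by
    simp [Matrix.mul_apply, Matrix.transpose_apply]
  rw [← h2, this, Matrix.of_apply]

end general

section cocktail
variable {m : ℕ}

lemma deg_cocktail (u : Fin m × Fin 2) : (cocktail m).degree u = 2 * m - 2 := by
  classical
  have h1 : (cocktail m).neighborFinset u = univ.filter fun v => ¬ (v.1 = u.1) := by
    ext v
    simp only [SimpleGraph.mem_neighborFinset, Finset.mem_filter, Finset.mem_univ, true_and]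
    simp [cocktail, ne_comm]
  have h2 : (univ.filter fun v : Fin m × Fin 2 => v.1 = u.1) = {u.1} ×ˢ univ := by
    ext v
    simp only [Finset.mem_filter, Finset.mem_univ, true_and, Finset.mem_product,
      Finset.mem_singleton]
    exact ⟨fun h => ⟨h, trivial⟩, fun h => h.1⟩
  have h3 := Finset.card_filter_add_card_filter_not
    (s := (univ : Finset (Fin m × Fin 2))) (p := fun v => v.1 = u.1)
  rw [SimpleGraph.degree, h1]
  have h4 : (univ : Finset (Fin m × Fin 2)).card = 2 * m := by
    simp [Finset.card_univ, mul_comm]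
  have h5 : (univ.filter fun v : Fin m × Fin 2 => v.1 = u.1).card = 2 := by
    rw [h2]; simp
  omega

lemma mulVec_RRt (x : Fin m × Fin 2 → ℝ) (u : Fin m × Fin 2) :
    (incMat (cocktail m) *ᵥ ((incMat (cocktail m))ᵀ *ᵥ x)) u
      = ((2 * m - 2 : ℕ) : ℝ) * x u + ∑ v, (if v.1 ≠ u.1 then x v else 0) := by
  classical
  have lhs : (incMat (cocktail m) *ᵥ ((incMat (cocktail m))ᵀ *ᵥ x)) u
      = ∑ v, (∑ e : (cocktail m).edgeSet, incMat (cocktail m) u e * incMat (cocktail m) v e) * x v := by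
    simp only [Matrix.mulVec, dotProduct, Matrix.transpose_apply]
    simp_rw [Finset.mul_sum, Finset.sum_mul]
    rw [Finset.sum_comm]
    simp_rw [mul_assoc]
  rw [lhs]
  have : ∀ v, (∑ e : (cocktail m).edgeSet, incMat (cocktail m) u e * incMat (cocktail m) v e) * x v
      = (if v = u then ((2 * m - 2 : ℕ) : ℝ) * x v else 0) + (if v.1 ≠ u.1 then x v else 0) := by
    intro v
    rw [RRt_apply]
    by_cases h1 : u = v
    · subst h1
      simp [deg_cocktail]
    · have hvu : ¬ (v = u) := fun h => h1 h.symm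
      by_cases h2 : v.1 = u.1
      · have hadj : ¬ (cocktail m).Adj u v := fun h => h (h2.symm)
        rw [if_neg h1, if_neg hadj, zero_mul, if_neg hvu, if_neg (by simpa using h2), add_zero]
      · have hadj : (cocktail m).Adj u v := fun h => h2 h.symm
        rw [if_neg h1, if_pos hadj, one_mul, if_neg hvu, if_pos h2, zero_add]
  simp_rw [this]
  rw [Finset.sum_add_distrib, Finset.sum_ite_eq' univ u (fun v => ((2 * m - 2 : ℕ) : ℝ) * x v)]
  simp

end cocktail

section eigen
variable {m : ℕ}

lemma filter_card_ne (u : Fin m × Fin 2) :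
    (Finset.univ.filter fun v : Fin m × Fin 2 => ¬ v.1 = u.1).card = 2 * m - 2 := by
  have h1 : (cocktail m).neighborFinset u = Finset.univ.filter fun v => ¬ v.1 = u.1 := by
    ext v
    simp only [SimpleGraph.mem_neighborFinset, Finset.mem_filter, Finset.mem_univ, true_and]
    simp [cocktail, ne_comm]
  rw [← h1, ← SimpleGraph.degree, deg_cocktail]

/-- first eigenvector: all ones -/
lemma eig_ones :
    incMat (cocktail m) *ᵥ ((incMat (cocktail m))ᵀ *ᵥ (fun _ => (1 : ℝ)))
      = (2 * ((2 * m - 2 : ℕ) : ℝ)) • (fun _ => (1 : ℝ)) := by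
  funext u
  rw [mulVec_RRt]
  have hcard : ∑ v : Fin m × Fin 2, (if v.1 ≠ u.1 then (1:ℝ) else 0)
      = ((2 * m - 2 : ℕ) : ℝ) := by
    rw [Finset.sum_boole, filter_card_ne]
  rw [hcard]
  simp only [Pi.smul_apply, smul_eq_mul]
  ring

/-- second eigenvector family -/
noncomputable def x2 (j0 : Fin m) : Fin m × Fin 2 → ℝ :=
  fun p => if p.1 = j0 then (if p.2 = 0 then 1 else -1) else 0

lemma x2_pair (j0 j : Fin m) : x2 j0 (j, 0) + x2 j0 (j, 1) = 0 := by
  unfold x2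
  by_cases h : j = j0 <;> simp [h]

lemma eig_x2 (j0 : Fin m) :
    incMat (cocktail m) *ᵥ ((incMat (cocktail m))ᵀ *ᵥ x2 j0)
      = (((2 * m - 2 : ℕ) : ℝ)) • x2 j0 := by
  funext u
  rw [mulVec_RRt]
  have htot : ∑ v : Fin m × Fin 2, x2 j0 v = 0 := by
    rw [Fintype.sum_prod_type]
    refine Finset.sum_eq_zero fun j _ => ?_
    rw [Fin.sum_univ_two]
    exact x2_pair j0 j
  have hsame : ∑ v : Fin m × Fin 2, (if v.1 = u.1 then x2 j0 v else 0) = 0 := by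
    rw [Fintype.sum_prod_type]
    have : ∀ j : Fin m, ∑ a : Fin 2, (if j = u.1 then x2 j0 (j, a) else 0)
        = if j = u.1 then x2 j0 (j, 0) + x2 j0 (j, 1) else 0 := by
      intro j
      by_cases h : j = u.1 <;> simp [h, Fin.sum_univ_two]
    simp_rw [this]
    rw [Finset.sum_ite_eq' Finset.univ u.1 (fun j => x2 j0 (j, 0) + x2 j0 (j, 1))]
    simp [x2_pair]
  have hsplit : ∑ v : Fin m × Fin 2, (if v.1 ≠ u.1 then x2 j0 v else 0) = 0 := by
    have : ∀ v : Fin m × Fin 2, (if v.1 ≠ u.1 then x2 j0 v else 0)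
        = x2 j0 v - (if v.1 = u.1 then x2 j0 v else 0) := by
      intro v
      by_cases h : v.1 = u.1 <;> simp [h]
    simp_rw [this]
    rw [Finset.sum_sub_distrib, htot, hsame, sub_zero]
  rw [hsplit]
  simp only [Pi.smul_apply, smul_eq_mul]
  ring

end eigen


section eigQQ
variable {V : Type*} [Fintype V] [DecidableEq V] (G : SimpleGraph V) [DecidableRel G.Adj]

lemma Rt_apply_edge (x : V → ℝ) (p q : V) (hpq : p ≠ q) (he : s(p,q) ∈ G.edgeSet) :
    ((incMat G)ᵀ *ᵥ x) ⟨s(p,q), he⟩ = x p + x q := by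
  simp only [Matrix.mulVec, dotProduct, Matrix.transpose_apply, incMat, Matrix.of_apply]
  have : ∀ v : V, (if v ∈ (s(p,q) : Sym2 V) then (1:ℝ) else 0) * x v
      = (if v = p then x v else 0) + (if v = q then x v else 0) := by
    intro v
    simp only [Sym2.mem_iff]
    by_cases h1 : v = p
    · subst h1; simp [hpq]
    · by_cases h2 : v = q
      · subst h2
        simp only [h1, if_false, if_true, or_true, if_pos]
        ring
      · simp [h1, h2]
  simp_rw [this]
  rw [Finset.sum_add_distrib, Finset.sum_ite_eq' Finset.univ p x,
    Finset.sum_ite_eq' Finset.univ q x]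
  simp

lemma QQ_eigen (r : ℕ) (x : V → ℝ) (q c μ : ℝ)
    (hx : incMat G *ᵥ ((incMat G)ᵀ *ᵥ x) = q • x)
    (h1 : (r : ℝ) + c * q = μ)
    (h2 : 1 + (2 * (r : ℝ) - 2 + q) * c = μ * c) :
    QQ G r *ᵥ Sum.elim x (c • ((incMat G)ᵀ *ᵥ x))
      = μ • Sum.elim x (c • ((incMat G)ᵀ *ᵥ x)) := by
  rw [QQ, Matrix.fromBlocks_mulVec]
  funext i
  cases i with
  | inl u =>
    simp only [Sum.elim_comp_inl, Sum.elim_comp_inr, Sum.elim_inl, Pi.smul_apply, Pi.add_apply]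
    rw [Matrix.smul_mulVec, Matrix.one_mulVec, Matrix.mulVec_smul, hx]
    simp only [Pi.add_apply, Pi.smul_apply, smul_eq_mul]
    rw [← h1]
    ring
  | inr e =>
    have hRtx : ((incMat G)ᵀ * incMat G) *ᵥ (c • ((incMat G)ᵀ *ᵥ x))
        = (c * q) • ((incMat G)ᵀ *ᵥ x) := by
      rw [Matrix.mulVec_smul, ← Matrix.mulVec_mulVec, hx, Matrix.mulVec_smul, smul_smul]
    simp only [Sum.elim_comp_inl, Sum.elim_comp_inr, Sum.elim_inr, Pi.smul_apply, Pi.add_apply]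
    rw [Matrix.add_mulVec, hRtx, Matrix.smul_mulVec, Matrix.one_mulVec]
    simp only [Pi.add_apply, Pi.smul_apply, smul_eq_mul]
    linear_combination (((incMat G)ᵀ *ᵥ x) e) * h2

end eigQQ

lemma extract {ι : Type*} [Fintype ι] [DecidableEq ι] (M : Matrix ι ι ℝ) (hMs : Mᵀ = M)
    (t : ℝ) (z w : ι) (l : ℂ)
    (hPST : NormedSpace.exp ((-(Complex.I * (t:ℂ))) • M.map Complex.ofReal) *ᵥ
        (Pi.single z 1 : ι → ℂ) = l • (Pi.single w 1 : ι → ℂ))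
    (hl : ‖l‖ = 1)
    (v : ι → ℝ) (μ : ℝ) (hv : M *ᵥ v = μ • v) (hz : v z ≠ 0) :
    Complex.exp (-(Complex.I * (t:ℂ)) * (μ:ℂ)) ^ 2 = l ^ 2 := by
  set N : Matrix ι ι ℂ := (-(Complex.I * (t:ℂ))) • M.map Complex.ofReal with hN
  set vc : ι → ℂ := fun i => ((v i : ℝ) : ℂ) with hvc
  have hmap : (M.map Complex.ofReal) *ᵥ vc = fun i => (((M *ᵥ v) i : ℝ) : ℂ) := by
    funext i
    simp only [Matrix.mulVec, dotProduct, Matrix.map_apply, hvc]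
    push_cast
    rfl
  have hNv : N *ᵥ vc = (-(Complex.I * (t:ℂ)) * (μ:ℂ)) • vc := by
    rw [hN, Matrix.smul_mulVec, hmap]
    rw [hv]
    funext i
    simp only [Pi.smul_apply, smul_eq_mul]
    push_cast
    ring
  have hU := exp_mulVec_eigen N vc _ hNv
  have hNsym : Nᵀ = N := by
    rw [hN, Matrix.transpose_smul, ← Matrix.transpose_map, hMs]
  have hUsym : (NormedSpace.exp N)ᵀ = NormedSpace.exp N := by
    rw [← Matrix.exp_transpose, hNsym]
  -- dot product both ways
  have key : Complex.exp (-(Complex.I * (t:ℂ)) * (μ:ℂ)) * vc z = l * vc w := by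
    have h1 : vc ⬝ᵥ (NormedSpace.exp N *ᵥ (Pi.single z 1 : ι → ℂ))
        = Complex.exp (-(Complex.I * (t:ℂ)) * (μ:ℂ)) * vc z := by
      rw [Matrix.dotProduct_mulVec, ← hUsym, Matrix.vecMul_transpose, hU]
      rw [smul_dotProduct, dotProduct_single]
      simp [smul_eq_mul, mul_comm]
    have h2 : vc ⬝ᵥ (l • (Pi.single w 1 : ι → ℂ)) = l * vc w := by
      rw [dotProduct_smul, dotProduct_single]
      simp [smul_eq_mul, mul_comm]
    rw [← h1, hPST, h2]
  -- moduli
  have habs : ‖Complex.exp (-(Complex.I * (t:ℂ)) * (μ:ℂ))‖ = 1 := by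
    rw [Complex.norm_exp]
    have : (-(Complex.I * (t:ℂ)) * (μ:ℂ)).re = 0 := by simp
    rw [this, Real.exp_zero]
  have habs2 : |v z| = |v w| := by
    have := congrArg norm key
    rw [norm_mul, norm_mul, habs, hl, one_mul, one_mul] at this
    rw [hvc] at this
    simpa using this
  have hsq : ((v w : ℂ))^2 = ((v z : ℂ))^2 := by
    have h9 : (v w)^2 = (v z)^2 := by
      rw [← _root_.sq_abs (v w), ← _root_.sq_abs (v z), habs2]
    exact_mod_cast congrArg Complex.ofReal h9
  have keysq : Complex.exp (-(Complex.I * (t:ℂ)) * (μ:ℂ)) ^ 2 * ((v z : ℂ))^2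
      = l ^ 2 * ((v z : ℂ))^2 := by
    have := congrArg (fun x => x^2) key
    simp only [mul_pow] at this
    rw [this, ← hsq]
  have hvz : ((v z : ℂ))^2 ≠ 0 := pow_ne_zero _ (Complex.ofReal_ne_zero.mpr hz)
  exact mul_right_cancel₀ hvz keysq


lemma endgame (R n1 n2 : ℤ) (hR : 2 ≤ R) (hn1 : n1 ≠ 0)
    (h : (9*R^2 - 4*R + 4) * n2^2 = (4*R^2 - 4*R + 4) * n1^2) : False := by
  have hn2 : n2 ≠ 0 := by
    intro h0
    have hp : 0 < n1^2 := by positivity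
    rw [h0] at h
    have hq : (0:ℤ) < 4*R^2-4*R+4 := by nlinarith
    nlinarith [mul_pos hq hp]
  have hdvd : n1^2 ∣ (3 * (9*R^2 - 4*R + 4) * n2)^2 :=
    ⟨36 * (9*R^2 - 4*R + 4) * (R^2 - R + 1), by linear_combination (9*(9*R^2 - 4*R + 4)) * h⟩
  have hdvd' : n1 ∣ 3 * (9*R^2 - 4*R + 4) * n2 :=
    (Int.pow_dvd_pow_iff two_ne_zero).mp hdvd
  obtain ⟨c, hc⟩ := hdvd'
  have hc2 : c^2 = 36 * (9*R^2 - 4*R + 4) * (R^2 - R + 1) := by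
    have h1 : (3 * (9*R^2 - 4*R + 4) * n2)^2
        = n1^2 * (36 * (9*R^2 - 4*R + 4) * (R^2 - R + 1)) := by
      linear_combination (9*(9*R^2 - 4*R + 4)) * h
    rw [hc] at h1
    have hn1sq : n1^2 ≠ 0 := pow_ne_zero _ hn1
    exact mul_left_cancel₀ hn1sq
      (by linear_combination h1 :
        n1^2 * c^2 = n1^2 * (36 * (9*R^2 - 4*R + 4) * (R^2 - R + 1)))
  have e1 : 36*(9*R^2-4*R+4)*(R^2-R+1) = (18*R^2-13*R+12)^2 + 11*R^2 + 24*R := by ring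
  rw [e1] at hc2
  have hKpos : (0:ℤ) ≤ 18*R^2 - 13*R + 12 := by nlinarith
  have h3 : (18*R^2 - 13*R + 12)^2 < c^2 := by nlinarith
  have h4 : c^2 < (18*R^2 - 13*R + 12 + 1)^2 := by nlinarith
  have h5 : 18*R^2 - 13*R + 12 < |c| := by nlinarith [abs_nonneg c, _root_.sq_abs c]
  have h6 : |c| < 18*R^2 - 13*R + 12 + 1 := by nlinarith [abs_nonneg c, _root_.sq_abs c]
  omega


lemma pair (t μ1 μ2 : ℝ) (l : ℂ)
    (h1 : Complex.exp (-(Complex.I * (t:ℂ)) * (μ1:ℂ)) ^ 2 = l ^ 2)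
    (h2 : Complex.exp (-(Complex.I * (t:ℂ)) * (μ2:ℂ)) ^ 2 = l ^ 2) :
    ∃ n : ℤ, t * (μ1 - μ2) = n * Real.pi := by
  have h3 : Complex.exp (-(Complex.I * (t:ℂ)) * (μ1:ℂ) + -(Complex.I * (t:ℂ)) * (μ1:ℂ))
      = Complex.exp (-(Complex.I * (t:ℂ)) * (μ2:ℂ) + -(Complex.I * (t:ℂ)) * (μ2:ℂ)) := by
    rw [Complex.exp_add, Complex.exp_add, ← sq, ← sq, h1, h2]
  rw [Complex.exp_eq_exp_iff_exists_int] at h3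
  obtain ⟨n, hn⟩ := h3
  refine ⟨-n, ?_⟩
  have him := congrArg Complex.im hn
  simp only [Complex.add_im, Complex.mul_im, Complex.mul_re, Complex.neg_im, Complex.neg_re,
    Complex.I_re, Complex.I_im, Complex.ofReal_re, Complex.ofReal_im, Complex.intCast_im,
    Complex.intCast_re, Complex.ofReal_mul, Complex.re_ofNat, Complex.im_ofNat] at him
  push_cast
  nlinarith [him, Real.pi_pos]


lemma QQ_symm {V : Type*} [Fintype V] [DecidableEq V] (G : SimpleGraph V) (r : ℕ) :
    (QQ G r)ᵀ = QQ G r := by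
  rw [QQ, Matrix.fromBlocks_transpose, Matrix.transpose_smul, Matrix.transpose_one,
    Matrix.transpose_transpose, Matrix.transpose_add, Matrix.transpose_smul,
    Matrix.transpose_one, Matrix.transpose_mul, Matrix.transpose_transpose]

end PST17

theorem stmt17 (m : ℕ) (hm : 2 ≤ m) :
    ¬ ∃ (z w : (Fin m × Fin 2) ⊕ (cocktail m).edgeSet), z ≠ w ∧
      ∃ (t : ℝ) (l : ℂ), ‖l‖ = 1 ∧
        NormedSpace.exp
            ((-(Complex.I * (t : ℂ))) • (QQ (cocktail m) (2 * m - 2)).map Complex.ofReal) *ᵥ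
            (Pi.single z 1 : (Fin m × Fin 2) ⊕ (cocktail m).edgeSet → ℂ)
          = l • (Pi.single w 1 : (Fin m × Fin 2) ⊕ (cocktail m).edgeSet → ℂ) := by
  classical
  rintro ⟨z, w, hzw, t, l, hl, hPST⟩
  -- the case t = 0 is impossible since then the evolution is the identity
  by_cases ht : t = 0
  · subst ht
    have h0 : (-(Complex.I * ((0:ℝ):ℂ))) • (QQ (cocktail m) (2 * m - 2)).map Complex.ofReal
        = (0 : Matrix _ _ ℂ) := by
      simp
    rw [h0, NormedSpace.exp_zero, Matrix.one_mulVec] at hPST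
    have h1 := congrFun hPST z
    rw [Pi.single_eq_same, Pi.smul_apply, Pi.single_eq_of_ne hzw, smul_zero] at h1
    exact one_ne_zero h1
  -- setup
  have hm' : (2:ℝ) ≤ (m:ℝ) := by exact_mod_cast hm
  have hrr2 : (2:ℝ) ≤ 2*(m:ℝ) - 2 := by linarith
  set rr : ℝ := 2*(m:ℝ) - 2 with hrrdef
  have hcast : ((2*m - 2 : ℕ) : ℝ) = rr := by
    rw [Nat.cast_sub (by omega : 2 ≤ 2*m)]
    push_cast
    rw [hrrdef]
  have hD1pos : (0:ℝ) < 9*rr^2 - 4*rr + 4 := by nlinarith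
  have hD2pos : (0:ℝ) < 4*rr^2 - 4*rr + 4 := by nlinarith
  set d1 : ℝ := Real.sqrt (9*rr^2 - 4*rr + 4) with hd1def
  set d2 : ℝ := Real.sqrt (4*rr^2 - 4*rr + 4) with hd2def
  have hd1 : d1^2 = 9*rr^2 - 4*rr + 4 := Real.sq_sqrt hD1pos.le
  have hd2 : d2^2 = 4*rr^2 - 4*rr + 4 := Real.sq_sqrt hD2pos.le
  have hd1pos : 0 < d1 := Real.sqrt_pos.mpr hD1pos
  have hd2pos : 0 < d2 := Real.sqrt_pos.mpr hD2pos
  have hsym : (QQ (cocktail m) (2 * m - 2))ᵀ = QQ (cocktail m) (2 * m - 2) :=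
    PST17.QQ_symm (cocktail m) (2 * m - 2)
  -- the main spectral step
  have step : ∀ (q μ : ℝ) (x : Fin m × Fin 2 → ℝ), q ≠ 0 → μ ≠ rr →
      incMat (cocktail m) *ᵥ ((incMat (cocktail m))ᵀ *ᵥ x) = q • x →
      (μ*μ - (3*rr - 2 + q)*μ + (2*rr*rr - 2*rr + (rr-1)*q) = 0) →
      Sum.elim x ((incMat (cocktail m))ᵀ *ᵥ x) z ≠ 0 →
      Complex.exp (-(Complex.I * (t:ℂ)) * (μ:ℂ)) ^ 2 = l ^ 2 := by
    intro q μ x hq hμ hx hroot hnz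
    have hcne : (μ - rr)/q ≠ 0 := div_ne_zero (sub_ne_zero.2 hμ) hq
    have h1 : ((2*m - 2 : ℕ) : ℝ) + ((μ - rr)/q) * q = μ := by
      rw [hcast]
      field_simp
      ring
    have h2 : 1 + (2 * ((2*m - 2 : ℕ) : ℝ) - 2 + q) * ((μ - rr)/q) = μ * ((μ - rr)/q) := by
      rw [hcast]
      field_simp
      linear_combination -hroot
    have hv := PST17.QQ_eigen (cocktail m) (2 * m - 2) x q ((μ - rr)/q) μ hx h1 h2
    apply PST17.extract (QQ (cocktail m) (2 * m - 2)) hsym t z w l hPST hl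
      (Sum.elim x (((μ - rr)/q) • ((incMat (cocktail m))ᵀ *ᵥ x))) μ hv
    cases z with
    | inl u =>
      simpa using hnz
    | inr e =>
      simp only [Sum.elim_inr, Pi.smul_apply, smul_eq_mul] at hnz ⊢
      exact mul_ne_zero hcne hnz
  -- first eigenvector pair : all-ones, q = 2 rr
  have heig1 : incMat (cocktail m) *ᵥ ((incMat (cocktail m))ᵀ *ᵥ (fun _ => (1:ℝ)))
      = (2*rr) • (fun _ => (1:ℝ)) := by
    rw [← hcast]
    exact PST17.eig_ones
  have hnz1 : Sum.elim (fun _ => (1:ℝ)) ((incMat (cocktail m))ᵀ *ᵥ (fun _ => (1:ℝ))) z ≠ 0 := by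
    cases z with
    | inl u => simp
    | inr e =>
      obtain ⟨e, he⟩ := e
      induction e using Sym2.ind with
      | _ p qv =>
        have hadj : (cocktail m).Adj p qv := (cocktail m).mem_edgeSet.mp he
        have hpq : p ≠ qv := fun h => hadj (congrArg Prod.fst h)
        simp only [Sum.elim_inr]
        rw [PST17.Rt_apply_edge (cocktail m) _ p qv hpq he]
        norm_num
  -- second eigenvector : q = rr, choice depending on z
  have hx2 : ∃ x : Fin m × Fin 2 → ℝ,
      (incMat (cocktail m) *ᵥ ((incMat (cocktail m))ᵀ *ᵥ x) = rr • x) ∧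
      Sum.elim x ((incMat (cocktail m))ᵀ *ᵥ x) z ≠ 0 := by
    have heig : ∀ j0 : Fin m, incMat (cocktail m) *ᵥ ((incMat (cocktail m))ᵀ *ᵥ PST17.x2 j0)
        = rr • PST17.x2 j0 := by
      intro j0
      rw [← hcast]
      exact PST17.eig_x2 j0
    have hval : ∀ (j0 : Fin m) (p : Fin m × Fin 2), p.1 = j0 → PST17.x2 j0 p ≠ 0 := by
      intro j0 p hp
      unfold PST17.x2
      rw [if_pos hp]
      by_cases h : p.2 = 0 <;> simp [h]
    have hval0 : ∀ (j0 : Fin m) (p : Fin m × Fin 2), p.1 ≠ j0 → PST17.x2 j0 p = 0 := by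
      intro j0 p hp
      unfold PST17.x2
      rw [if_neg hp]
    cases z with
    | inl u =>
      refine ⟨PST17.x2 u.1, heig u.1, ?_⟩
      simpa using hval u.1 u rfl
    | inr e =>
      obtain ⟨e, he⟩ := e
      induction e using Sym2.ind with
      | _ p qv =>
        have hadj : (cocktail m).Adj p qv := (cocktail m).mem_edgeSet.mp he
        have hpq : p ≠ qv := fun h => hadj (congrArg Prod.fst h)
        refine ⟨PST17.x2 p.1, heig p.1, ?_⟩
        simp only [Sum.elim_inr]
        rw [PST17.Rt_apply_edge (cocktail m) _ p qv hpq he]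
        rw [hval0 p.1 qv (fun h => hadj h.symm), add_zero]
        exact hval p.1 p rfl
  obtain ⟨x2, hx2eig, hx2nz⟩ := hx2
  -- the four eigenvalues
  have hq1 : (2*rr : ℝ) ≠ 0 := by positivity
  have hq2 : (rr : ℝ) ≠ 0 := by positivity
  have s1p := step (2*rr) ((5*rr - 2 + d1)/2) (fun _ => (1:ℝ)) hq1
    (by intro h; nlinarith) heig1 (by linear_combination hd1/4) hnz1
  have s1m := step (2*rr) ((5*rr - 2 - d1)/2) (fun _ => (1:ℝ)) hq1
    (by intro h
        have hde : d1 = 3*rr - 2 := by linarith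
        nlinarith [hd1, hde]) heig1 (by linear_combination hd1/4) hnz1
  have s2p := step rr ((4*rr - 2 + d2)/2) x2 hq2
    (by intro h; nlinarith) hx2eig (by linear_combination hd2/4) hx2nz
  have s2m := step rr ((4*rr - 2 - d2)/2) x2 hq2
    (by intro h
        have hde : d2 = 2*rr - 2 := by linarith
        nlinarith [hd2, hde]) hx2eig (by linear_combination hd2/4) hx2nz
  -- extract integer relations
  obtain ⟨n1, hn1⟩ := PST17.pair t _ _ l s1p s1m
  obtain ⟨n2, hn2⟩ := PST17.pair t _ _ l s2p s2m
  have hn1' : t * d1 = n1 * Real.pi := by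
    rw [← hn1]; ring
  have hn2' : t * d2 = n2 * Real.pi := by
    rw [← hn2]; ring
  have hn1ne : (n1:ℝ) ≠ 0 := by
    intro h0
    rw [h0, zero_mul] at hn1'
    exact mul_ne_zero ht hd1pos.ne' hn1'
  have hsq1 : t^2 * (9*rr^2 - 4*rr + 4) = (n1:ℝ)^2 * Real.pi^2 := by
    have := congrArg (fun x : ℝ => x^2) hn1'
    simp only [mul_pow] at this
    rw [← hd1]; linarith [this]
  have hsq2 : t^2 * (4*rr^2 - 4*rr + 4) = (n2:ℝ)^2 * Real.pi^2 := by
    have := congrArg (fun x : ℝ => x^2) hn2'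
    simp only [mul_pow] at this
    rw [← hd2]; linarith [this]
  have hcross : t^2 * ((9*rr^2 - 4*rr + 4) * (n2:ℝ)^2)
      = t^2 * ((4*rr^2 - 4*rr + 4) * (n1:ℝ)^2) := by
    linear_combination (n2:ℝ)^2 * hsq1 - (n1:ℝ)^2 * hsq2
  have hreal : (9*rr^2 - 4*rr + 4) * (n2:ℝ)^2 = (4*rr^2 - 4*rr + 4) * (n1:ℝ)^2 :=
    mul_left_cancel₀ (pow_ne_zero 2 ht) hcross
  -- transfer to ℤ and conclude
  have hrrz : rr = ((2*(m:ℤ) - 2 : ℤ) : ℝ) := by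
    rw [hrrdef]; push_cast; ring
  have hint : (9*(2*(m:ℤ) - 2)^2 - 4*(2*(m:ℤ) - 2) + 4) * n2^2
      = (4*(2*(m:ℤ) - 2)^2 - 4*(2*(m:ℤ) - 2) + 4) * n1^2 := by
    have := hreal
    rw [hrrz] at this
    exact_mod_cast this
  have hn1z : n1 ≠ 0 := fun h => hn1ne (by exact_mod_cast congrArg (Int.cast : ℤ → ℝ) h)
  exact PST17.endgame (2*(m:ℤ) - 2) n1 n2 (by omega) hn1z hint
end

section
/- For every integer d ≥ 2, let G be the d-dimensional hypercube graph: its vertex set is the set of functions Fin d → ZMod 2, with x adjacent to y if and only if x and y differ in exactly one coordinate (so G is a connected d-regular graph). Then the signless Laplacian M of the Q-graph Q(G) admits no perfect state transfer: there exist no distinct indices z, w ∈ V ⊕ E, no t ∈ ℝ, and no λ ∈ ℂ with |λ| = 1 such that exp(−i·t·M)·e_z = λ·e_w. -/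
open Matrix

/-- The d-dimensional hypercube graph: two 0/1-vectors are adjacent iff they differ in
exactly one coordinate. -/
def cube (d : ℕ) : SimpleGraph (Fin d → ZMod 2) where
  Adj x y := (Finset.univ.filter fun i => x i ≠ y i).card = 1
  symm := by
    constructor
    intro x y h
    simpa [ne_comm] using h
  loopless := by
    constructor
    intro x h
    simp at h

instance (d : ℕ) : DecidableRel (cube d).Adj :=
  fun x y => inferInstanceAs (Decidable ((Finset.univ.filter fun i => x i ≠ y i).card = 1))

namespace S18

/- ### Generic analytic lemmas -/

lemma exp_mulVec_eig {n : Type*} [Fintype n] [DecidableEq n]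
    (A : Matrix n n ℂ) (v : n → ℂ) (θ : ℂ) (h : A *ᵥ v = θ • v) :
    NormedSpace.exp A *ᵥ v = Complex.exp θ • v := by
  letI : SeminormedRing (Matrix n n ℂ) := Matrix.linftyOpSemiNormedRing
  letI : NormedRing (Matrix n n ℂ) := Matrix.linftyOpNormedRing
  letI : NormedAlgebra ℂ (Matrix n n ℂ) := Matrix.linftyOpNormedAlgebra
  have hpow : ∀ k : ℕ, A ^ k *ᵥ v = θ ^ k • v := by
    intro k
    induction k with
    | zero => simp
    | succ k ih =>
        rw [pow_succ, ← mulVec_mulVec, h, mulVec_smul, ih, smul_smul, ← pow_succ']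
  have hL : ∃ L : Matrix n n ℂ →L[ℂ] (n → ℂ), ∀ B, L B = B *ᵥ v := by
    refine ⟨⟨⟨⟨fun B => B *ᵥ v, fun B C => add_mulVec B C v⟩, fun c B => smul_mulVec c B v⟩,
      ?_⟩, fun B => rfl⟩
    exact LinearMap.continuous_of_finiteDimensional _
  obtain ⟨L, hLdef⟩ := hL
  have hsum : Summable fun k : ℕ => ((Nat.factorial k : ℂ))⁻¹ • A ^ k :=
    NormedSpace.expSeries_summable' A
  have hsum2 : Summable fun k : ℕ => ((Nat.factorial k : ℂ))⁻¹ * θ ^ k :=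
    (NormedSpace.expSeries_summable' θ).congr (fun k => by rw [smul_eq_mul])
  calc NormedSpace.exp A *ᵥ v = L (∑' k : ℕ, ((Nat.factorial k : ℂ))⁻¹ • A ^ k) := by
        rw [hLdef, NormedSpace.exp_eq_tsum ℂ]
    _ = ∑' k : ℕ, ((Nat.factorial k : ℂ))⁻¹ • (A ^ k *ᵥ v) := by
        rw [L.map_tsum hsum]
        simp [hLdef, smul_mulVec]
    _ = (∑' k : ℕ, ((Nat.factorial k : ℂ))⁻¹ * θ ^ k) • v := by
        simp_rw [hpow, smul_smul]
        exact (Summable.tsum_smul_const hsum2 v)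
    _ = Complex.exp θ • v := by
        rw [Complex.exp_eq_exp_ℂ, NormedSpace.exp_eq_tsum ℂ]
        simp [smul_eq_mul]

lemma pst_entry {n : Type*} [Fintype n] [DecidableEq n]
    (M : Matrix n n ℂ) (hsymm : Mᵀ = M) (t : ℝ) (l : ℂ) (z w : n)
    (hPST : NormedSpace.exp ((-(Complex.I * t)) • M) *ᵥ Pi.single z 1
      = l • (Pi.single w 1 : n → ℂ))
    (v : n → ℂ) (θ : ℂ) (hv : M *ᵥ v = θ • v) :
    Complex.exp (-(Complex.I * t) * θ) * v z = l * v w := by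
  set A := (-(Complex.I * t)) • M with hAdef
  have hA : A *ᵥ v = (-(Complex.I * t) * θ) • v := by
    rw [hAdef, smul_mulVec, hv, smul_smul]
  have hexp : NormedSpace.exp A *ᵥ v = Complex.exp (-(Complex.I * t) * θ) • v :=
    exp_mulVec_eig A v _ hA
  have hAT : Aᵀ = A := by rw [hAdef, transpose_smul, hsymm]
  have hsymmE : (NormedSpace.exp A)ᵀ = NormedSpace.exp A := by
    rw [← Matrix.exp_transpose, hAT]
  have key : v ⬝ᵥ (NormedSpace.exp A *ᵥ Pi.single z 1)
      = v ⬝ᵥ (l • (Pi.single w 1 : n → ℂ)) := by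
    rw [hPST]
  rw [dotProduct_mulVec] at key
  have hvm : v ᵥ* NormedSpace.exp A = Complex.exp (-(Complex.I * t) * θ) • v := by
    rw [← hsymmE, vecMul_transpose, hexp]
  rw [hvm] at key
  simpa [dotProduct_single, smul_eq_mul, mul_comm] using key

lemma sq_eq (t θ : ℝ) (l : ℂ) (a b : ℝ) (hl : ‖l‖ = 1) (ha : a ≠ 0)
    (h : Complex.exp (-(Complex.I * t) * θ) * a = l * b) :
    Complex.exp (-(Complex.I * t) * (2 * θ)) = l ^ 2 := by
  have habs : ‖Complex.exp (-(Complex.I * t) * θ)‖ = 1 := by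
    rw [Complex.norm_exp]
    simp
  have h2 : |a| = |b| := by
    have h' := congrArg norm h
    rw [norm_mul, norm_mul, habs, hl, one_mul, one_mul, Complex.norm_real,
      Complex.norm_real, Real.norm_eq_abs, Real.norm_eq_abs] at h'
    exact h'
  have hsq : (a : ℂ) ^ 2 = (b : ℂ) ^ 2 := by
    have : a ^ 2 = b ^ 2 := by rw [← sq_abs a, ← sq_abs b, h2]
    exact_mod_cast this
  have e2 : Complex.exp (-(Complex.I * t) * (2 * θ))
      = Complex.exp (-(Complex.I * t) * θ) ^ 2 := by
    rw [sq, ← Complex.exp_add]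
    ring_nf
  have hsq2 := congrArg (· ^ 2) h
  simp only [mul_pow] at hsq2
  have key : Complex.exp (-(Complex.I * t) * (2 * θ)) * a ^ 2 = l ^ 2 * a ^ 2 := by
    rw [e2, hsq2, hsq]
  have ha' : (a : ℂ) ^ 2 ≠ 0 := pow_ne_zero _ (by exact_mod_cast ha)
  exact mul_right_cancel₀ ha' key

lemma tpi (t θa θb : ℝ) (l : ℂ)
    (h1 : Complex.exp (-(Complex.I * t) * (2 * θa)) = l ^ 2)
    (h2 : Complex.exp (-(Complex.I * t) * (2 * θb)) = l ^ 2) :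
    ∃ k : ℤ, t * (θa - θb) = k * Real.pi := by
  have h := h1.trans h2.symm
  rw [Complex.exp_eq_exp_iff_exists_int] at h
  obtain ⟨n, hn⟩ := h
  refine ⟨-n, ?_⟩
  have h3 : Complex.I * ((2 * (t * (θa - θb)) : ℝ) : ℂ)
      = Complex.I * ((2 * Real.pi * (-n : ℤ) : ℝ) : ℂ) := by
    push_cast
    linear_combination -hn
  have h4 := mul_left_cancel₀ Complex.I_ne_zero h3
  have h5 : 2 * (t * (θa - θb)) = 2 * Real.pi * (-n : ℤ) := by exact_mod_cast h4
  push_cast at h5 ⊢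
  linarith

/- ### Scalar quadratic facts -/

lemma quad_facts (dR q ε D : ℝ) (hq : q ≠ 0) (hε : ε^2 = 1)
    (hD : D^2 = (3*dR-2+q)^2 - 4*(dR*(2*dR-2+q) - q)) :
    dR + ((3*dR-2+q+ε*D)/2 - dR)/q * q = (3*dR-2+q+ε*D)/2
    ∧ 1 + ((3*dR-2+q+ε*D)/2 - dR)/q * (2*dR-2+q)
        = (3*dR-2+q+ε*D)/2 * (((3*dR-2+q+ε*D)/2 - dR)/q) := by
  have hquad : ((3*dR-2+q+ε*D)/2)^2 - (3*dR-2+q)*((3*dR-2+q+ε*D)/2)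
      + (dR*(2*dR-2+q) - q) = 0 := by
    linear_combination (1/4) * hD + (D^2/4) * hε
  constructor
  · field_simp
    ring
  · have key : ((3*dR-2+q+ε*D)/2 - dR) * ((3*dR-2+q+ε*D)/2 - (2*dR-2+q)) = q := by
      linear_combination hquad
    have h5 : ((3*dR-2+q+ε*D)/2 - dR)/q * ((3*dR-2+q+ε*D)/2 - (2*dR-2+q)) = 1 := by
      rw [div_mul_eq_mul_div, key, div_self hq]
    linear_combination (-1 : ℝ) * h5

lemma c_ne_zero (dR q ε D : ℝ) (hq : q ≠ 0) (hε : ε^2 = 1)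
    (hD : D^2 = (3*dR-2+q)^2 - 4*(dR*(2*dR-2+q) - q)) :
    ((3*dR-2+q+ε*D)/2 - dR)/q ≠ 0 := by
  intro h
  have h2 := (quad_facts dR q ε D hq hε hD).2
  rw [h] at h2
  simp at h2

lemma mulVec_map_ofReal {n : Type*} [Fintype n] (M : Matrix n n ℝ) (v : n → ℝ) (μ : ℝ)
    (h : M *ᵥ v = μ • v) :
    M.map Complex.ofReal *ᵥ (fun p => (v p : ℂ)) = (μ : ℂ) • (fun p => (v p : ℂ)) := by
  funext p
  have h' := congrFun h p
  simp only [Matrix.mulVec, dotProduct, Pi.smul_apply, smul_eq_mul,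
    Matrix.map_apply] at h' ⊢
  exact_mod_cast h'

/- ### Irrationality and the final numeric contradiction -/

lemma irr_sqrt_D0 (d : ℕ) (hd : 2 ≤ d) :
    Irrational (Real.sqrt (9*(d:ℝ)^2 - 4*(d:ℝ) + 4)) := by
  have hcast : (9*(d:ℝ)^2 - 4*(d:ℝ) + 4) = ((9*(d:ℤ)^2 - 4*(d:ℤ) + 4 : ℤ) : ℝ) := by
    push_cast; ring
  have hnn : (0:ℝ) ≤ 9*(d:ℝ)^2 - 4*(d:ℝ) + 4 := by nlinarith [sq_nonneg ((d:ℝ) - 1)]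
  apply irrational_nrt_of_notint_nrt 2 (9*(d:ℤ)^2 - 4*(d:ℤ) + 4)
  · rw [Real.sq_sqrt hnn, hcast]
  · rintro ⟨y, hy⟩
    have hy0 : (0:ℝ) ≤ (y:ℝ) := hy ▸ Real.sqrt_nonneg _
    have hy0' : (0:ℤ) ≤ y := by exact_mod_cast hy0
    have hysq : (y:ℝ)^2 = 9*(d:ℝ)^2 - 4*(d:ℝ) + 4 := by
      rw [← hy, Real.sq_sqrt hnn]
    have hyz : y^2 = 9*(d:ℤ)^2 - 4*(d:ℤ) + 4 := by exact_mod_cast hysq.trans hcast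
    have hdz : (2:ℤ) ≤ (d:ℤ) := by exact_mod_cast hd
    have h1 : y < 3*(d:ℤ) := by nlinarith
    have h2 : 3*(d:ℤ) - 2 < y := by nlinarith
    have h3 : y = 3*(d:ℤ) - 1 := by omega
    rw [h3] at hyz
    nlinarith [hyz]
  · norm_num

lemma final_numeric (t D0 D1 : ℝ) (ht : t ≠ 0) (hD0pos : 0 < D0)
    (hirr : Irrational D0)
    (k1 k2 k3 : ℤ)
    (e1 : t * D0 = k1 * Real.pi)
    (e2 : t * D1 = k2 * Real.pi)
    (e3 : t * (1 + (D0 - D1)/2) = k3 * Real.pi) : False := by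
  have hpi := Real.pi_pos
  have h2t : 2 * t = ((2*k3 - k1 + k2 : ℤ) : ℝ) * Real.pi := by push_cast; linarith
  have hm : (2*k3 - k1 + k2 : ℤ) ≠ 0 := by
    intro h
    rw [h] at h2t
    push_cast at h2t
    simp at h2t
    exact ht (by linarith)
  set m : ℤ := 2*k3 - k1 + k2 with hmdef
  have hD0eq : D0 = ((2*k1 : ℤ):ℝ) / ((m:ℤ):ℝ) := by
    have hmne : ((m:ℤ):ℝ) ≠ 0 := Int.cast_ne_zero.mpr hm
    field_simp
    push_cast at h2t ⊢
    nlinarith [e1, h2t]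
  apply hirr
  exact ⟨((2*k1 : ℤ):ℚ) / ((m:ℤ):ℚ), by rw [hD0eq]; push_cast; ring⟩

/- ### Cube combinatorics -/

lemma zmod2_ne {a b : ZMod 2} (h : a ≠ b) : b = a + 1 := by revert h; revert a b; decide

lemma zmod2_add_one_ne (a : ZMod 2) : a + 1 ≠ a := by revert a; decide

variable {d : ℕ}

def flp (u : Fin d → ZMod 2) (i : Fin d) : Fin d → ZMod 2 :=
  Function.update u i (u i + 1)

lemma flp_self (u : Fin d → ZMod 2) (i : Fin d) : flp u i i = u i + 1 :=
  Function.update_self i _ u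

lemma flp_other (u : Fin d → ZMod 2) {i j : Fin d} (h : j ≠ i) : flp u i j = u j :=
  Function.update_of_ne h _ u

lemma adj_flp (u : Fin d → ZMod 2) (i : Fin d) : (cube d).Adj u (flp u i) := by
  show (Finset.univ.filter fun k => u k ≠ flp u i k).card = 1
  have : (Finset.univ.filter fun k => u k ≠ flp u i k) = {i} := by
    ext k
    simp only [Finset.mem_filter, Finset.mem_univ, true_and, Finset.mem_singleton]
    constructor
    · intro hk
      by_contra hki
      exact hk (flp_other u hki).symm
    · rintro rfl
      rw [flp_self]
      exact fun h => zmod2_add_one_ne (u k) h.symm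
  rw [this, Finset.card_singleton]

lemma flp_ne (u : Fin d → ZMod 2) (i : Fin d) : flp u i ≠ u :=
  fun h => zmod2_add_one_ne (u i) (by rw [← flp_self u i, h])

lemma adj_eq_flp {u b : Fin d → ZMod 2} (h : (cube d).Adj u b) : ∃ i, b = flp u i := by
  have hc : (Finset.univ.filter fun k => u k ≠ b k).card = 1 := h
  obtain ⟨i, hi⟩ := Finset.card_eq_one.mp hc
  refine ⟨i, funext fun k => ?_⟩
  by_cases hk : k = i
  · subst hk
    have : k ∈ Finset.univ.filter fun k => u k ≠ b k := by
      rw [hi]; exact Finset.mem_singleton_self k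
    have hne : u k ≠ b k := by simpa using this
    rw [flp_self]
    exact zmod2_ne hne
  · have : k ∉ Finset.univ.filter fun k' => u k' ≠ b k' := by
      rw [hi]; simpa using hk
    simp only [Finset.mem_filter, Finset.mem_univ, true_and, not_not] at this
    rw [flp_other u hk, this]

lemma sum_inc (u : Fin d → ZMod 2) (g : Sym2 (Fin d → ZMod 2) → ℝ) :
    ∑ e : (cube d).edgeSet, (if u ∈ (e : Sym2 (Fin d → ZMod 2)) then (1:ℝ) else 0) * g e
      = ∑ i : Fin d, g s(u, flp u i) := by
  have step1 : ∀ e : (cube d).edgeSet,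
      (if u ∈ (e : Sym2 (Fin d → ZMod 2)) then (1:ℝ) else 0) * g e
        = if u ∈ (e : Sym2 (Fin d → ZMod 2)) then g e else 0 := fun e => by
    split <;> simp
  rw [Finset.sum_congr rfl fun e _ => step1 e, Finset.sum_ite, Finset.sum_const_zero, add_zero]
  refine (Finset.sum_bij
    (fun (i : Fin d) (_ : i ∈ Finset.univ) =>
      (⟨s(u, flp u i), (cube d).mem_edgeSet.mpr (adj_flp u i)⟩ : (cube d).edgeSet))
    ?_ ?_ ?_ ?_).symm
  · intro i _
    simp [Sym2.mem_iff]
  · intro i _ j _ hij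
    have h1 : s(u, flp u i) = s(u, flp u j) := congrArg Subtype.val hij
    rw [Sym2.eq_iff] at h1
    rcases h1 with ⟨-, h2⟩ | ⟨h1, -⟩
    · by_contra hij'
      have ha : flp u i i = u i + 1 := flp_self u i
      have hb : flp u j i = u i := flp_other u (fun h => hij' h)
      rw [h2] at ha
      rw [hb] at ha
      exact zmod2_add_one_ne (u i) ha.symm
    · exact absurd h1.symm (flp_ne u j)
  · intro e he
    have hu : u ∈ (e : Sym2 (Fin d → ZMod 2)) := by
      simpa using he
    have hspec : s(u, Sym2.Mem.other hu) = (e : Sym2 (Fin d → ZMod 2)) := Sym2.other_spec hu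
    have hadj : (cube d).Adj u (Sym2.Mem.other hu) := by
      rw [← SimpleGraph.mem_edgeSet, hspec]
      exact e.2
    obtain ⟨i, hb⟩ := adj_eq_flp hadj
    refine ⟨i, Finset.mem_univ i, ?_⟩
    apply Subtype.ext
    show s(u, flp u i) = (e : Sym2 (Fin d → ZMod 2))
    rw [← hb, hspec]
  · intro i _
    rfl

def sE (x : (Fin d → ZMod 2) → ℝ) : Sym2 (Fin d → ZMod 2) → ℝ :=
  Sym2.lift ⟨fun a b => x a + x b, fun a b => add_comm _ _⟩

lemma sE_mk (x : (Fin d → ZMod 2) → ℝ) (a b : Fin d → ZMod 2) :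
    sE x s(a, b) = x a + x b := Sym2.lift_mk _ _ _

lemma sE_smul (x : (Fin d → ZMod 2) → ℝ) (k : ℝ) (s : Sym2 (Fin d → ZMod 2)) :
    sE (fun u => k * x u) s = k * sE x s := by
  induction s using Sym2.ind with
  | _ a b => rw [sE_mk, sE_mk]; exact (mul_add _ _ _).symm

lemma incT_mulVec (x : (Fin d → ZMod 2) → ℝ) (e : (cube d).edgeSet) :
    ((incMat (cube d))ᵀ *ᵥ x) e = sE x (e : Sym2 (Fin d → ZMod 2)) := by
  obtain ⟨s, hs⟩ := e
  induction s using Sym2.ind with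
  | _ a b =>
    have hab : (cube d).Adj a b := hs
    have hne : a ≠ b := hab.ne
    show ∑ u, (if u ∈ s(a, b) then (1:ℝ) else 0) * x u = sE x s(a, b)
    rw [sE_mk]
    rw [Finset.sum_congr rfl (fun u _ => show (if u ∈ s(a,b) then (1:ℝ) else 0) * x u
        = if u ∈ ({a, b} : Finset (Fin d → ZMod 2)) then x u else 0 by
      by_cases h : u ∈ s(a, b)
      · rw [if_pos h, one_mul, if_pos (by simpa [Sym2.mem_iff] using h)]
      · rw [if_neg h, zero_mul, if_neg (by simpa [Sym2.mem_iff] using h)])]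
    rw [Finset.sum_ite_mem, Finset.univ_inter, Finset.sum_pair hne]

lemma inc_mulVec (x : (Fin d → ZMod 2) → ℝ) (α c : ℝ)
    (hx : ∀ u, ∑ i : Fin d, x (flp u i) = α * x u) :
    incMat (cube d) *ᵥ (fun e => c * sE x (e : Sym2 (Fin d → ZMod 2)))
      = fun u => (c * ((d:ℝ) + α)) * x u := by
  funext u
  have h0 : (incMat (cube d) *ᵥ (fun e => c * sE x (e : Sym2 (Fin d → ZMod 2)))) u
      = ∑ e : (cube d).edgeSet, (if u ∈ (e : Sym2 (Fin d → ZMod 2)) then (1:ℝ) else 0)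
          * ((fun s => c * sE x s) (e : Sym2 (Fin d → ZMod 2))) := rfl
  rw [h0, sum_inc u (fun s => c * sE x s)]
  have h1 : ∀ i : Fin d, c * sE x s(u, flp u i) = c * x u + c * x (flp u i) := by
    intro i; rw [sE_mk, mul_add]
  rw [Finset.sum_congr rfl (fun i _ => h1 i), Finset.sum_add_distrib, Finset.sum_const,
    Finset.card_univ, Fintype.card_fin, ← Finset.mul_sum, hx u, nsmul_eq_mul]
  ring

lemma eig_QQ (x : (Fin d → ZMod 2) → ℝ) (α c μ : ℝ)
    (hx : ∀ u, ∑ i : Fin d, x (flp u i) = α * x u)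
    (h1 : (d:ℝ) + c * ((d:ℝ) + α) = μ)
    (h2 : 1 + c * (2*(d:ℝ) - 2 + ((d:ℝ) + α)) = μ * c) :
    QQ (cube d) d *ᵥ Sum.elim x (fun e : (cube d).edgeSet => c * sE x (e : Sym2 (Fin d → ZMod 2)))
      = μ • Sum.elim x (fun e : (cube d).edgeSet => c * sE x (e : Sym2 (Fin d → ZMod 2))) := by
  set y : (cube d).edgeSet → ℝ := fun e => c * sE x (e : Sym2 (Fin d → ZMod 2)) with hy
  have hRy := inc_mulVec x α c hx
  rw [QQ, fromBlocks_mulVec]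
  funext p
  cases p with
  | inl u =>
      have hL : (((d:ℝ) • (1 : Matrix (Fin d → ZMod 2) (Fin d → ZMod 2) ℝ)) *ᵥ x
          + incMat (cube d) *ᵥ y) u
          = (d:ℝ) * x u + (c * ((d:ℝ) + α)) * x u := by
        rw [Pi.add_apply, smul_mulVec, one_mulVec, hRy]
        simp
      show (((d:ℝ) • (1 : Matrix (Fin d → ZMod 2) (Fin d → ZMod 2) ℝ)) *ᵥ x
          + incMat (cube d) *ᵥ y) u = μ • x u
      rw [hL, smul_eq_mul]
      linear_combination x u * h1
  | inr e =>
      show ((incMat (cube d))ᵀ *ᵥ x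
          + ((2*(d:ℝ)-2) • (1 : Matrix (cube d).edgeSet (cube d).edgeSet ℝ)
            + (incMat (cube d))ᵀ * incMat (cube d)) *ᵥ y) e
          = μ • y e
      rw [Pi.add_apply, add_mulVec, Pi.add_apply, ← mulVec_mulVec, hRy, smul_mulVec,
        one_mulVec, incT_mulVec, incT_mulVec]
      rw [sE_smul]
      show sE x ↑e + ((2*(d:ℝ)-2) * y e + c * ((d:ℝ) + α) * sE x ↑e) = μ • y e
      rw [hy]
      simp only [smul_eq_mul]
      linear_combination (sE x (e : Sym2 (Fin d → ZMod 2))) * h2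

/- ### The two eigenfunctions of the cube -/

def x0 : (Fin d → ZMod 2) → ℝ := fun _ => 1

lemma hx0 : ∀ u : Fin d → ZMod 2, ∑ i : Fin d, x0 (flp u i) = (d:ℝ) * x0 u := by
  intro u
  simp [x0]

def xj (j : Fin d) : (Fin d → ZMod 2) → ℝ := fun u => if u j = 0 then 1 else -1

lemma zmod2_cases (a : ZMod 2) : a = 0 ∨ a = 1 := by revert a; decide

lemma xj_ne_zero (j : Fin d) (u : Fin d → ZMod 2) : xj j u ≠ 0 := by
  unfold xj; split <;> norm_num

lemma xj_flp_self (j : Fin d) (u : Fin d → ZMod 2) : xj j (flp u j) = - xj j u := by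
  unfold xj
  rw [flp_self]
  rcases zmod2_cases (u j) with h | h
  · rw [h, if_neg (by decide), if_pos rfl]
    try norm_num
  · rw [h, if_pos (by decide), if_neg (by decide)]
    try norm_num

lemma xj_flp_other {j i : Fin d} (h : i ≠ j) (u : Fin d → ZMod 2) :
    xj j (flp u i) = xj j u := by
  unfold xj
  rw [flp_other u (fun hh => h hh.symm)]

lemma hxj (hd : 1 ≤ d) (j : Fin d) :
    ∀ u : Fin d → ZMod 2, ∑ i : Fin d, xj j (flp u i) = ((d:ℝ) - 2) * xj j u := by
  intro u
  rw [Finset.sum_eq_sum_sdiff_singleton_add (Finset.mem_univ j)]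
  rw [Finset.sum_congr rfl (fun i hi => xj_flp_other
      (by simpa using (Finset.mem_sdiff.mp hi).2) u)]
  rw [Finset.sum_const, Finset.card_sdiff_of_subset (by simp), Finset.card_univ, Fintype.card_fin,
    Finset.card_singleton, xj_flp_self, nsmul_eq_mul]
  have : ((d - 1 : ℕ) : ℝ) = (d:ℝ) - 1 := by
    have : (1:ℕ) ≤ d := hd
    push_cast [Nat.cast_sub this]
    ring
  rw [this]
  ring

lemma exists_good_j (hd : 2 ≤ d) {a b : Fin d → ZMod 2} (hab : (cube d).Adj a b) :
    ∃ j, a j = b j := by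
  by_contra h
  push_neg at h
  have h1 : (Finset.univ.filter fun i => a i ≠ b i) = Finset.univ := by
    ext i; simp [h i]
  have hc : (Finset.univ.filter fun i => a i ≠ b i).card = 1 := hab
  rw [h1, Finset.card_univ, Fintype.card_fin] at hc
  omega

/- ### Symmetry of QQ -/

lemma QQ_symm {V : Type*} [Fintype V] [DecidableEq V] (G : SimpleGraph V) (r : ℕ) :
    (QQ G r)ᵀ = QQ G r := by
  rw [QQ, fromBlocks_transpose]
  simp [transpose_add, transpose_smul, transpose_one, transpose_mul, transpose_transpose]

end S18

namespace S18

set_option maxHeartbeats 1000000 in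
lemma master (d : ℕ) (t : ℝ) (l : ℂ) (hl : ‖l‖ = 1)
    (z w : (Fin d → ZMod 2) ⊕ (cube d).edgeSet)
    (hPST : NormedSpace.exp
        ((-(Complex.I * (t : ℂ))) • (QQ (cube d) d).map Complex.ofReal) *ᵥ
        (Pi.single z 1 : (Fin d → ZMod 2) ⊕ (cube d).edgeSet → ℂ)
      = l • (Pi.single w 1 : (Fin d → ZMod 2) ⊕ (cube d).edgeSet → ℂ))
    (x : (Fin d → ZMod 2) → ℝ) (q ε D : ℝ) (hqne : q ≠ 0) (hε : ε^2 = 1)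
    (hD : D^2 = (3*(d:ℝ)-2+q)^2 - 4*((d:ℝ)*(2*(d:ℝ)-2+q) - q))
    (hx : ∀ u, ∑ i : Fin d, x (flp u i) = (q - (d:ℝ)) * x u)
    (hz : Sum.elim x (fun e : (cube d).edgeSet =>
        (((3*(d:ℝ)-2+q+ε*D)/2 - (d:ℝ))/q) * sE x (e : Sym2 (Fin d → ZMod 2))) z ≠ 0) :
    Complex.exp (-(Complex.I * t) * (2 * ((((3*(d:ℝ)-2+q+ε*D)/2 : ℝ)) : ℂ))) = l ^ 2 := by
  obtain ⟨hf1, hf2⟩ := quad_facts (d:ℝ) q ε D hqne hε hD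
  have h1 : (d:ℝ) + (((3*(d:ℝ)-2+q+ε*D)/2 - (d:ℝ))/q) * ((d:ℝ) + (q - (d:ℝ)))
      = (3*(d:ℝ)-2+q+ε*D)/2 := by
    linear_combination hf1
  have h2 : 1 + (((3*(d:ℝ)-2+q+ε*D)/2 - (d:ℝ))/q) * (2*(d:ℝ) - 2 + ((d:ℝ) + (q - (d:ℝ))))
      = ((3*(d:ℝ)-2+q+ε*D)/2) * (((3*(d:ℝ)-2+q+ε*D)/2 - (d:ℝ))/q) := by
    linear_combination hf2
  have heig := eig_QQ x (q - (d:ℝ)) (((3*(d:ℝ)-2+q+ε*D)/2 - (d:ℝ))/q)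
    ((3*(d:ℝ)-2+q+ε*D)/2) hx h1 h2
  have heigC := mulVec_map_ofReal _ _ _ heig
  have hsymm : ((QQ (cube d) d).map Complex.ofReal)ᵀ = (QQ (cube d) d).map Complex.ofReal := by
    rw [← Matrix.transpose_map, QQ_symm]
  have hE := pst_entry ((QQ (cube d) d).map Complex.ofReal) hsymm t l z w hPST _ _ heigC
  exact sq_eq t ((3*(d:ℝ)-2+q+ε*D)/2) l _ _ hl hz hE

end S18


set_option maxHeartbeats 1000000 in
open S18 in
theorem stmt18 (d : ℕ) (hd : 2 ≤ d) :
    ¬ ∃ (z w : (Fin d → ZMod 2) ⊕ (cube d).edgeSet), z ≠ w ∧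
      ∃ (t : ℝ) (l : ℂ), ‖l‖ = 1 ∧
        NormedSpace.exp
            ((-(Complex.I * (t : ℂ))) • (QQ (cube d) d).map Complex.ofReal) *ᵥ
            (Pi.single z 1 : (Fin d → ZMod 2) ⊕ (cube d).edgeSet → ℂ)
          = l • (Pi.single w 1 : (Fin d → ZMod 2) ⊕ (cube d).edgeSet → ℂ) := by
  rintro ⟨z, w, hzw, t, l, hl, hPST⟩
  by_cases ht : t = 0
  · rw [ht] at hPST
    simp only [Complex.ofReal_zero, mul_zero, neg_zero, zero_smul] at hPST
    letI : SeminormedRing (Matrix ((Fin d → ZMod 2) ⊕ (cube d).edgeSet)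
      ((Fin d → ZMod 2) ⊕ (cube d).edgeSet) ℂ) := Matrix.linftyOpSemiNormedRing
    letI : NormedRing (Matrix ((Fin d → ZMod 2) ⊕ (cube d).edgeSet)
      ((Fin d → ZMod 2) ⊕ (cube d).edgeSet) ℂ) := Matrix.linftyOpNormedRing
    letI : NormedAlgebra ℂ (Matrix ((Fin d → ZMod 2) ⊕ (cube d).edgeSet)
      ((Fin d → ZMod 2) ⊕ (cube d).edgeSet) ℂ) := Matrix.linftyOpNormedAlgebra
    rw [NormedSpace.exp_zero, Matrix.one_mulVec] at hPST
    have hcf := congrFun hPST z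
    rw [Pi.single_eq_same, Pi.smul_apply, Pi.single_eq_of_ne hzw, smul_zero] at hcf
    exact one_ne_zero hcf
  have hd1 : (2:ℝ) ≤ (d:ℝ) := by exact_mod_cast hd
  have hΔ0nn : (0:ℝ) ≤ 9*(d:ℝ)^2 - 4*(d:ℝ) + 4 := by nlinarith
  have hΔ1nn : (0:ℝ) ≤ 9*(d:ℝ)^2 - 16*(d:ℝ) + 8 := by nlinarith
  have hD0 : (Real.sqrt (9*(d:ℝ)^2 - 4*(d:ℝ) + 4))^2
      = (3*(d:ℝ)-2+(2*(d:ℝ)))^2 - 4*((d:ℝ)*(2*(d:ℝ)-2+(2*(d:ℝ))) - (2*(d:ℝ))) := by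
    rw [Real.sq_sqrt hΔ0nn]; ring
  have hD1 : (Real.sqrt (9*(d:ℝ)^2 - 16*(d:ℝ) + 8))^2
      = (3*(d:ℝ)-2+(2*(d:ℝ)-2))^2 - 4*((d:ℝ)*(2*(d:ℝ)-2+(2*(d:ℝ)-2)) - (2*(d:ℝ)-2)) := by
    rw [Real.sq_sqrt hΔ1nn]; ring
  have hq0 : (2*(d:ℝ)) ≠ 0 := by nlinarith
  have hq1 : (2*(d:ℝ)-2) ≠ 0 := by nlinarith
  have hx0' : ∀ u : Fin d → ZMod 2, ∑ i : Fin d, x0 (flp u i) = ((2*(d:ℝ)) - (d:ℝ)) * x0 u := by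
    intro u
    rw [show (2*(d:ℝ)) - (d:ℝ) = (d:ℝ) by ring]
    exact hx0 u
  have hxj' : ∀ (j : Fin d) (u : Fin d → ZMod 2),
      ∑ i : Fin d, xj j (flp u i) = ((2*(d:ℝ)-2) - (d:ℝ)) * xj j u := by
    intro j u
    rw [show (2*(d:ℝ)-2) - (d:ℝ) = (d:ℝ) - 2 by ring]
    exact hxj (by omega) j u
  have hD0pos : 0 < Real.sqrt (9*(d:ℝ)^2 - 4*(d:ℝ) + 4) :=
    Real.sqrt_pos.mpr (by nlinarith)
  cases z with
  | inl u =>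
      have j0 : Fin d := ⟨0, by omega⟩
      have H0p := master d t l hl (Sum.inl u) w hPST x0 (2*(d:ℝ)) 1
        (Real.sqrt (9*(d:ℝ)^2 - 4*(d:ℝ) + 4)) hq0 (by norm_num) hD0 hx0'
        (by simp [x0])
      have H0m := master d t l hl (Sum.inl u) w hPST x0 (2*(d:ℝ)) (-1)
        (Real.sqrt (9*(d:ℝ)^2 - 4*(d:ℝ) + 4)) hq0 (by norm_num) hD0 hx0'
        (by simp [x0])
      have H1p := master d t l hl (Sum.inl u) w hPST (xj j0) (2*(d:ℝ)-2) 1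
        (Real.sqrt (9*(d:ℝ)^2 - 16*(d:ℝ) + 8)) hq1 (by norm_num) hD1 (hxj' j0)
        (by simp only [Sum.elim_inl]; exact xj_ne_zero j0 u)
      have H1m := master d t l hl (Sum.inl u) w hPST (xj j0) (2*(d:ℝ)-2) (-1)
        (Real.sqrt (9*(d:ℝ)^2 - 16*(d:ℝ) + 8)) hq1 (by norm_num) hD1 (hxj' j0)
        (by simp only [Sum.elim_inl]; exact xj_ne_zero j0 u)
      obtain ⟨k1, e1⟩ := tpi t _ _ l H0p H0m
      obtain ⟨k2, e2⟩ := tpi t _ _ l H1p H1m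
      obtain ⟨k3, e3⟩ := tpi t _ _ l H0p H1p
      refine final_numeric t (Real.sqrt (9*(d:ℝ)^2 - 4*(d:ℝ) + 4))
        (Real.sqrt (9*(d:ℝ)^2 - 16*(d:ℝ) + 8)) ht hD0pos (irr_sqrt_D0 d hd) k1 k2 k3
        ?_ ?_ ?_
      · linear_combination e1
      · linear_combination e2
      · linear_combination e3
  | inr e =>
      obtain ⟨s, hs⟩ := e
      obtain ⟨a, b, rfl⟩ : ∃ a b, s = s(a, b) := by
        induction s using Sym2.ind with | _ a b => exact ⟨a, b, rfl⟩
      have hab : (cube d).Adj a b := hs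
      obtain ⟨j, hj⟩ := exists_good_j hd hab
      have hsE0 : sE x0 s(a, b) = 2 := by rw [sE_mk]; norm_num [x0]
      have hxjab : xj j a = xj j b := by unfold xj; rw [hj]
      have hsEj : sE (xj j) s(a, b) = 2 * xj j a := by rw [sE_mk, ← hxjab]; ring
      have hzc0 : ∀ (c : ℝ), c ≠ 0 →
          Sum.elim (x0 : (Fin d → ZMod 2) → ℝ)
            (fun e : (cube d).edgeSet => c * sE x0 (e : Sym2 (Fin d → ZMod 2)))
            (Sum.inr ⟨s(a,b), hs⟩) ≠ 0 := by
        intro c hc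
        simp only [Sum.elim_inr]
        rw [hsE0]
        exact mul_ne_zero hc two_ne_zero
      have hzcj : ∀ (c : ℝ), c ≠ 0 →
          Sum.elim (xj j) (fun e : (cube d).edgeSet => c * sE (xj j) (e : Sym2 (Fin d → ZMod 2)))
            (Sum.inr ⟨s(a,b), hs⟩) ≠ 0 := by
        intro c hc
        simp only [Sum.elim_inr]
        rw [hsEj]
        exact mul_ne_zero hc (mul_ne_zero two_ne_zero (xj_ne_zero j a))
      have H0p := master d t l hl (Sum.inr ⟨s(a,b), hs⟩) w hPST x0 (2*(d:ℝ)) 1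
        (Real.sqrt (9*(d:ℝ)^2 - 4*(d:ℝ) + 4)) hq0 (by norm_num) hD0 hx0'
        (hzc0 _ (c_ne_zero (d:ℝ) (2*(d:ℝ)) 1 _ hq0 (by norm_num) hD0))
      have H0m := master d t l hl (Sum.inr ⟨s(a,b), hs⟩) w hPST x0 (2*(d:ℝ)) (-1)
        (Real.sqrt (9*(d:ℝ)^2 - 4*(d:ℝ) + 4)) hq0 (by norm_num) hD0 hx0'
        (hzc0 _ (c_ne_zero (d:ℝ) (2*(d:ℝ)) (-1) _ hq0 (by norm_num) hD0))
      have H1p := master d t l hl (Sum.inr ⟨s(a,b), hs⟩) w hPST (xj j) (2*(d:ℝ)-2) 1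
        (Real.sqrt (9*(d:ℝ)^2 - 16*(d:ℝ) + 8)) hq1 (by norm_num) hD1 (hxj' j)
        (hzcj _ (c_ne_zero (d:ℝ) (2*(d:ℝ)-2) 1 _ hq1 (by norm_num) hD1))
      have H1m := master d t l hl (Sum.inr ⟨s(a,b), hs⟩) w hPST (xj j) (2*(d:ℝ)-2) (-1)
        (Real.sqrt (9*(d:ℝ)^2 - 16*(d:ℝ) + 8)) hq1 (by norm_num) hD1 (hxj' j)
        (hzcj _ (c_ne_zero (d:ℝ) (2*(d:ℝ)-2) (-1) _ hq1 (by norm_num) hD1))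
      obtain ⟨k1, e1⟩ := tpi t _ _ l H0p H0m
      obtain ⟨k2, e2⟩ := tpi t _ _ l H1p H1m
      obtain ⟨k3, e3⟩ := tpi t _ _ l H0p H1p
      refine final_numeric t (Real.sqrt (9*(d:ℝ)^2 - 4*(d:ℝ) + 4))
        (Real.sqrt (9*(d:ℝ)^2 - 16*(d:ℝ) + 8)) ht hD0pos (irr_sqrt_D0 d hd) k1 k2 k3
        ?_ ?_ ?_
      · linear_combination e1
      · linear_combination e2
      · linear_combination e3
end
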